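/- arXiv:2204.03991 — 8 statements merged into one kernel-verified Lean document; each statement's English description precedes it below -/
import Mathlib

section
/- (Lipschitz continuity of value functions in the policy) For stationary joint policies π, π' in a γ-discounted stochastic game with rewards bounded in [-1,1], for every state s and player i: |V_i^π(s) - V_i^{π'}(s)| ≤ (1/(1-γ)) · max_{s'} ||π(·|s') - π'(·|s')||_1, and |Q_i^π(s,a) - Q_i^{π'}(s,a)| ≤ (γ/(1-γ)) · max_{s'} ||π(·|s') - π'(·|s')||_1 for every joint action a. -/
open scoped BigOperators

namespace Stmt2

variable {S A I : Type*} [Fintype S] [Fintype A] [DecidableEq S] [Nonempty S]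

def IsKernel (P : S → A → S → ℝ) : Prop :=
  (∀ s a s', 0 ≤ P s a s') ∧ ∀ s a, ∑ s', P s a s' = 1

def IsPolicy (π : S → A → ℝ) : Prop :=
  (∀ s a, 0 ≤ π s a) ∧ ∀ s, ∑ a, π s a = 1

noncomputable def step (P : S → A → S → ℝ) (π : S → A → ℝ) (d : S → ℝ) : S → ℝ :=
  fun s' => ∑ s, ∑ a, d s * π s a * P s a s'

noncomputable def dist (P : S → A → S → ℝ) (π : S → A → ℝ) (s₀ : S) (h : ℕ) : S → ℝ :=
  (step P π)^[h] (fun s => if s = s₀ then (1 : ℝ) else 0)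

/-- Normalized discounted value function. -/
noncomputable def val (γ : ℝ) (P : S → A → S → ℝ) (π : S → A → ℝ) (r : S → A → ℝ)
    (s₀ : S) : ℝ :=
  (1 - γ) * ∑' h : ℕ, γ ^ h * ∑ s, dist P π s₀ h s * ∑ a, π s a * r s a

/-- Normalized discounted action-value function
`Q^π(s,a) = (1-γ) r(s,a) + γ E_{s' ~ P(·|s,a)}[V^π(s')]`. -/
noncomputable def qval (γ : ℝ) (P : S → A → S → ℝ) (π : S → A → ℝ) (r : S → A → ℝ)
    (s : S) (a : A) : ℝ :=
  (1 - γ) * r s a + γ * ∑ s', P s a s' * val γ P π r s'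

lemma dist_prob (P : S → A → S → ℝ) (hP : IsKernel P) (π : S → A → ℝ) (hπ : IsPolicy π)
    (s₀ : S) (h : ℕ) :
    (∀ s, 0 ≤ dist P π s₀ h s) ∧ ∑ s, dist P π s₀ h s = 1 := by
  induction h with
  | zero =>
    refine ⟨fun s => ?_, ?_⟩
    · simp only [dist, Function.iterate_zero, id]
      split <;> norm_num
    · simp [dist]
  | succ n ih =>
    have hstep : dist P π s₀ (n + 1) = step P π (dist P π s₀ n) := by
      simp [dist, Function.iterate_succ_apply']
    refine ⟨fun s => ?_, ?_⟩
    · rw [hstep]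
      exact Finset.sum_nonneg fun x _ => Finset.sum_nonneg fun a _ =>
        mul_nonneg (mul_nonneg (ih.1 x) (hπ.1 x a)) (hP.1 x a s)
    · rw [hstep]
      unfold step
      calc ∑ s', ∑ x, ∑ a, dist P π s₀ n x * π x a * P x a s'
          = ∑ x, ∑ a, dist P π s₀ n x * π x a * ∑ s', P x a s' := by
            rw [Finset.sum_comm]
            refine Finset.sum_congr rfl fun x _ => ?_
            rw [Finset.sum_comm]
            exact Finset.sum_congr rfl fun a _ => (Finset.mul_sum _ _ _).symm
        _ = ∑ x, dist P π s₀ n x * ∑ a, π x a := by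
            refine Finset.sum_congr rfl fun x _ => ?_
            rw [Finset.mul_sum]
            exact Finset.sum_congr rfl fun a _ => by rw [hP.2 x a, mul_one]
        _ = 1 := by
            rw [← ih.2]
            exact Finset.sum_congr rfl fun x _ => by rw [hπ.2 x, mul_one]

lemma dist_diff (P : S → A → S → ℝ) (hP : IsKernel P)
    (π π' : S → A → ℝ) (hπ : IsPolicy π) (hπ' : IsPolicy π')
    (ε : ℝ) (hε : ∀ s, ∑ a, |π s a - π' s a| ≤ ε) (s₀ : S) (h : ℕ) :
    ∑ s, |dist P π s₀ h s - dist P π' s₀ h s| ≤ h * ε := by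
  induction h with
  | zero => simp [dist]
  | succ n ih =>
    set d := dist P π s₀ n with hd
    set d' := dist P π' s₀ n with hd'
    have hstep : dist P π s₀ (n + 1) = step P π d := by
      simp [dist, hd, Function.iterate_succ_apply']
    have hstep' : dist P π' s₀ (n + 1) = step P π' d' := by
      simp [dist, hd', Function.iterate_succ_apply']
    rw [hstep, hstep']
    have key1 : ∑ s', |step P π d s' - step P π' d' s'| ≤
        ∑ x, ∑ a, |d x * π x a - d' x * π' x a| := by
      have e1 : ∀ s', |step P π d s' - step P π' d' s'| ≤
          ∑ x, ∑ a, |d x * π x a - d' x * π' x a| * P x a s' := by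
        intro s'
        have : step P π d s' - step P π' d' s' =
            ∑ x, ∑ a, (d x * π x a - d' x * π' x a) * P x a s' := by
          unfold step
          rw [← Finset.sum_sub_distrib]
          refine Finset.sum_congr rfl fun x _ => ?_
          rw [← Finset.sum_sub_distrib]
          exact Finset.sum_congr rfl fun a _ => by ring
        rw [this]
        refine (Finset.abs_sum_le_sum_abs _ _).trans (Finset.sum_le_sum fun x _ => ?_)
        refine (Finset.abs_sum_le_sum_abs _ _).trans (Finset.sum_le_sum fun a _ => ?_)
        rw [abs_mul, abs_of_nonneg (hP.1 x a s')]
      calc ∑ s', |step P π d s' - step P π' d' s'|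
          ≤ ∑ s', ∑ x, ∑ a, |d x * π x a - d' x * π' x a| * P x a s' :=
            Finset.sum_le_sum fun s' _ => e1 s'
        _ = ∑ x, ∑ a, |d x * π x a - d' x * π' x a| * ∑ s', P x a s' := by
            rw [Finset.sum_comm]
            refine Finset.sum_congr rfl fun x _ => ?_
            rw [Finset.sum_comm]
            exact Finset.sum_congr rfl fun a _ => (Finset.mul_sum _ _ _).symm
        _ = ∑ x, ∑ a, |d x * π x a - d' x * π' x a| := by
            refine Finset.sum_congr rfl fun x _ => Finset.sum_congr rfl fun a _ => ?_
            rw [hP.2 x a, mul_one]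
    have key2 : ∑ x, ∑ a, |d x * π x a - d' x * π' x a| ≤
        (∑ x, |d x - d' x|) + ε := by
      have e2 : ∀ x, ∑ a, |d x * π x a - d' x * π' x a| ≤ |d x - d' x| + d' x * ε := by
        intro x
        have step1 : ∀ a : A, |d x * π x a - d' x * π' x a| ≤
            |d x - d' x| * π x a + d' x * |π x a - π' x a| := by
          intro a
          have : d x * π x a - d' x * π' x a =
              (d x - d' x) * π x a + d' x * (π x a - π' x a) := by ring
          rw [this]
          refine (abs_add_le _ _).trans ?_
          rw [abs_mul, abs_mul, abs_of_nonneg (hπ.1 x a),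
            abs_of_nonneg ((dist_prob P hP π' hπ' s₀ n).1 x)]
        calc ∑ a, |d x * π x a - d' x * π' x a|
            ≤ ∑ a, (|d x - d' x| * π x a + d' x * |π x a - π' x a|) :=
              Finset.sum_le_sum fun a _ => step1 a
          _ = |d x - d' x| * (∑ a, π x a) + d' x * ∑ a, |π x a - π' x a| := by
              rw [Finset.sum_add_distrib, Finset.mul_sum, Finset.mul_sum]
          _ ≤ |d x - d' x| + d' x * ε := by
              rw [hπ.2 x, mul_one]
              exact add_le_add_right
                (mul_le_mul_of_nonneg_left (hε x) ((dist_prob P hP π' hπ' s₀ n).1 x)) _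
      calc ∑ x, ∑ a, |d x * π x a - d' x * π' x a|
          ≤ ∑ x, (|d x - d' x| + d' x * ε) := Finset.sum_le_sum fun x _ => e2 x
        _ = (∑ x, |d x - d' x|) + (∑ x, d' x) * ε := by
            rw [Finset.sum_add_distrib, Finset.sum_mul]
        _ = (∑ x, |d x - d' x|) + ε := by
            rw [(dist_prob P hP π' hπ' s₀ n).2, one_mul]
    calc ∑ s', |step P π d s' - step P π' d' s'|
        ≤ (∑ x, |d x - d' x|) + ε := key1.trans key2
      _ ≤ n * ε + ε := add_le_add_left ih _
      _ = (n + 1 : ℕ) * ε := by push_cast; ring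

lemma val_diff (γ : ℝ) (hγ0 : 0 ≤ γ) (hγ1 : γ < 1)
    (P : S → A → S → ℝ) (hP : IsKernel P)
    (π π' : S → A → ℝ) (hπ : IsPolicy π) (hπ' : IsPolicy π')
    (r : S → A → ℝ) (hr : ∀ s a, |r s a| ≤ 1)
    (ε : ℝ) (hε0 : 0 ≤ ε) (hε : ∀ s, ∑ a, |π s a - π' s a| ≤ ε) (s₀ : S) :
    |val γ P π r s₀ - val γ P π' r s₀| ≤ ε / (1 - γ) := by
  have h1γ : (0:ℝ) < 1 - γ := by linarith
  set f : S → ℝ := fun x => ∑ a, π x a * r x a with hf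
  set f' : S → ℝ := fun x => ∑ a, π' x a * r x a with hf'
  set g : ℕ → ℝ := fun h => γ ^ h * ∑ x, dist P π s₀ h x * f x with hg
  set g' : ℕ → ℝ := fun h => γ ^ h * ∑ x, dist P π' s₀ h x * f' x with hg'
  -- pointwise bounds
  have hfb : ∀ x, |f x| ≤ 1 := by
    intro x
    calc |f x| ≤ ∑ a, |π x a * r x a| := Finset.abs_sum_le_sum_abs _ _
      _ ≤ ∑ a, π x a := Finset.sum_le_sum fun a _ => by
          rw [abs_mul, abs_of_nonneg (hπ.1 x a)]
          calc π x a * |r x a| ≤ π x a * 1 :=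
                mul_le_mul_of_nonneg_left (hr x a) (hπ.1 x a)
            _ = π x a := mul_one _
      _ = 1 := hπ.2 x
  have hf'b : ∀ x, |f' x| ≤ 1 := by
    intro x
    calc |f' x| ≤ ∑ a, |π' x a * r x a| := Finset.abs_sum_le_sum_abs _ _
      _ ≤ ∑ a, π' x a := Finset.sum_le_sum fun a _ => by
          rw [abs_mul, abs_of_nonneg (hπ'.1 x a)]
          calc π' x a * |r x a| ≤ π' x a * 1 :=
                mul_le_mul_of_nonneg_left (hr x a) (hπ'.1 x a)
            _ = π' x a := mul_one _
      _ = 1 := hπ'.2 x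
  have hffd : ∀ x, |f x - f' x| ≤ ε := by
    intro x
    calc |f x - f' x| = |∑ a, (π x a - π' x a) * r x a| := by
          rw [hf, hf', ← Finset.sum_sub_distrib]
          congr 1
          exact Finset.sum_congr rfl fun a _ => by ring
      _ ≤ ∑ a, |(π x a - π' x a) * r x a| := Finset.abs_sum_le_sum_abs _ _
      _ ≤ ∑ a, |π x a - π' x a| := Finset.sum_le_sum fun a _ => by
          rw [abs_mul]
          calc |π x a - π' x a| * |r x a| ≤ |π x a - π' x a| * 1 :=
                mul_le_mul_of_nonneg_left (hr x a) (abs_nonneg _)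
            _ = _ := mul_one _
      _ ≤ ε := hε x
  -- per-horizon bound
  have hgd : ∀ h, |g h - g' h| ≤ γ ^ h * ((h + 1) * ε) := by
    intro h
    have key : |(∑ x, dist P π s₀ h x * f x) - ∑ x, dist P π' s₀ h x * f' x| ≤
        (h + 1) * ε := by
      have split : (∑ x, dist P π s₀ h x * f x) - ∑ x, dist P π' s₀ h x * f' x =
          (∑ x, (dist P π s₀ h x - dist P π' s₀ h x) * f x) +
            ∑ x, dist P π' s₀ h x * (f x - f' x) := by
        rw [← Finset.sum_add_distrib, ← Finset.sum_sub_distrib]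
        exact Finset.sum_congr rfl fun x _ => by ring
      rw [split]
      have b1 : |∑ x, (dist P π s₀ h x - dist P π' s₀ h x) * f x| ≤ h * ε := by
        calc |∑ x, (dist P π s₀ h x - dist P π' s₀ h x) * f x|
            ≤ ∑ x, |(dist P π s₀ h x - dist P π' s₀ h x) * f x| :=
              Finset.abs_sum_le_sum_abs _ _
          _ ≤ ∑ x, |dist P π s₀ h x - dist P π' s₀ h x| := Finset.sum_le_sum fun x _ => by
              rw [abs_mul]
              calc _ ≤ |dist P π s₀ h x - dist P π' s₀ h x| * 1 :=
                    mul_le_mul_of_nonneg_left (hfb x) (abs_nonneg _)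
                _ = _ := mul_one _
          _ ≤ h * ε := dist_diff P hP π π' hπ hπ' ε hε s₀ h
      have b2 : |∑ x, dist P π' s₀ h x * (f x - f' x)| ≤ ε := by
        calc |∑ x, dist P π' s₀ h x * (f x - f' x)|
            ≤ ∑ x, |dist P π' s₀ h x * (f x - f' x)| := Finset.abs_sum_le_sum_abs _ _
          _ ≤ ∑ x, dist P π' s₀ h x * ε := Finset.sum_le_sum fun x _ => by
              rw [abs_mul, abs_of_nonneg ((dist_prob P hP π' hπ' s₀ h).1 x)]
              exact mul_le_mul_of_nonneg_left (hffd x) ((dist_prob P hP π' hπ' s₀ h).1 x)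
          _ = ε := by rw [← Finset.sum_mul, (dist_prob P hP π' hπ' s₀ h).2, one_mul]
      calc |(∑ x, (dist P π s₀ h x - dist P π' s₀ h x) * f x) +
              ∑ x, dist P π' s₀ h x * (f x - f' x)|
          ≤ _ + _ := abs_add_le _ _
        _ ≤ h * ε + ε := add_le_add b1 b2
        _ = (h + 1) * ε := by ring
    calc |g h - g' h| = γ ^ h * |(∑ x, dist P π s₀ h x * f x) -
          ∑ x, dist P π' s₀ h x * f' x| := by
          rw [hg, hg', ← mul_sub, abs_mul, abs_of_nonneg (pow_nonneg hγ0 h)]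
      _ ≤ γ ^ h * ((h + 1) * ε) :=
          mul_le_mul_of_nonneg_left key (pow_nonneg hγ0 h)
  -- summability
  have hgb : ∀ (π₀ : S → A → ℝ), IsPolicy π₀ → ∀ h : ℕ,
      |γ ^ h * ∑ x, dist P π₀ s₀ h x * ∑ a, π₀ x a * r x a| ≤ γ ^ h := by
    intro π₀ hπ₀ h
    rw [abs_mul, abs_of_nonneg (pow_nonneg hγ0 h)]
    have : |∑ x, dist P π₀ s₀ h x * ∑ a, π₀ x a * r x a| ≤ 1 := by
      calc |∑ x, dist P π₀ s₀ h x * ∑ a, π₀ x a * r x a|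
          ≤ ∑ x, |dist P π₀ s₀ h x * ∑ a, π₀ x a * r x a| := Finset.abs_sum_le_sum_abs _ _
        _ ≤ ∑ x, dist P π₀ s₀ h x := Finset.sum_le_sum fun x _ => by
            rw [abs_mul, abs_of_nonneg ((dist_prob P hP π₀ hπ₀ s₀ h).1 x)]
            have hb : |∑ a, π₀ x a * r x a| ≤ 1 := by
              calc |∑ a, π₀ x a * r x a| ≤ ∑ a, |π₀ x a * r x a| :=
                    Finset.abs_sum_le_sum_abs _ _
                _ ≤ ∑ a, π₀ x a := Finset.sum_le_sum fun a _ => by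
                    rw [abs_mul, abs_of_nonneg (hπ₀.1 x a)]
                    calc π₀ x a * |r x a| ≤ π₀ x a * 1 :=
                          mul_le_mul_of_nonneg_left (hr x a) (hπ₀.1 x a)
                      _ = π₀ x a := mul_one _
                _ = 1 := hπ₀.2 x
            calc dist P π₀ s₀ h x * |∑ a, π₀ x a * r x a|
                ≤ dist P π₀ s₀ h x * 1 :=
                  mul_le_mul_of_nonneg_left hb ((dist_prob P hP π₀ hπ₀ s₀ h).1 x)
              _ = _ := mul_one _
        _ = 1 := (dist_prob P hP π₀ hπ₀ s₀ h).2
    calc γ ^ h * |∑ x, dist P π₀ s₀ h x * ∑ a, π₀ x a * r x a|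
        ≤ γ ^ h * 1 := mul_le_mul_of_nonneg_left this (pow_nonneg hγ0 h)
      _ = γ ^ h := mul_one _
  have hsg : Summable g :=
    Summable.of_norm_bounded (summable_geometric_of_lt_one hγ0 hγ1) (hgb π hπ)
  have hsg' : Summable g' :=
    Summable.of_norm_bounded (summable_geometric_of_lt_one hγ0 hγ1) (hgb π' hπ')
  have hγn : ‖γ‖ < 1 := by rw [Real.norm_eq_abs, abs_of_nonneg hγ0]; exact hγ1
  have hsB : Summable (fun h : ℕ => γ ^ h * ((h + 1) * ε)) := by
    have h1 : Summable (fun h : ℕ => (h : ℝ) * γ ^ h) := by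
      simpa using summable_pow_mul_geometric_of_norm_lt_one 1 hγn
    have h2 : Summable (fun h : ℕ => (γ : ℝ) ^ h) := summable_geometric_of_lt_one hγ0 hγ1
    have := ((h1.add h2).mul_right ε)
    refine this.congr fun h => ?_
    ring
  have habs : Summable (fun h => ‖g h - g' h‖) := by
    refine Summable.of_nonneg_of_le (fun h => norm_nonneg _) (fun h => ?_) hsB
    exact hgd h
  have hmain : |(∑' h, g h) - ∑' h, g' h| ≤ ∑' h : ℕ, γ ^ h * ((h + 1) * ε) := by
    rw [← Summable.tsum_sub hsg hsg']
    calc |∑' h, (g h - g' h)| ≤ ∑' h, ‖g h - g' h‖ := by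
          simpa using norm_tsum_le_tsum_norm habs
      _ ≤ ∑' h : ℕ, γ ^ h * ((h + 1) * ε) :=
          Summable.tsum_le_tsum (fun h => hgd h) habs hsB
  have htB : ∑' h : ℕ, γ ^ h * ((h + 1) * ε) = ε / (1 - γ) ^ 2 := by
    have h1 : Summable (fun h : ℕ => (h : ℝ) * γ ^ h) := by
      simpa using summable_pow_mul_geometric_of_norm_lt_one 1 hγn
    have h2 : Summable (fun h : ℕ => (γ : ℝ) ^ h) := summable_geometric_of_lt_one hγ0 hγ1
    have e : (fun h : ℕ => γ ^ h * ((h + 1) * ε)) =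
        fun h : ℕ => ((h : ℝ) * γ ^ h + γ ^ h) * ε := by
      funext h; ring
    rw [e, tsum_mul_right, Summable.tsum_add h1 h2, tsum_coe_mul_geometric_of_norm_lt_one hγn,
      tsum_geometric_of_lt_one hγ0 hγ1]
    field_simp
    ring
  have : |val γ P π r s₀ - val γ P π' r s₀| =
      (1 - γ) * |(∑' h, g h) - ∑' h, g' h| := by
    rw [val, val, ← mul_sub, abs_mul, abs_of_nonneg (le_of_lt h1γ)]
  rw [this]
  calc (1 - γ) * |(∑' h, g h) - ∑' h, g' h|
      ≤ (1 - γ) * (ε / (1 - γ) ^ 2) := by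
        rw [← htB]
        exact mul_le_mul_of_nonneg_left hmain (le_of_lt h1γ)
    _ = ε / (1 - γ) := by field_simp

/-- Lipschitz continuity of the (normalized) value and action-value functions in the policy:
`|V_i^π(s) - V_i^{π'}(s)| ≤ (1/(1-γ)) · max_{s'} ‖π(·|s') - π'(·|s')‖₁` and
`|Q_i^π(s,a) - Q_i^{π'}(s,a)| ≤ (γ/(1-γ)) · max_{s'} ‖π(·|s') - π'(·|s')‖₁`. -/
theorem value_lipschitz_in_policy (γ : ℝ) (hγ0 : 0 ≤ γ) (hγ1 : γ < 1)
    (P : S → A → S → ℝ) (hP : IsKernel P)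
    (π π' : S → A → ℝ) (hπ : IsPolicy π) (hπ' : IsPolicy π')
    (r : I → S → A → ℝ) (hr : ∀ i s a, |r i s a| ≤ 1)
    (s : S) (i : I) :
    (|val γ P π (r i) s - val γ P π' (r i) s| ≤
        (1 / (1 - γ)) * (⨆ s' : S, ∑ a, |π s' a - π' s' a|)) ∧
    ∀ a : A, |qval γ P π (r i) s a - qval γ P π' (r i) s a| ≤
        (γ / (1 - γ)) * (⨆ s' : S, ∑ a', |π s' a' - π' s' a'|) := by
  have h1γ : (0:ℝ) < 1 - γ := by linarith
  set ε := ⨆ s' : S, ∑ a, |π s' a - π' s' a| with hεdef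
  have hε : ∀ s', ∑ a, |π s' a - π' s' a| ≤ ε := fun s' =>
    le_ciSup (f := fun s' : S => ∑ a, |π s' a - π' s' a|)
      (Set.Finite.bddAbove (Set.finite_range _)) s'
  obtain ⟨s₁⟩ := ‹Nonempty S›
  have hε0 : 0 ≤ ε :=
    le_trans (Finset.sum_nonneg fun a _ => abs_nonneg _) (hε s₁)
  have hV : ∀ x : S, |val γ P π (r i) x - val γ P π' (r i) x| ≤ ε / (1 - γ) :=
    fun x => val_diff γ hγ0 hγ1 P hP π π' hπ hπ' (r i) (hr i) ε hε0 hε x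
  constructor
  · have := hV s
    rwa [div_eq_mul_inv, mul_comm, ← one_div] at this
  · intro a
    have key : qval γ P π (r i) s a - qval γ P π' (r i) s a =
        γ * ∑ s', P s a s' * (val γ P π (r i) s' - val γ P π' (r i) s') := by
      unfold qval
      have e : ∑ s', P s a s' * (val γ P π (r i) s' - val γ P π' (r i) s') =
          (∑ s', P s a s' * val γ P π (r i) s') -
            ∑ s', P s a s' * val γ P π' (r i) s' := by
        rw [← Finset.sum_sub_distrib]
        exact Finset.sum_congr rfl fun s' _ => by ring
      rw [e]
      ring
    rw [key, abs_mul, abs_of_nonneg hγ0]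
    have hsum : |∑ s', P s a s' * (val γ P π (r i) s' - val γ P π' (r i) s')| ≤
        ε / (1 - γ) := by
      calc |∑ s', P s a s' * (val γ P π (r i) s' - val γ P π' (r i) s')|
          ≤ ∑ s', |P s a s' * (val γ P π (r i) s' - val γ P π' (r i) s')| :=
            Finset.abs_sum_le_sum_abs _ _
        _ ≤ ∑ s', P s a s' * (ε / (1 - γ)) := Finset.sum_le_sum fun s' _ => by
            rw [abs_mul, abs_of_nonneg (hP.1 s a s')]
            exact mul_le_mul_of_nonneg_left (hV s') (hP.1 s a s')
        _ = ε / (1 - γ) := by rw [← Finset.sum_mul, hP.2 s a, one_mul]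
    calc γ * |∑ s', P s a s' * (val γ P π (r i) s' - val γ P π' (r i) s')|
        ≤ γ * (ε / (1 - γ)) := mul_le_mul_of_nonneg_left hsum hγ0
      _ = γ / (1 - γ) * ε := by ring

end Stmt2
end

section
/- Let π be a product policy of a γ-discounted stochastic game in which at each state all but p players have a singleton action set, and suppose π is an ε-PNE-SG. Then the truncated policy π' — obtained by restricting each π_i(·|s) to actions a_i with Q_i^π(s,a_i) ≥ max_{a_i'} Q_i^π(s,a_i') - k·ρ_{i,s} for k = sqrt(8p/((1-γ)ε)) and renormalizing — is a 6·sqrt(pε/(1-γ))-perfect well-supported NE in stage games. -/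
open scoped BigOperators

namespace Stmt5

variable {S : Type*} [Fintype S] [DecidableEq S]
variable {m : ℕ} {A : Fin m → Type*} [∀ i, Fintype (A i)] [∀ i, Nonempty (A i)]

def IsKernel {α : Type*} [Fintype α] (P : S → α → S → ℝ) : Prop :=
  (∀ s a s', 0 ≤ P s a s') ∧ ∀ s a, ∑ s', P s a s' = 1

def IsPolicy {α : Type*} [Fintype α] (π : S → α → ℝ) : Prop :=
  (∀ s a, 0 ≤ π s a) ∧ ∀ s, ∑ a, π s a = 1

noncomputable def step {α : Type*} [Fintype α] (P : S → α → S → ℝ) (π : S → α → ℝ)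
    (d : S → ℝ) : S → ℝ :=
  fun s' => ∑ s, ∑ a, d s * π s a * P s a s'

noncomputable def dist {α : Type*} [Fintype α] (P : S → α → S → ℝ) (π : S → α → ℝ)
    (s₀ : S) (h : ℕ) : S → ℝ :=
  (step P π)^[h] (fun s => if s = s₀ then (1 : ℝ) else 0)

/-- Normalized discounted value `V^π(s₀) = (1-γ)·E[Σ_{h≥1} γ^{h-1} r(s_h,a_h)]`. -/
noncomputable def val (γ : ℝ) {α : Type*} [Fintype α] (P : S → α → S → ℝ) (π : S → α → ℝ)
    (r : S → α → ℝ) (s₀ : S) : ℝ :=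
  (1 - γ) * ∑' h : ℕ, γ ^ h * ∑ s, dist P π s₀ h s * ∑ a, π s a * r s a

/-- Normalized discounted action-value `Q^π(s,a)`. -/
noncomputable def qval (γ : ℝ) {α : Type*} [Fintype α] (P : S → α → S → ℝ) (π : S → α → ℝ)
    (r : S → α → ℝ) (s : S) (a : α) : ℝ :=
  (1 - γ) * r s a + γ * ∑ s', P s a s' * val γ P π r s'

/-- The joint (product) policy induced by a tuple of per-player policies. -/
noncomputable def prodPolicy (πp : ∀ i : Fin m, S → A i → ℝ) : S → (∀ i, A i) → ℝ :=
  fun s a => ∏ i, πp i s (a i)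

/-- `Qbar γ P πp r i s aᵢ = E_{a₋ᵢ ~ π₋ᵢ(s)}[Q_i^π(s, (aᵢ, a₋ᵢ))]` for the product policy `πp`
(using that `πp i s` sums to one, averaging the `i`-th coordinate out is harmless). -/
noncomputable def Qbar (γ : ℝ) (P : S → (∀ i, A i) → S → ℝ) (πp : ∀ i : Fin m, S → A i → ℝ)
    (r : S → (∀ i, A i) → ℝ) (i : Fin m) (s : S) (aᵢ : A i) : ℝ :=
  ∑ a : ∀ j, A j, prodPolicy πp s a * qval γ P (prodPolicy πp) r s (Function.update a i aᵢ)

/-- Best-response value `V_i^{†,π₋ᵢ}(s)` of player `i` against the product policy `πp`: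
the supremum over stationary policies of player `i` of the resulting value. -/
noncomputable def brVal (γ : ℝ) (P : S → (∀ i, A i) → S → ℝ) (πp : ∀ i : Fin m, S → A i → ℝ)
    (r : S → (∀ i, A i) → ℝ) (i : Fin m) (s : S) : ℝ :=
  ⨆ ρ : {ρ : S → A i → ℝ // IsPolicy ρ},
    val γ P (prodPolicy (Function.update πp i ρ.1)) r s

/-- The stage-game improvement `ρ_{i,s}` of player `i` at state `s` under product policy `πp`. -/
noncomputable def stageGap (γ : ℝ) (P : S → (∀ i, A i) → S → ℝ) (πp : ∀ i : Fin m, S → A i → ℝ)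
    (r : S → (∀ i, A i) → ℝ) (i : Fin m) (s : S) : ℝ :=
  (⨆ aᵢ : A i, Qbar γ P πp r i s aᵢ) - val γ P (prodPolicy πp) r s

open Classical in
/-- The truncated policy: restrict `πp i (·|s)` to actions `aᵢ` with
`Qbar(s,aᵢ) ≥ max_{aᵢ'} Qbar(s,aᵢ') - k·ρ_{i,s}` and renormalize. -/
noncomputable def truncPolicy (γ : ℝ) (P : S → (∀ i, A i) → S → ℝ)
    (πp : ∀ i : Fin m, S → A i → ℝ) (r : Fin m → S → (∀ i, A i) → ℝ) (k : ℝ) :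
    ∀ i : Fin m, S → A i → ℝ :=
  fun i s aᵢ =>
    if (⨆ aᵢ' : A i, Qbar γ P πp (r i) i s aᵢ') - k * stageGap γ P πp (r i) i s
        ≤ Qbar γ P πp (r i) i s aᵢ
    then πp i s aᵢ /
      (∑ a' ∈ Finset.univ.filter (fun a' : A i =>
          (⨆ aᵢ' : A i, Qbar γ P πp (r i) i s aᵢ') - k * stageGap γ P πp (r i) i s
            ≤ Qbar γ P πp (r i) i s a'), πp i s a')
    else 0



set_option linter.unusedSectionVars false

section Aux

variable {α : Type*} [Fintype α]

def IsSub (π : S → α → ℝ) : Prop := (∀ s a, 0 ≤ π s a) ∧ ∀ s, ∑ a, π s a ≤ 1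

lemma IsPolicy.isSub {π : S → α → ℝ} (h : IsPolicy π) : IsSub π := ⟨h.1, fun s => (h.2 s).le⟩

variable {γ : ℝ} {P : S → α → S → ℝ} {π : S → α → ℝ} {r : S → α → ℝ}

lemma step_delta (s₀ s₁ : S) :
    step P π (fun s => if s = s₀ then (1 : ℝ) else 0) s₁ = ∑ a, π s₀ a * P s₀ a s₁ := by
  simp only [step, ite_mul, one_mul, zero_mul]
  rw [Finset.sum_comm]
  simp [Finset.sum_ite_eq']

lemma iterate_step_eq (h : ℕ) :
    ∀ (d : S → ℝ) (s' : S), (step P π)^[h] d s' = ∑ s₀, d s₀ * dist P π s₀ h s' := by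
  induction h with
  | zero =>
    intro d s'
    simp only [Function.iterate_zero_apply, dist, mul_ite, mul_one, mul_zero]
    rw [Finset.sum_ite_eq Finset.univ s' d]
    simp
  | succ n ih =>
    intro d s'
    rw [Function.iterate_succ_apply, ih (step P π d) s']
    have hstep : ∀ s₁ : S, step P π d s₁ = ∑ s₀, d s₀ * step P π (fun s => if s = s₀ then (1:ℝ) else 0) s₁ := by
      intro s₁
      simp only [step_delta]
      show ∑ s, ∑ a, d s * π s a * P s a s₁ = _
      simp only [Finset.mul_sum]
      apply Finset.sum_congr rfl
      intro s₀ _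
      apply Finset.sum_congr rfl
      intro a _
      ring
    have hdist : ∀ s₀, dist P π s₀ (n+1) s' = ∑ s₁, step P π (fun s => if s = s₀ then (1:ℝ) else 0) s₁ * dist P π s₁ n s' := by
      intro s₀
      show (step P π)^[n+1] _ s' = _
      rw [Function.iterate_succ_apply, ih]
    simp only [hstep, hdist, Finset.sum_mul, Finset.mul_sum, mul_assoc]
    rw [Finset.sum_comm]

lemma dist_zero (s₀ s : S) : dist P π s₀ 0 s = if s = s₀ then 1 else 0 := rfl

lemma dist_succ (s₀ : S) (h : ℕ) (s' : S) :
    dist P π s₀ (h+1) s' = ∑ s₁, (∑ a, π s₀ a * P s₀ a s₁) * dist P π s₁ h s' := by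
  show (step P π)^[h+1] _ s' = _
  rw [Function.iterate_succ_apply, iterate_step_eq]
  simp only [step_delta]

lemma dist_nonneg' (hP : IsKernel P) (hπ : IsSub π) (s₀ : S) (h : ℕ) (s : S) :
    0 ≤ dist P π s₀ h s := by
  induction h generalizing s₀ s with
  | zero => rw [dist_zero]; positivity
  | succ n ih =>
    rw [dist_succ]
    apply Finset.sum_nonneg
    intro s₁ _
    exact mul_nonneg (Finset.sum_nonneg fun a _ => mul_nonneg (hπ.1 s₀ a) (hP.1 s₀ a s₁)) (ih s₁ s)

lemma dist_sum_le (hP : IsKernel P) (hπ : IsSub π) (s₀ : S) (h : ℕ) :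
    ∑ s, dist P π s₀ h s ≤ 1 := by
  induction h generalizing s₀ with
  | zero =>
    simp only [dist_zero]
    rw [Finset.sum_ite_eq' Finset.univ s₀ (fun _ => (1:ℝ))]
    simp
  | succ n ih =>
    simp only [dist_succ]
    rw [Finset.sum_comm]
    calc ∑ s₁, ∑ s, (∑ a, π s₀ a * P s₀ a s₁) * dist P π s₁ n s
        = ∑ s₁, (∑ a, π s₀ a * P s₀ a s₁) * ∑ s, dist P π s₁ n s := by
          simp [Finset.mul_sum]
      _ ≤ ∑ s₁, (∑ a, π s₀ a * P s₀ a s₁) * 1 := by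
          apply Finset.sum_le_sum
          intro s₁ _
          exact mul_le_mul_of_nonneg_left (ih s₁)
            (Finset.sum_nonneg fun a _ => mul_nonneg (hπ.1 s₀ a) (hP.1 s₀ a s₁))
      _ = ∑ a, π s₀ a * ∑ s₁, P s₀ a s₁ := by
          simp only [mul_one, Finset.mul_sum]
          rw [Finset.sum_comm]
      _ ≤ 1 := by
          calc ∑ a, π s₀ a * ∑ s₁, P s₀ a s₁ = ∑ a, π s₀ a := by
                apply Finset.sum_congr rfl; intro a _; rw [hP.2 s₀ a, mul_one]
            _ ≤ 1 := hπ.2 s₀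


lemma ret_abs_le (hπ : IsSub π) (hr : ∀ s a, |r s a| ≤ 1) (s : S) :
    |∑ a, π s a * r s a| ≤ 1 := by
  calc |∑ a, π s a * r s a| ≤ ∑ a, |π s a * r s a| := Finset.abs_sum_le_sum_abs _ _
    _ ≤ ∑ a, π s a := by
        apply Finset.sum_le_sum; intro a _
        rw [abs_mul, abs_of_nonneg (hπ.1 s a)]
        exact mul_le_of_le_one_right (hπ.1 s a) (hr s a)
    _ ≤ 1 := hπ.2 s

lemma term_abs_le (hP : IsKernel P) (hπ : IsSub π) (hr : ∀ s a, |r s a| ≤ 1) (s₀ : S) (h : ℕ) :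
    |∑ s, dist P π s₀ h s * ∑ a, π s a * r s a| ≤ 1 := by
  calc |∑ s, dist P π s₀ h s * ∑ a, π s a * r s a|
      ≤ ∑ s, |dist P π s₀ h s * ∑ a, π s a * r s a| := Finset.abs_sum_le_sum_abs _ _
    _ ≤ ∑ s, dist P π s₀ h s := by
        apply Finset.sum_le_sum; intro s _
        rw [abs_mul, abs_of_nonneg (dist_nonneg' hP hπ s₀ h s)]
        exact mul_le_of_le_one_right (dist_nonneg' hP hπ s₀ h s) (ret_abs_le hπ hr s)
    _ ≤ 1 := dist_sum_le hP hπ s₀ h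

lemma summable_val (hγ0 : 0 ≤ γ) (hγ1 : γ < 1) (hP : IsKernel P) (hπ : IsSub π)
    (hr : ∀ s a, |r s a| ≤ 1) (s₀ : S) :
    Summable (fun h : ℕ => γ ^ h * ∑ s, dist P π s₀ h s * ∑ a, π s a * r s a) := by
  apply Summable.of_norm_bounded (summable_geometric_of_lt_one hγ0 hγ1)
  intro h
  rw [Real.norm_eq_abs, abs_mul, abs_pow, abs_of_nonneg hγ0]
  calc γ ^ h * |∑ s, dist P π s₀ h s * ∑ a, π s a * r s a| ≤ γ ^ h * 1 :=
        mul_le_mul_of_nonneg_left (term_abs_le hP hπ hr s₀ h) (pow_nonneg hγ0 h)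
    _ = γ ^ h := mul_one _

lemma abs_val_le_one (hγ0 : 0 ≤ γ) (hγ1 : γ < 1) (hP : IsKernel P) (hπ : IsSub π)
    (hr : ∀ s a, |r s a| ≤ 1) (s₀ : S) : |val γ P π r s₀| ≤ 1 := by
  have h1γ : (0:ℝ) < 1 - γ := by linarith
  have hnorm : |∑' h : ℕ, γ ^ h * ∑ s, dist P π s₀ h s * ∑ a, π s a * r s a| ≤ (1-γ)⁻¹ := by
    have h1 : |∑' h : ℕ, γ ^ h * ∑ s, dist P π s₀ h s * ∑ a, π s a * r s a|
        ≤ ∑' h : ℕ, |γ ^ h * ∑ s, dist P π s₀ h s * ∑ a, π s a * r s a| := by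
      have := norm_tsum_le_tsum_norm
        (f := fun h : ℕ => γ ^ h * ∑ s, dist P π s₀ h s * ∑ a, π s a * r s a)
        (by simpa only [Real.norm_eq_abs] using (summable_val hγ0 hγ1 hP hπ hr s₀).abs)
      simpa only [Real.norm_eq_abs] using this
    have h2 : ∑' h : ℕ, |γ ^ h * ∑ s, dist P π s₀ h s * ∑ a, π s a * r s a| ≤ ∑' h : ℕ, γ ^ h := by
      apply Summable.tsum_le_tsum _ ((summable_val hγ0 hγ1 hP hπ hr s₀).abs)
        (summable_geometric_of_lt_one hγ0 hγ1)
      intro h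
      rw [abs_mul, abs_pow, abs_of_nonneg hγ0]
      calc γ ^ h * |∑ s, dist P π s₀ h s * ∑ a, π s a * r s a| ≤ γ ^ h * 1 :=
            mul_le_mul_of_nonneg_left (term_abs_le hP hπ hr s₀ h) (pow_nonneg hγ0 h)
        _ = γ ^ h := mul_one _
    rw [tsum_geometric_of_lt_one hγ0 hγ1] at h2
    exact h1.trans h2
  show |(1-γ) * _| ≤ 1
  rw [abs_mul, abs_of_pos h1γ]
  calc (1-γ) * |∑' h : ℕ, γ ^ h * ∑ s, dist P π s₀ h s * ∑ a, π s a * r s a|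
      ≤ (1-γ) * (1-γ)⁻¹ := mul_le_mul_of_nonneg_left hnorm h1γ.le
    _ = 1 := mul_inv_cancel₀ h1γ.ne'

lemma abs_qval_le_one (hγ0 : 0 ≤ γ) (hγ1 : γ < 1) (hP : IsKernel P) (hπ : IsSub π)
    (hr : ∀ s a, |r s a| ≤ 1) (s : S) (a : α) : |qval γ P π r s a| ≤ 1 := by
  have h1γ : (0:ℝ) < 1 - γ := by linarith
  have h2 : |∑ s', P s a s' * val γ P π r s'| ≤ 1 := by
    calc |∑ s', P s a s' * val γ P π r s'| ≤ ∑ s', |P s a s' * val γ P π r s'| :=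
          Finset.abs_sum_le_sum_abs _ _
      _ ≤ ∑ s', P s a s' := by
          apply Finset.sum_le_sum; intro s' _
          rw [abs_mul, abs_of_nonneg (hP.1 s a s')]
          exact mul_le_of_le_one_right (hP.1 s a s') (abs_val_le_one hγ0 hγ1 hP hπ hr s')
      _ = 1 := hP.2 s a
  calc |qval γ P π r s a| ≤ |(1-γ) * r s a| + |γ * ∑ s', P s a s' * val γ P π r s'| := abs_add_le _ _
    _ ≤ (1-γ) * 1 + γ * 1 := by
        apply add_le_add
        · rw [abs_mul, abs_of_pos h1γ]
          exact mul_le_mul_of_nonneg_left (hr s a) h1γ.le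
        · rw [abs_mul, abs_of_nonneg hγ0]
          exact mul_le_mul_of_nonneg_left h2 hγ0
    _ = 1 := by ring

lemma tsum_rec (hγ0 : 0 ≤ γ) (hγ1 : γ < 1) (hP : IsKernel P) (hπ : IsSub π)
    (hr : ∀ s a, |r s a| ≤ 1) (s : S) :
    ∑' h : ℕ, γ ^ h * ∑ s', dist P π s h s' * ∑ a, π s' a * r s' a
      = (∑ a, π s a * r s a)
        + γ * ∑ s₁, (∑ a, π s a * P s a s₁)
            * ∑' h : ℕ, γ ^ h * ∑ s', dist P π s₁ h s' * ∑ a, π s' a * r s' a := by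
  rw [Summable.tsum_eq_zero_add (summable_val hγ0 hγ1 hP hπ hr s)]
  congr 1
  · simp only [pow_zero, one_mul, dist_zero, ite_mul, one_mul, zero_mul]
    rw [Finset.sum_ite_eq' Finset.univ s (fun s' => ∑ a, π s' a * r s' a)]
    simp
  · have hrec : ∀ h : ℕ, γ ^ (h+1) * ∑ s', dist P π s (h+1) s' * ∑ a, π s' a * r s' a
        = ∑ s₁, γ * ((∑ a, π s a * P s a s₁)
            * (γ ^ h * ∑ s', dist P π s₁ h s' * ∑ a, π s' a * r s' a)) := by
      intro h
      have hu : ∑ s', dist P π s (h+1) s' * ∑ a, π s' a * r s' a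
          = ∑ s₁, (∑ a, π s a * P s a s₁) * ∑ s', dist P π s₁ h s' * ∑ a, π s' a * r s' a := by
        have hds : ∀ s', dist P π s (h+1) s' * (∑ a, π s' a * r s' a)
            = ∑ s₁, (∑ a, π s a * P s a s₁) * (dist P π s₁ h s' * ∑ a, π s' a * r s' a) := by
          intro s'
          rw [dist_succ, Finset.sum_mul]
          simp only [mul_assoc]
        rw [Finset.sum_congr rfl (fun s' _ => hds s'), Finset.sum_comm]
        apply Finset.sum_congr rfl; intro s₁ _
        rw [Finset.mul_sum]
      rw [hu, pow_succ, Finset.mul_sum]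
      apply Finset.sum_congr rfl; intro s₁ _; ring
    calc ∑' h : ℕ, γ ^ (h+1) * ∑ s', dist P π s (h+1) s' * ∑ a, π s' a * r s' a
        = ∑' h : ℕ, ∑ s₁, γ * ((∑ a, π s a * P s a s₁)
            * (γ ^ h * ∑ s', dist P π s₁ h s' * ∑ a, π s' a * r s' a)) := tsum_congr hrec
      _ = ∑ s₁, ∑' h : ℕ, γ * ((∑ a, π s a * P s a s₁)
            * (γ ^ h * ∑ s', dist P π s₁ h s' * ∑ a, π s' a * r s' a)) :=
          Summable.tsum_finsetSum (fun s₁ _ => (((summable_val hγ0 hγ1 hP hπ hr s₁).mul_left _).mul_left _))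
      _ = ∑ s₁, γ * ((∑ a, π s a * P s a s₁)
            * ∑' h : ℕ, γ ^ h * ∑ s', dist P π s₁ h s' * ∑ a, π s' a * r s' a) := by
          apply Finset.sum_congr rfl; intro s₁ _
          rw [tsum_mul_left, tsum_mul_left]
      _ = γ * ∑ s₁, (∑ a, π s a * P s a s₁)
            * ∑' h : ℕ, γ ^ h * ∑ s', dist P π s₁ h s' * ∑ a, π s' a * r s' a := by
          rw [Finset.mul_sum]

lemma val_rec (hγ0 : 0 ≤ γ) (hγ1 : γ < 1) (hP : IsKernel P) (hπ : IsSub π)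
    (hr : ∀ s a, |r s a| ≤ 1) (s : S) :
    val γ P π r s = (1-γ) * (∑ a, π s a * r s a)
      + γ * ∑ s₁, (∑ a, π s a * P s a s₁) * val γ P π r s₁ := by
  show (1-γ) * _ = _
  rw [tsum_rec hγ0 hγ1 hP hπ hr s]
  have : ∑ s₁, (∑ a, π s a * P s a s₁) * val γ P π r s₁
      = (1-γ) * ∑ s₁, (∑ a, π s a * P s a s₁)
          * ∑' h : ℕ, γ ^ h * ∑ s', dist P π s₁ h s' * ∑ a, π s' a * r s' a := by
    rw [Finset.mul_sum]
    apply Finset.sum_congr rfl; intro s₁ _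
    show _ * ((1-γ) * _) = _
    ring
  rw [this]; ring

lemma val_bellman (hγ0 : 0 ≤ γ) (hγ1 : γ < 1) (hP : IsKernel P) (hπ : IsSub π)
    (hr : ∀ s a, |r s a| ≤ 1) (s : S) :
    val γ P π r s = ∑ a, π s a * qval γ P π r s a := by
  rw [val_rec hγ0 hγ1 hP hπ hr s]
  simp only [qval, mul_add, Finset.sum_add_distrib]
  congr 1
  · rw [Finset.mul_sum]; apply Finset.sum_congr rfl; intro a _; ring
  · simp only [Finset.mul_sum, Finset.sum_mul]
    rw [Finset.sum_comm]
    apply Finset.sum_congr rfl; intro a _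
    apply Finset.sum_congr rfl; intro s₁ _
    ring

lemma val_close (hγ0 : 0 ≤ γ) (hγ1 : γ < 1) (hP : IsKernel P)
    {π' : S → α → ℝ} (hπ : IsPolicy π) (hπ' : IsSub π')
    (hr : ∀ s a, |r s a| ≤ 1) {β : ℝ}
    (hβ : ∀ t, ∑ a, |π' t a - π t a| ≤ β) (s : S) :
    |val γ P π' r s - val γ P π r s| ≤ β / (1 - γ) := by
  have h1γ : (0:ℝ) < 1 - γ := by linarith
  have hS : (Finset.univ : Finset S).Nonempty := ⟨s, Finset.mem_univ s⟩
  set D := Finset.univ.sup' hS (fun t => |val γ P π' r t - val γ P π r t|) with hD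
  have key : ∀ t, |val γ P π' r t - val γ P π r t| ≤ β + γ * D := by
    intro t
    have expand : val γ P π' r t - val γ P π r t
        = (∑ a, (π' t a - π t a) * qval γ P π' r t a)
          + ∑ a, π t a * (qval γ P π' r t a - qval γ P π r t a) := by
      rw [val_bellman hγ0 hγ1 hP hπ' hr t, val_bellman hγ0 hγ1 hP hπ.isSub hr t]
      rw [← Finset.sum_add_distrib, ← Finset.sum_sub_distrib]
      apply Finset.sum_congr rfl; intro a _; ring
    rw [expand]
    have b1 : |∑ a, (π' t a - π t a) * qval γ P π' r t a| ≤ β := by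
      calc |∑ a, (π' t a - π t a) * qval γ P π' r t a|
          ≤ ∑ a, |(π' t a - π t a) * qval γ P π' r t a| := Finset.abs_sum_le_sum_abs _ _
        _ ≤ ∑ a, |π' t a - π t a| := by
            apply Finset.sum_le_sum; intro a _
            rw [abs_mul]
            exact mul_le_of_le_one_right (abs_nonneg _) (abs_qval_le_one hγ0 hγ1 hP hπ' hr t a)
        _ ≤ β := hβ t
    have hq : ∀ a, |qval γ P π' r t a - qval γ P π r t a| ≤ γ * D := by
      intro a
      have hqd : qval γ P π' r t a - qval γ P π r t a
          = γ * ∑ s', P t a s' * (val γ P π' r s' - val γ P π r s') := by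
        simp only [qval]
        have hss : ∑ s', P t a s' * (val γ P π' r s' - val γ P π r s')
            = (∑ s', P t a s' * val γ P π' r s') - ∑ s', P t a s' * val γ P π r s' := by
          rw [← Finset.sum_sub_distrib]
          apply Finset.sum_congr rfl; intro s' _; ring
        rw [hss]; ring
      have habs : |∑ s', P t a s' * (val γ P π' r s' - val γ P π r s')| ≤ D := by
        calc |∑ s', P t a s' * (val γ P π' r s' - val γ P π r s')|
            ≤ ∑ s', |P t a s' * (val γ P π' r s' - val γ P π r s')| :=
              Finset.abs_sum_le_sum_abs _ _
          _ ≤ ∑ s', P t a s' * D := by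
              apply Finset.sum_le_sum; intro s' _
              rw [abs_mul, abs_of_nonneg (hP.1 t a s')]
              exact mul_le_mul_of_nonneg_left
                (Finset.le_sup' (fun t => |val γ P π' r t - val γ P π r t|)
                  (Finset.mem_univ s')) (hP.1 t a s')
          _ = D := by rw [← Finset.sum_mul, hP.2 t a, one_mul]
      rw [hqd, abs_mul, abs_of_nonneg hγ0]
      exact mul_le_mul_of_nonneg_left habs hγ0
    have b2 : |∑ a, π t a * (qval γ P π' r t a - qval γ P π r t a)| ≤ γ * D := by
      calc |∑ a, π t a * (qval γ P π' r t a - qval γ P π r t a)|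
          ≤ ∑ a, |π t a * (qval γ P π' r t a - qval γ P π r t a)| :=
            Finset.abs_sum_le_sum_abs _ _
        _ ≤ ∑ a, π t a * (γ * D) := by
            apply Finset.sum_le_sum; intro a _
            rw [abs_mul, abs_of_nonneg (hπ.1 t a)]
            exact mul_le_mul_of_nonneg_left (hq a) (hπ.1 t a)
        _ = γ * D := by rw [← Finset.sum_mul, hπ.2 t, one_mul]
    exact le_trans (abs_add_le _ _) (add_le_add b1 b2)
  have hDle : D ≤ β + γ * D := Finset.sup'_le hS _ (fun t _ => key t)
  have hDb : D ≤ β / (1 - γ) := by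
    rw [le_div_iff₀ h1γ]; nlinarith [hDle]
  exact le_trans (Finset.le_sup' (fun t => |val γ P π' r t - val γ P π r t|)
    (Finset.mem_univ s)) hDb

end Aux

section Prod

variable {γ : ℝ} {P : S → (∀ i, A i) → S → ℝ} {πp : ∀ i : Fin m, S → A i → ℝ}
  {r : S → (∀ i, A i) → ℝ}

lemma prod_isSub (h : ∀ i, IsSub (πp i)) : IsSub (prodPolicy πp) := by
  constructor
  · intro s a; exact Finset.prod_nonneg fun i _ => (h i).1 s (a i)
  · intro s
    show ∑ a : ∀ j, A j, ∏ i, πp i s (a i) ≤ 1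
    rw [← Fintype.prod_sum (fun i (b : A i) => πp i s b)]
    exact Finset.prod_le_one (fun i _ => Finset.sum_nonneg fun b _ => (h i).1 s b)
      (fun i _ => (h i).2 s)

lemma prod_isPolicy (h : ∀ i, IsPolicy (πp i)) : IsPolicy (prodPolicy πp) := by
  constructor
  · intro s a; exact Finset.prod_nonneg fun i _ => (h i).1 s (a i)
  · intro s
    show ∑ a : ∀ j, A j, ∏ i, πp i s (a i) = 1
    rw [← Fintype.prod_sum (fun i (b : A i) => πp i s b)]
    calc ∏ i, ∑ b, πp i s b = ∏ i : Fin m, (1:ℝ) :=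
          Finset.prod_congr rfl (fun i _ => (h i).2 s)
      _ = 1 := Finset.prod_const_one

lemma abs_Qbar_le_one (hγ0 : 0 ≤ γ) (hγ1 : γ < 1) (hP : IsKernel P)
    (hsub : ∀ i, IsSub (πp i)) (hr : ∀ s a, |r s a| ≤ 1) (i : Fin m) (s : S) (aᵢ : A i) :
    |Qbar γ P πp r i s aᵢ| ≤ 1 := by
  calc |Qbar γ P πp r i s aᵢ|
      ≤ ∑ a : ∀ j, A j, |prodPolicy πp s a * qval γ P (prodPolicy πp) r s (Function.update a i aᵢ)| :=
        Finset.abs_sum_le_sum_abs _ _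
    _ ≤ ∑ a : ∀ j, A j, prodPolicy πp s a := by
        apply Finset.sum_le_sum; intro a _
        rw [abs_mul, abs_of_nonneg ((prod_isSub hsub).1 s a)]
        exact mul_le_of_le_one_right ((prod_isSub hsub).1 s a)
          (abs_qval_le_one hγ0 hγ1 hP (prod_isSub hsub) hr s _)
    _ ≤ 1 := (prod_isSub hsub).2 s

lemma prod_split (i : Fin m) (s : S) (a : ∀ j, A j) :
    prodPolicy πp s a = πp i s (a i) * ∏ j ∈ Finset.univ.erase i, πp j s (a j) :=
  (Finset.mul_prod_erase Finset.univ _ (Finset.mem_univ i)).symm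

lemma prod_update (i : Fin m) (s : S) (a : ∀ j, A j) (b : A i) :
    prodPolicy πp s (Function.update a i b)
      = πp i s b * ∏ j ∈ Finset.univ.erase i, πp j s (a j) := by
  rw [prod_split i s (Function.update a i b)]
  congr 1
  · rw [Function.update_self]
  · apply Finset.prod_congr rfl
    intro j hj
    rw [Function.update_of_ne (Finset.ne_of_mem_erase hj)]

lemma sum_update (hπp : ∀ i, IsPolicy (πp i)) (i : Fin m) (s : S) (g : (∀ j, A j) → ℝ) :
    ∑ aᵢ : A i, πp i s aᵢ * ∑ a : ∀ j, A j, prodPolicy πp s a * g (Function.update a i aᵢ)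
      = ∑ a : ∀ j, A j, prodPolicy πp s a * g a := by
  classical
  have hφ : Function.Involutive
      (fun x : A i × (∀ j, A j) => ((x.2 i : A i), Function.update x.2 i x.1)) := by
    intro x
    refine Prod.ext ?_ ?_
    · simp
    · show Function.update (Function.update x.2 i x.1) i (x.2 i) = x.2
      rw [Function.update_idem, Function.update_eq_self]
  set e := hφ.toPerm _ with he
  have hF : ∀ x : A i × (∀ j, A j),
      πp i s (e x).1 * (prodPolicy πp s (e x).2 * g (Function.update (e x).2 i (e x).1))
        = πp i s x.1 * (prodPolicy πp s x.2 * g x.2) := by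
    intro x
    have h1 : (e x).1 = x.2 i := rfl
    have h2 : (e x).2 = Function.update x.2 i x.1 := rfl
    rw [h1, h2, Function.update_idem, Function.update_eq_self]
    rw [prod_update i s x.2 x.1, prod_split i s x.2]
    ring
  calc ∑ aᵢ : A i, πp i s aᵢ * ∑ a : ∀ j, A j, prodPolicy πp s a * g (Function.update a i aᵢ)
      = ∑ x : A i × (∀ j, A j),
          πp i s x.1 * (prodPolicy πp s x.2 * g (Function.update x.2 i x.1)) := by
        rw [Fintype.sum_prod_type]
        apply Finset.sum_congr rfl; intro b _
        rw [Finset.mul_sum]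
    _ = ∑ x : A i × (∀ j, A j),
          πp i s (e x).1 * (prodPolicy πp s (e x).2 * g (Function.update (e x).2 i (e x).1)) :=
        (Equiv.sum_comp e (fun x : A i × (∀ j, A j) =>
          πp i s x.1 * (prodPolicy πp s x.2 * g (Function.update x.2 i x.1)))).symm
    _ = ∑ x : A i × (∀ j, A j), πp i s x.1 * (prodPolicy πp s x.2 * g x.2) :=
        Finset.sum_congr rfl (fun x _ => hF x)
    _ = ∑ aᵢ : A i, πp i s aᵢ * ∑ a : ∀ j, A j, prodPolicy πp s a * g a := by
        rw [Fintype.sum_prod_type]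
        apply Finset.sum_congr rfl; intro b _
        rw [Finset.mul_sum]
    _ = ∑ a : ∀ j, A j, prodPolicy πp s a * g a := by
        rw [← Finset.sum_mul, (hπp i).2 s, one_mul]

lemma val_eq_sum_Qbar (hγ0 : 0 ≤ γ) (hγ1 : γ < 1) (hP : IsKernel P)
    (hπp : ∀ i, IsPolicy (πp i)) (hr : ∀ s a, |r s a| ≤ 1) (i : Fin m) (s : S) :
    val γ P (prodPolicy πp) r s = ∑ aᵢ : A i, πp i s aᵢ * Qbar γ P πp r i s aᵢ := by
  simp only [Qbar]
  rw [val_bellman hγ0 hγ1 hP (prod_isPolicy hπp).isSub hr s]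
  exact (sum_update hπp i s (qval γ P (prodPolicy πp) r s)).symm

lemma Qbar_close (hγ0 : 0 ≤ γ) (hγ1 : γ < 1) (hP : IsKernel P)
    {π'p : ∀ i : Fin m, S → A i → ℝ}
    (hπp : ∀ i, IsPolicy (πp i)) (hsub : ∀ i, IsSub (π'p i)) (hr : ∀ s a, |r s a| ≤ 1)
    {β : ℝ}
    (hβ : ∀ t, ∑ a : ∀ j, A j, |prodPolicy π'p t a - prodPolicy πp t a| ≤ β)
    (i : Fin m) (s : S) (aᵢ : A i) :
    |Qbar γ P π'p r i s aᵢ - Qbar γ P πp r i s aᵢ| ≤ β / (1 - γ) := by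
  have h1γ : (0:ℝ) < 1 - γ := by linarith
  have hβ0 : 0 ≤ β := le_trans (Finset.sum_nonneg fun a _ => abs_nonneg _) (hβ s)
  have expand : Qbar γ P π'p r i s aᵢ - Qbar γ P πp r i s aᵢ
      = (∑ a : ∀ j, A j, (prodPolicy π'p s a - prodPolicy πp s a)
          * qval γ P (prodPolicy π'p) r s (Function.update a i aᵢ))
        + ∑ a : ∀ j, A j, prodPolicy πp s a
          * (qval γ P (prodPolicy π'p) r s (Function.update a i aᵢ)
              - qval γ P (prodPolicy πp) r s (Function.update a i aᵢ)) := by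
    simp only [Qbar]
    rw [← Finset.sum_add_distrib, ← Finset.sum_sub_distrib]
    apply Finset.sum_congr rfl; intro a _; ring
  rw [expand]
  have b1 : |∑ a : ∀ j, A j, (prodPolicy π'p s a - prodPolicy πp s a)
      * qval γ P (prodPolicy π'p) r s (Function.update a i aᵢ)| ≤ β := by
    calc |∑ a : ∀ j, A j, (prodPolicy π'p s a - prodPolicy πp s a)
        * qval γ P (prodPolicy π'p) r s (Function.update a i aᵢ)|
        ≤ ∑ a : ∀ j, A j, |(prodPolicy π'p s a - prodPolicy πp s a)
            * qval γ P (prodPolicy π'p) r s (Function.update a i aᵢ)| :=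
          Finset.abs_sum_le_sum_abs _ _
      _ ≤ ∑ a : ∀ j, A j, |prodPolicy π'p s a - prodPolicy πp s a| := by
          apply Finset.sum_le_sum; intro a _
          rw [abs_mul]
          exact mul_le_of_le_one_right (abs_nonneg _)
            (abs_qval_le_one hγ0 hγ1 hP (prod_isSub hsub) hr s _)
      _ ≤ β := hβ s
  have hq : ∀ x : ∀ j, A j, |qval γ P (prodPolicy π'p) r s x - qval γ P (prodPolicy πp) r s x|
      ≤ γ * (β / (1 - γ)) := by
    intro x
    have hqd : qval γ P (prodPolicy π'p) r s x - qval γ P (prodPolicy πp) r s x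
        = γ * ∑ s', P s x s' * (val γ P (prodPolicy π'p) r s' - val γ P (prodPolicy πp) r s') := by
      simp only [qval]
      have hss : ∑ s', P s x s' * (val γ P (prodPolicy π'p) r s' - val γ P (prodPolicy πp) r s')
          = (∑ s', P s x s' * val γ P (prodPolicy π'p) r s')
            - ∑ s', P s x s' * val γ P (prodPolicy πp) r s' := by
        rw [← Finset.sum_sub_distrib]
        apply Finset.sum_congr rfl; intro s' _; ring
      rw [hss]; ring
    have habs : |∑ s', P s x s' * (val γ P (prodPolicy π'p) r s' - val γ P (prodPolicy πp) r s')|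
        ≤ β / (1 - γ) := by
      calc |∑ s', P s x s' * (val γ P (prodPolicy π'p) r s' - val γ P (prodPolicy πp) r s')|
          ≤ ∑ s', |P s x s' * (val γ P (prodPolicy π'p) r s' - val γ P (prodPolicy πp) r s')| :=
            Finset.abs_sum_le_sum_abs _ _
        _ ≤ ∑ s', P s x s' * (β / (1 - γ)) := by
            apply Finset.sum_le_sum; intro s' _
            rw [abs_mul, abs_of_nonneg (hP.1 s x s')]
            exact mul_le_mul_of_nonneg_left
              (val_close hγ0 hγ1 hP (prod_isPolicy hπp) (prod_isSub hsub) hr hβ s')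
              (hP.1 s x s')
        _ = β / (1 - γ) := by rw [← Finset.sum_mul, hP.2 s x, one_mul]
    rw [hqd, abs_mul, abs_of_nonneg hγ0]
    exact mul_le_mul_of_nonneg_left habs hγ0
  have b2 : |∑ a : ∀ j, A j, prodPolicy πp s a
      * (qval γ P (prodPolicy π'p) r s (Function.update a i aᵢ)
          - qval γ P (prodPolicy πp) r s (Function.update a i aᵢ))| ≤ γ * (β / (1 - γ)) := by
    calc |∑ a : ∀ j, A j, prodPolicy πp s a
        * (qval γ P (prodPolicy π'p) r s (Function.update a i aᵢ)
            - qval γ P (prodPolicy πp) r s (Function.update a i aᵢ))|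
        ≤ ∑ a : ∀ j, A j, |prodPolicy πp s a
            * (qval γ P (prodPolicy π'p) r s (Function.update a i aᵢ)
                - qval γ P (prodPolicy πp) r s (Function.update a i aᵢ))| :=
          Finset.abs_sum_le_sum_abs _ _
      _ ≤ ∑ a : ∀ j, A j, prodPolicy πp s a * (γ * (β / (1 - γ))) := by
          apply Finset.sum_le_sum; intro a _
          rw [abs_mul, abs_of_nonneg ((prod_isPolicy hπp).1 s a)]
          exact mul_le_mul_of_nonneg_left (hq _) ((prod_isPolicy hπp).1 s a)
      _ = γ * (β / (1 - γ)) := by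
          rw [← Finset.sum_mul, (prod_isPolicy hπp).2 s, one_mul]
  have total : β + γ * (β / (1 - γ)) = β / (1 - γ) := by
    field_simp; ring
  calc |(∑ a : ∀ j, A j, (prodPolicy π'p s a - prodPolicy πp s a)
      * qval γ P (prodPolicy π'p) r s (Function.update a i aᵢ))
        + ∑ a : ∀ j, A j, prodPolicy πp s a
          * (qval γ P (prodPolicy π'p) r s (Function.update a i aᵢ)
              - qval γ P (prodPolicy πp) r s (Function.update a i aᵢ))|
      ≤ β + γ * (β / (1 - γ)) := le_trans (abs_add_le _ _) (add_le_add b1 b2)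
    _ = β / (1 - γ) := total

lemma prod_tv {f g : ∀ i, A i → ℝ}
    (hf0 : ∀ i a, 0 ≤ f i a) (hf1 : ∀ i, ∑ a, f i a ≤ 1)
    (hg0 : ∀ i a, 0 ≤ g i a) (hg1 : ∀ i, ∑ a, g i a ≤ 1) :
    ∑ a : ∀ j, A j, |(∏ i, g i (a i)) - ∏ i, f i (a i)| ≤ ∑ i, ∑ b, |g i b - f i b| := by
  classical
  have main : ∀ t : Finset (Fin m),
      ∑ a : ∀ j, A j, |(∏ i, (if i ∈ t then g i (a i) else f i (a i))) - ∏ i, f i (a i)|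
        ≤ ∑ i ∈ t, ∑ b, |g i b - f i b| := by
    intro t
    induction t using Finset.induction_on with
    | empty => simp
    | insert j t hj ih =>
      have step : ∑ a : ∀ j', A j',
          |(∏ i, (if i ∈ insert j t then g i (a i) else f i (a i)))
            - ∏ i, (if i ∈ t then g i (a i) else f i (a i))| ≤ ∑ b, |g j b - f j b| := by
        set u : ∀ i : Fin m, A i → ℝ := fun i b =>
          if i = j then |g i b - f i b| else (if i ∈ t then g i b else f i b) with hu
        have hpt : ∀ a : ∀ j', A j',
            |(∏ i, (if i ∈ insert j t then g i (a i) else f i (a i)))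
              - ∏ i, (if i ∈ t then g i (a i) else f i (a i))| = ∏ i, u i (a i) := by
          intro a
          have e1 : (∏ i, (if i ∈ insert j t then g i (a i) else f i (a i)))
              = g j (a j) * ∏ i ∈ Finset.univ.erase j, (if i ∈ t then g i (a i) else f i (a i)) := by
            rw [← Finset.mul_prod_erase Finset.univ _ (Finset.mem_univ j)]
            congr 1
            · simp
            · apply Finset.prod_congr rfl
              intro i hi
              have : i ≠ j := Finset.ne_of_mem_erase hi
              simp [Finset.mem_insert, this]
          have e2 : (∏ i, (if i ∈ t then g i (a i) else f i (a i)))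
              = f j (a j) * ∏ i ∈ Finset.univ.erase j, (if i ∈ t then g i (a i) else f i (a i)) := by
            rw [← Finset.mul_prod_erase Finset.univ _ (Finset.mem_univ j)]
            congr 1
            simp [hj]
          have e3 : (∏ i, u i (a i))
              = |g j (a j) - f j (a j)| * ∏ i ∈ Finset.univ.erase j,
                  (if i ∈ t then g i (a i) else f i (a i)) := by
            rw [← Finset.mul_prod_erase Finset.univ _ (Finset.mem_univ j)]
            congr 1
            · simp [hu]
            · apply Finset.prod_congr rfl
              intro i hi
              have : i ≠ j := Finset.ne_of_mem_erase hi
              simp [hu, this]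
          rw [e1, e2, e3, ← sub_mul, abs_mul]
          congr 1
          rw [abs_of_nonneg]
          exact Finset.prod_nonneg fun i _ => by
            by_cases hit : i ∈ t <;> simp [hit, hf0, hg0]
        calc ∑ a : ∀ j', A j',
            |(∏ i, (if i ∈ insert j t then g i (a i) else f i (a i)))
              - ∏ i, (if i ∈ t then g i (a i) else f i (a i))|
            = ∑ a : ∀ j', A j', ∏ i, u i (a i) :=
              Finset.sum_congr rfl (fun a _ => hpt a)
          _ = ∏ i, ∑ b, u i b := (Fintype.prod_sum u).symm
          _ = (∑ b, u j b) * ∏ i ∈ Finset.univ.erase j, ∑ b, u i b :=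
              (Finset.mul_prod_erase Finset.univ _ (Finset.mem_univ j)).symm
          _ ≤ (∑ b, u j b) * 1 := by
              apply mul_le_mul_of_nonneg_left _ (Finset.sum_nonneg fun b _ => by
                simp only [hu, if_pos rfl]; exact abs_nonneg _)
              apply Finset.prod_le_one
              · intro i hi
                apply Finset.sum_nonneg; intro b _
                have : i ≠ j := Finset.ne_of_mem_erase hi
                simp only [hu, if_neg this]
                split <;> [exact hg0 _ _; exact hf0 _ _]
              · intro i hi
                have : i ≠ j := Finset.ne_of_mem_erase hi
                calc ∑ b, u i b = ∑ b, (if i ∈ t then g i b else f i b) := by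
                      apply Finset.sum_congr rfl; intro b _; simp [hu, this]
                  _ ≤ 1 := by split <;> [exact hg1 i; exact hf1 i]
          _ = ∑ b, u j b := mul_one _
          _ = ∑ b, |g j b - f j b| := by
              apply Finset.sum_congr rfl; intro b _; simp [hu]
      calc ∑ a : ∀ j', A j',
          |(∏ i, (if i ∈ insert j t then g i (a i) else f i (a i))) - ∏ i, f i (a i)|
          ≤ ∑ a : ∀ j', A j',
            (|(∏ i, (if i ∈ insert j t then g i (a i) else f i (a i)))
                - ∏ i, (if i ∈ t then g i (a i) else f i (a i))|
              + |(∏ i, (if i ∈ t then g i (a i) else f i (a i))) - ∏ i, f i (a i)|) :=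
            Finset.sum_le_sum (fun a _ => abs_sub_le _ _ _)
        _ = (∑ a : ∀ j', A j',
            |(∏ i, (if i ∈ insert j t then g i (a i) else f i (a i)))
                - ∏ i, (if i ∈ t then g i (a i) else f i (a i))|)
              + ∑ a : ∀ j', A j',
                |(∏ i, (if i ∈ t then g i (a i) else f i (a i))) - ∏ i, f i (a i)| :=
            Finset.sum_add_distrib
        _ ≤ (∑ b, |g j b - f j b|) + ∑ i ∈ t, ∑ b, |g i b - f i b| := add_le_add step ih
        _ = ∑ i ∈ insert j t, ∑ b, |g i b - f i b| := by
            rw [Finset.sum_insert hj]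
  have h := main Finset.univ
  simpa using h

end Prod

section Trunc

variable {γ : ℝ} {P : S → (∀ i, A i) → S → ℝ} {πp : ∀ i : Fin m, S → A i → ℝ}

lemma Qbar_le_sup {r : S → (∀ i, A i) → ℝ} (i : Fin m) (s : S) (aᵢ : A i) :
    Qbar γ P πp r i s aᵢ ≤ ⨆ b : A i, Qbar γ P πp r i s b :=
  le_ciSup (Set.Finite.bddAbove (Set.finite_range _)) aᵢ

lemma stageGap_nonneg {r : S → (∀ i, A i) → ℝ} (hγ0 : 0 ≤ γ) (hγ1 : γ < 1) (hP : IsKernel P)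
    (hπp : ∀ i, IsPolicy (πp i)) (hr : ∀ s a, |r s a| ≤ 1) (i : Fin m) (s : S) :
    0 ≤ stageGap γ P πp r i s := by
  have hval := val_eq_sum_Qbar hγ0 hγ1 hP hπp hr i s
  have hle : val γ P (prodPolicy πp) r s ≤ ⨆ b : A i, Qbar γ P πp r i s b := by
    rw [hval]
    calc ∑ aᵢ : A i, πp i s aᵢ * Qbar γ P πp r i s aᵢ
        ≤ ∑ aᵢ : A i, πp i s aᵢ * ⨆ b : A i, Qbar γ P πp r i s b := by
          apply Finset.sum_le_sum; intro aᵢ _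
          exact mul_le_mul_of_nonneg_left (Qbar_le_sup i s aᵢ) ((hπp i).1 s aᵢ)
      _ = ⨆ b : A i, Qbar γ P πp r i s b := by
          rw [← Finset.sum_mul, (hπp i).2 s, one_mul]
  exact sub_nonneg.mpr hle

variable {r : Fin m → S → (∀ i, A i) → ℝ} {k : ℝ}

open Classical in
noncomputable def den (γ : ℝ) (P : S → (∀ i, A i) → S → ℝ) (πp : ∀ i : Fin m, S → A i → ℝ)
    (r : Fin m → S → (∀ i, A i) → ℝ) (k : ℝ) (i : Fin m) (s : S) : ℝ :=
  ∑ a' ∈ Finset.univ.filter (fun a' : A i =>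
      (⨆ aᵢ' : A i, Qbar γ P πp (r i) i s aᵢ') - k * stageGap γ P πp (r i) i s
        ≤ Qbar γ P πp (r i) i s a'), πp i s a'

open Classical in
lemma trunc_eq (i : Fin m) (s : S) (aᵢ : A i) :
    truncPolicy γ P πp r k i s aᵢ
      = if (⨆ aᵢ' : A i, Qbar γ P πp (r i) i s aᵢ') - k * stageGap γ P πp (r i) i s
            ≤ Qbar γ P πp (r i) i s aᵢ
        then πp i s aᵢ / den γ P πp r k i s else 0 := rfl

lemma trunc_nonneg (hπp : ∀ i, IsPolicy (πp i)) (i : Fin m) (s : S) (aᵢ : A i) :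
    0 ≤ truncPolicy γ P πp r k i s aᵢ := by
  classical
  rw [trunc_eq]
  split
  · exact div_nonneg ((hπp i).1 s aᵢ) (Finset.sum_nonneg fun a _ => (hπp i).1 s a)
  · exact le_refl 0

lemma den_nonneg (hπp : ∀ i, IsPolicy (πp i)) (i : Fin m) (s : S) :
    0 ≤ den γ P πp r k i s :=
  Finset.sum_nonneg fun a _ => (hπp i).1 s a

lemma den_le_one (hπp : ∀ i, IsPolicy (πp i)) (i : Fin m) (s : S) :
    den γ P πp r k i s ≤ 1 := by
  classical
  calc den γ P πp r k i s ≤ ∑ a, πp i s a :=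
        Finset.sum_le_sum_of_subset_of_nonneg (Finset.filter_subset _ _)
          (fun a _ _ => (hπp i).1 s a)
    _ = 1 := (hπp i).2 s

lemma trunc_isSub (hπp : ∀ i, IsPolicy (πp i)) (i : Fin m) :
    IsSub (truncPolicy γ P πp r k i) := by
  classical
  refine ⟨fun s a => trunc_nonneg hπp i s a, fun s => ?_⟩
  have : ∑ a, truncPolicy γ P πp r k i s a
      = den γ P πp r k i s / den γ P πp r k i s := by
    have hden : den γ P πp r k i s / den γ P πp r k i s
        = ∑ a ∈ Finset.univ.filter (fun a : A i =>
            (⨆ aᵢ' : A i, Qbar γ P πp (r i) i s aᵢ') - k * stageGap γ P πp (r i) i s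
              ≤ Qbar γ P πp (r i) i s a), πp i s a / den γ P πp r k i s := by
      rw [← Finset.sum_div]; rfl
    rw [hden]
    rw [← Finset.sum_filter_add_sum_filter_not Finset.univ (fun a : A i =>
      (⨆ aᵢ' : A i, Qbar γ P πp (r i) i s aᵢ') - k * stageGap γ P πp (r i) i s
        ≤ Qbar γ P πp (r i) i s a) (fun a => truncPolicy γ P πp r k i s a)]
    have h1 : ∀ a ∈ Finset.univ.filter (fun a : A i =>
        (⨆ aᵢ' : A i, Qbar γ P πp (r i) i s aᵢ') - k * stageGap γ P πp (r i) i s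
          ≤ Qbar γ P πp (r i) i s a),
        truncPolicy γ P πp r k i s a = πp i s a / den γ P πp r k i s := by
      intro a ha
      rw [trunc_eq, if_pos (Finset.mem_filter.mp ha).2]
    have h2 : ∀ a ∈ Finset.univ.filter (fun a : A i =>
        ¬((⨆ aᵢ' : A i, Qbar γ P πp (r i) i s aᵢ') - k * stageGap γ P πp (r i) i s
          ≤ Qbar γ P πp (r i) i s a)),
        truncPolicy γ P πp r k i s a = 0 := by
      intro a ha
      rw [trunc_eq, if_neg (Finset.mem_filter.mp ha).2]
    rw [Finset.sum_congr rfl h1, Finset.sum_congr rfl h2]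
    rw [Finset.sum_const_zero, add_zero]
  rw [this]
  exact div_self_le_one _

lemma one_sub_den_le (hγ0 : 0 ≤ γ) (hγ1 : γ < 1) (hP : IsKernel P)
    (hπp : ∀ i, IsPolicy (πp i)) (i : Fin m) (hr : ∀ s a, |r i s a| ≤ 1)
    (s : S) (hk : 1 ≤ k) :
    1 - den γ P πp r k i s ≤ 1 / k := by
  classical
  have hk0 : (0:ℝ) < k := by linarith
  have hρ0 : 0 ≤ stageGap γ P πp (r i) i s := stageGap_nonneg hγ0 hγ1 hP hπp hr i s
  have hcompl : ∑ a ∈ Finset.univ.filter (fun a : A i =>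
      ¬((⨆ aᵢ' : A i, Qbar γ P πp (r i) i s aᵢ') - k * stageGap γ P πp (r i) i s
        ≤ Qbar γ P πp (r i) i s a)), πp i s a
      = 1 - den γ P πp r k i s := by
    have hci := Finset.sum_filter_add_sum_filter_not Finset.univ
      (fun a : A i => (⨆ aᵢ' : A i, Qbar γ P πp (r i) i s aᵢ')
        - k * stageGap γ P πp (r i) i s ≤ Qbar γ P πp (r i) i s a) (fun a => πp i s a)
    have hden : den γ P πp r k i s = ∑ a ∈ Finset.univ.filter (fun a : A i =>
        (⨆ aᵢ' : A i, Qbar γ P πp (r i) i s aᵢ') - k * stageGap γ P πp (r i) i s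
          ≤ Qbar γ P πp (r i) i s a), πp i s a := rfl
    rw [hden]
    rw [(hπp i).2 s] at hci
    linarith [hci]
  have hsum : ∑ a : A i, πp i s a * ((⨆ aᵢ' : A i, Qbar γ P πp (r i) i s aᵢ')
      - Qbar γ P πp (r i) i s a) = stageGap γ P πp (r i) i s := by
    have hval := val_eq_sum_Qbar hγ0 hγ1 hP hπp hr i s
    have hthis : ∑ a : A i, πp i s a * ((⨆ aᵢ' : A i, Qbar γ P πp (r i) i s aᵢ')
        - Qbar γ P πp (r i) i s a)
        = (∑ a : A i, πp i s a) * (⨆ aᵢ' : A i, Qbar γ P πp (r i) i s aᵢ')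
          - ∑ a : A i, πp i s a * Qbar γ P πp (r i) i s a := by
      rw [Finset.sum_mul, ← Finset.sum_sub_distrib]
      apply Finset.sum_congr rfl; intro a _; ring
    rw [hthis, (hπp i).2 s, one_mul, ← hval]
    rfl
  have hterm_nonneg : ∀ a : A i, 0 ≤ πp i s a * ((⨆ aᵢ' : A i, Qbar γ P πp (r i) i s aᵢ')
      - Qbar γ P πp (r i) i s a) := by
    intro a
    exact mul_nonneg ((hπp i).1 s a) (sub_nonneg.mpr (Qbar_le_sup i s a))
  rcases eq_or_lt_of_le hρ0 with hρz | hρpos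
  · have hall : ∀ a : A i, πp i s a * ((⨆ aᵢ' : A i, Qbar γ P πp (r i) i s aᵢ')
        - Qbar γ P πp (r i) i s a) = 0 := by
      intro a
      exact (Finset.sum_eq_zero_iff_of_nonneg (fun a _ => hterm_nonneg a)).mp
        (by rw [hsum, ← hρz]) a (Finset.mem_univ a)
    have hzero : ∑ a ∈ Finset.univ.filter (fun a : A i =>
        ¬((⨆ aᵢ' : A i, Qbar γ P πp (r i) i s aᵢ') - k * stageGap γ P πp (r i) i s
          ≤ Qbar γ P πp (r i) i s a)), πp i s a = 0 := by
      apply Finset.sum_eq_zero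
      intro a ha
      have hna := (Finset.mem_filter.mp ha).2
      have hQa : Qbar γ P πp (r i) i s a < ⨆ aᵢ' : A i, Qbar γ P πp (r i) i s aᵢ' := by
        have := lt_of_not_ge hna
        nlinarith [this]
      rcases mul_eq_zero.mp (hall a) with h | h
      · exact h
      · exfalso; nlinarith [hQa]
    rw [← hcompl, hzero]
    positivity
  · have key : (1 - den γ P πp r k i s) * (k * stageGap γ P πp (r i) i s)
        ≤ stageGap γ P πp (r i) i s := by
      rw [← hcompl, Finset.sum_mul]
      calc ∑ a ∈ Finset.univ.filter (fun a : A i =>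
            ¬((⨆ aᵢ' : A i, Qbar γ P πp (r i) i s aᵢ') - k * stageGap γ P πp (r i) i s
              ≤ Qbar γ P πp (r i) i s a)), πp i s a * (k * stageGap γ P πp (r i) i s)
          ≤ ∑ a ∈ Finset.univ.filter (fun a : A i =>
            ¬((⨆ aᵢ' : A i, Qbar γ P πp (r i) i s aᵢ') - k * stageGap γ P πp (r i) i s
              ≤ Qbar γ P πp (r i) i s a)), πp i s a
                * ((⨆ aᵢ' : A i, Qbar γ P πp (r i) i s aᵢ') - Qbar γ P πp (r i) i s a) := by
            apply Finset.sum_le_sum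
            intro a ha
            have hna := (Finset.mem_filter.mp ha).2
            have hlt := lt_of_not_ge hna
            exact mul_le_mul_of_nonneg_left (by linarith) ((hπp i).1 s a)
        _ ≤ ∑ a : A i, πp i s a
              * ((⨆ aᵢ' : A i, Qbar γ P πp (r i) i s aᵢ') - Qbar γ P πp (r i) i s a) :=
            Finset.sum_le_sum_of_subset_of_nonneg (Finset.filter_subset _ _)
              (fun a _ _ => hterm_nonneg a)
        _ = stageGap γ P πp (r i) i s := hsum
    have h1 : (1 - den γ P πp r k i s) * k ≤ 1 := by
      by_contra hcon
      push_neg at hcon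
      nlinarith [key, hρpos]
    rw [le_div_iff₀ hk0]
    linarith [h1]

lemma den_pos (hγ0 : 0 ≤ γ) (hγ1 : γ < 1) (hP : IsKernel P)
    (hπp : ∀ i, IsPolicy (πp i)) (i : Fin m) (hr : ∀ s a, |r i s a| ≤ 1)
    (s : S) (hk : 2 ≤ k) : 0 < den γ P πp r k i s := by
  have h := one_sub_den_le (k := k) hγ0 hγ1 hP hπp i hr s (by linarith)
  have hk0 : (0:ℝ) < k := by linarith
  have : 1 / k ≤ 1 / 2 := by
    apply one_div_le_one_div_of_le <;> linarith
  linarith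

lemma trunc_sum_one (hγ0 : 0 ≤ γ) (hγ1 : γ < 1) (hP : IsKernel P)
    (hπp : ∀ i, IsPolicy (πp i)) (i : Fin m) (hr : ∀ s a, |r i s a| ≤ 1)
    (s : S) (hk : 2 ≤ k) : ∑ a, truncPolicy γ P πp r k i s a = 1 := by
  classical
  have hpos := den_pos hγ0 hγ1 hP hπp i hr s hk
  have hsplit : ∑ a, truncPolicy γ P πp r k i s a
      = ∑ a ∈ Finset.univ.filter (fun a : A i =>
          (⨆ aᵢ' : A i, Qbar γ P πp (r i) i s aᵢ') - k * stageGap γ P πp (r i) i s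
            ≤ Qbar γ P πp (r i) i s a), πp i s a / den γ P πp r k i s := by
    rw [← Finset.sum_filter_add_sum_filter_not Finset.univ (fun a : A i =>
      (⨆ aᵢ' : A i, Qbar γ P πp (r i) i s aᵢ') - k * stageGap γ P πp (r i) i s
        ≤ Qbar γ P πp (r i) i s a) (fun a => truncPolicy γ P πp r k i s a)]
    have h1 : ∀ a ∈ Finset.univ.filter (fun a : A i =>
        (⨆ aᵢ' : A i, Qbar γ P πp (r i) i s aᵢ') - k * stageGap γ P πp (r i) i s
          ≤ Qbar γ P πp (r i) i s a),
        truncPolicy γ P πp r k i s a = πp i s a / den γ P πp r k i s := by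
      intro a ha
      rw [trunc_eq, if_pos (Finset.mem_filter.mp ha).2]
    have h2 : ∀ a ∈ Finset.univ.filter (fun a : A i =>
        ¬((⨆ aᵢ' : A i, Qbar γ P πp (r i) i s aᵢ') - k * stageGap γ P πp (r i) i s
          ≤ Qbar γ P πp (r i) i s a)),
        truncPolicy γ P πp r k i s a = 0 := by
      intro a ha
      rw [trunc_eq, if_neg (Finset.mem_filter.mp ha).2]
    rw [Finset.sum_congr rfl h1, Finset.sum_congr rfl h2]
    rw [Finset.sum_const_zero, add_zero]
  rw [hsplit, ← Finset.sum_div]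
  have hden : den γ P πp r k i s = ∑ a ∈ Finset.univ.filter (fun a : A i =>
      (⨆ aᵢ' : A i, Qbar γ P πp (r i) i s aᵢ') - k * stageGap γ P πp (r i) i s
        ≤ Qbar γ P πp (r i) i s a), πp i s a := rfl
  rw [← hden]
  exact div_self (ne_of_gt hpos)

lemma trunc_tv (hγ0 : 0 ≤ γ) (hγ1 : γ < 1) (hP : IsKernel P)
    (hπp : ∀ i, IsPolicy (πp i)) (i : Fin m) (hr : ∀ s a, |r i s a| ≤ 1)
    (s : S) (hk : 2 ≤ k) :
    ∑ a, |truncPolicy γ P πp r k i s a - πp i s a| ≤ 2 / k := by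
  classical
  have hpos := den_pos hγ0 hγ1 hP hπp i hr s hk
  have hd1 := den_le_one (γ := γ) (P := P) (r := r) (k := k) hπp i s
  have hd := one_sub_den_le (k := k) hγ0 hγ1 hP hπp i hr s (by linarith)
  have hk0 : (0:ℝ) < k := by linarith
  have hden : den γ P πp r k i s = ∑ a ∈ Finset.univ.filter (fun a : A i =>
      (⨆ aᵢ' : A i, Qbar γ P πp (r i) i s aᵢ') - k * stageGap γ P πp (r i) i s
        ≤ Qbar γ P πp (r i) i s a), πp i s a := rfl
  rw [← Finset.sum_filter_add_sum_filter_not Finset.univ (fun a : A i =>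
    (⨆ aᵢ' : A i, Qbar γ P πp (r i) i s aᵢ') - k * stageGap γ P πp (r i) i s
      ≤ Qbar γ P πp (r i) i s a) (fun a => |truncPolicy γ P πp r k i s a - πp i s a|)]
  have h1 : ∑ a ∈ Finset.univ.filter (fun a : A i =>
      (⨆ aᵢ' : A i, Qbar γ P πp (r i) i s aᵢ') - k * stageGap γ P πp (r i) i s
        ≤ Qbar γ P πp (r i) i s a), |truncPolicy γ P πp r k i s a - πp i s a|
      = 1 - den γ P πp r k i s := by
    have hterm : ∀ a ∈ Finset.univ.filter (fun a : A i =>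
        (⨆ aᵢ' : A i, Qbar γ P πp (r i) i s aᵢ') - k * stageGap γ P πp (r i) i s
          ≤ Qbar γ P πp (r i) i s a),
        |truncPolicy γ P πp r k i s a - πp i s a|
          = πp i s a / den γ P πp r k i s - πp i s a := by
      intro a ha
      rw [trunc_eq, if_pos (Finset.mem_filter.mp ha).2]
      rw [abs_of_nonneg]
      rw [sub_nonneg, le_div_iff₀ hpos]
      exact mul_le_of_le_one_right ((hπp i).1 s a) hd1
    rw [Finset.sum_congr rfl hterm, Finset.sum_sub_distrib, ← Finset.sum_div, ← hden]
    rw [div_self (ne_of_gt hpos)]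
  have h2 : ∑ a ∈ Finset.univ.filter (fun a : A i =>
      ¬((⨆ aᵢ' : A i, Qbar γ P πp (r i) i s aᵢ') - k * stageGap γ P πp (r i) i s
        ≤ Qbar γ P πp (r i) i s a)), |truncPolicy γ P πp r k i s a - πp i s a|
      = 1 - den γ P πp r k i s := by
    have hterm : ∀ a ∈ Finset.univ.filter (fun a : A i =>
        ¬((⨆ aᵢ' : A i, Qbar γ P πp (r i) i s aᵢ') - k * stageGap γ P πp (r i) i s
          ≤ Qbar γ P πp (r i) i s a)),
        |truncPolicy γ P πp r k i s a - πp i s a| = πp i s a := by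
      intro a ha
      rw [trunc_eq, if_neg (Finset.mem_filter.mp ha).2, zero_sub, abs_neg,
        abs_of_nonneg ((hπp i).1 s a)]
    rw [Finset.sum_congr rfl hterm]
    have hci := Finset.sum_filter_add_sum_filter_not Finset.univ
      (fun a : A i => (⨆ aᵢ' : A i, Qbar γ P πp (r i) i s aᵢ')
        - k * stageGap γ P πp (r i) i s ≤ Qbar γ P πp (r i) i s a) (fun a => πp i s a)
    rw [(hπp i).2 s] at hci
    rw [hden]
    linarith [hci]
  rw [h1, h2]
  have : (2:ℝ) / k = 1 / k + 1 / k := by ring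
  rw [this]
  have := hd
  linarith [hd]

lemma trunc_eq_self (hγ0 : 0 ≤ γ) (hγ1 : γ < 1) (hP : IsKernel P)
    (hπp : ∀ i, IsPolicy (πp i)) (j : Fin m) (hr : ∀ s a, |r j s a| ≤ 1)
    (hcard : Fintype.card (A j) ≤ 1) (hk : 0 ≤ k) :
    truncPolicy γ P πp r k j = πp j := by
  classical
  haveI hss : Subsingleton (A j) := Fintype.card_le_one_iff_subsingleton.mp hcard
  funext s aᵢ
  have hcond : ∀ a : A j, (⨆ aᵢ' : A j, Qbar γ P πp (r j) j s aᵢ')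
      - k * stageGap γ P πp (r j) j s ≤ Qbar γ P πp (r j) j s a := by
    intro a
    have hsup : (⨆ aᵢ' : A j, Qbar γ P πp (r j) j s aᵢ') ≤ Qbar γ P πp (r j) j s a :=
      ciSup_le (fun b => le_of_eq (congrArg _ (Subsingleton.elim b a)))
    have hρ := stageGap_nonneg hγ0 hγ1 hP hπp hr j s
    nlinarith [mul_nonneg hk hρ]
  have hfilter : Finset.univ.filter (fun a' : A j =>
      (⨆ aᵢ' : A j, Qbar γ P πp (r j) j s aᵢ') - k * stageGap γ P πp (r j) j s
        ≤ Qbar γ P πp (r j) j s a') = Finset.univ :=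
    Finset.filter_true_of_mem (fun a _ => hcond a)
  have hden : den γ P πp r k j s = 1 := by
    have : den γ P πp r k j s = ∑ a ∈ Finset.univ.filter (fun a' : A j =>
        (⨆ aᵢ' : A j, Qbar γ P πp (r j) j s aᵢ') - k * stageGap γ P πp (r j) j s
          ≤ Qbar γ P πp (r j) j s a'), πp j s a := rfl
    rw [this, hfilter]
    exact (hπp j).2 s
  rw [trunc_eq, if_pos (hcond aᵢ), hden, div_one]

lemma trunc_support {i : Fin m} {s : S} {a : A i}
    (h : 0 < truncPolicy γ P πp r k i s a) :
    (⨆ aᵢ' : A i, Qbar γ P πp (r i) i s aᵢ') - k * stageGap γ P πp (r i) i s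
      ≤ Qbar γ P πp (r i) i s a := by
  classical
  by_contra hc
  rw [trunc_eq, if_neg hc] at h
  exact lt_irrefl 0 h

end Trunc

lemma numeric {u e p : ℝ} (hu : 0 < u) (hu1 : u ≤ 1) (he : 0 < e) (hp1 : 1 ≤ p) :
    Real.sqrt (8*p/(u*e)) * e + 2*((p*(2/Real.sqrt (8*p/(u*e))))/u) ≤ 6*Real.sqrt (p*e/u) := by
  have hc0 : 0 < 8*p/(u*e) := by positivity
  have hk0 : 0 < Real.sqrt (8*p/(u*e)) := Real.sqrt_pos.mpr hc0
  have hk2 : (Real.sqrt (8*p/(u*e)))^2 = 8*p/(u*e) := Real.sq_sqrt hc0.le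
  have hX0 : (0:ℝ) ≤ p*e/u := by positivity
  have h1 : Real.sqrt (8*p/(u*e)) * e = Real.sqrt (8*(p*e/u)) := by
    have he2 : (8*(p*e/u)) = (8*p/(u*e))*e^2 := by field_simp
    rw [he2, Real.sqrt_mul hc0.le, Real.sqrt_sq he.le]
  have h2 : 2*((p*(2/Real.sqrt (8*p/(u*e))))/u) = Real.sqrt (2*(p*e/u)) := by
    have hval : 2*((p*(2/Real.sqrt (8*p/(u*e))))/u)
        = 4*p/(Real.sqrt (8*p/(u*e))*u) := by field_simp; ring
    have hsq : (2*(p*e/u)) = (4*p/(Real.sqrt (8*p/(u*e))*u))^2 := by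
      simp only [div_pow, mul_pow, hk2]
      field_simp
      ring
    rw [hval, hsq, Real.sqrt_sq (by positivity)]
  rw [h1, h2]
  have h8 : Real.sqrt (8*(p*e/u)) = Real.sqrt 8 * Real.sqrt (p*e/u) :=
    Real.sqrt_mul (by norm_num) _
  have h2' : Real.sqrt (2*(p*e/u)) = Real.sqrt 2 * Real.sqrt (p*e/u) :=
    Real.sqrt_mul (by norm_num) _
  have h9 : Real.sqrt (9:ℝ) = 3 := by
    rw [show (9:ℝ) = 3^2 by norm_num, Real.sqrt_sq (by norm_num : (0:ℝ) ≤ 3)]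
  have hs8 : Real.sqrt 8 ≤ 3 := by
    rw [← h9]; exact Real.sqrt_le_sqrt (by norm_num)
  have h94 : Real.sqrt ((9:ℝ)/4) = 3/2 := by
    rw [show (9:ℝ)/4 = (3/2)^2 by norm_num, Real.sqrt_sq (by norm_num : (0:ℝ) ≤ 3/2)]
  have hs2 : Real.sqrt 2 ≤ 3/2 := by
    rw [← h94]; exact Real.sqrt_le_sqrt (by norm_num)
  have hsX : 0 ≤ Real.sqrt (p*e/u) := Real.sqrt_nonneg _
  rw [h8, h2']
  nlinarith [hsX, hs8, hs2, Real.sqrt_nonneg (8:ℝ), Real.sqrt_nonneg (2:ℝ)]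


/-- If at most `p` players have a nontrivial action set and `πp` is an ε-PNE-SG, then the
truncated policy with `k = sqrt(8p/((1-γ)ε))` is a `6·sqrt(pε/(1-γ))`-perfect well-supported
Nash equilibrium in stage games. -/
theorem truncation_gives_PWSNE_SG (γ : ℝ) (hγ0 : 0 ≤ γ) (hγ1 : γ < 1)
    (P : S → (∀ i, A i) → S → ℝ) (hP : IsKernel P)
    (πp : ∀ i : Fin m, S → A i → ℝ) (hπp : ∀ i, IsPolicy (πp i))
    (r : Fin m → S → (∀ i, A i) → ℝ) (hr : ∀ i s a, |r i s a| ≤ 1)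
    (p : ℕ)
    (hp : ((Finset.univ : Finset (Fin m)).filter (fun i => 1 < Fintype.card (A i))).card ≤ p)
    (ε : ℝ) (hε : 0 < ε)
    (hPNESG : ∀ i s, stageGap γ P πp (r i) i s ≤ ε) :
    ∀ (i : Fin m) (s : S),
      (⨆ aᵢ : A i,
          Qbar γ P (truncPolicy γ P πp r (Real.sqrt (8 * p / ((1 - γ) * ε)))) (r i) i s aᵢ)
        - (⨅ aᵢ : {a : A i //
              0 < truncPolicy γ P πp r (Real.sqrt (8 * p / ((1 - γ) * ε))) i s a},
            Qbar γ P (truncPolicy γ P πp r (Real.sqrt (8 * p / ((1 - γ) * ε)))) (r i) i s aᵢ.1)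
        ≤ 6 * Real.sqrt (p * ε / (1 - γ)) := by
  classical
  intro i s
  set k := Real.sqrt (8 * p / ((1 - γ) * ε)) with hkdef
  set π' := truncPolicy γ P πp r k with hπ'def
  have h1γ : (0:ℝ) < 1 - γ := by linarith
  have hRHS0 : 0 ≤ 6 * Real.sqrt (p * ε / (1 - γ)) := by positivity
  have hknn : 0 ≤ k := Real.sqrt_nonneg _
  have hsub : ∀ j, IsSub (π' j) := fun j => trunc_isSub hπp j
  by_cases hbig : 2 ≤ 6 * Real.sqrt (p * ε / (1 - γ))
  · -- crude bound: |Qbar| ≤ 1 always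
    have hQb : ∀ a : A i, |Qbar γ P π' (r i) i s a| ≤ 1 :=
      fun a => abs_Qbar_le_one hγ0 hγ1 hP hsub (hr i) i s a
    have hsup : (⨆ a : A i, Qbar γ P π' (r i) i s a) ≤ 1 :=
      ciSup_le fun a => le_trans (le_abs_self _) (hQb a)
    by_cases hne : Nonempty {a : A i // 0 < π' i s a}
    · have hinf : (-1:ℝ) ≤ ⨅ a : {a : A i // 0 < π' i s a}, Qbar γ P π' (r i) i s a.1 :=
        le_ciInf fun a => (abs_le.mp (hQb a.1)).1
      linarith
    · haveI := not_nonempty_iff.mp hne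
      rw [Real.iInf_of_isEmpty]
      linarith
  · push_neg at hbig
    by_cases hcard : Fintype.card (A i) ≤ 1
    · -- trivial player: sup = inf
      haveI hss : Subsingleton (A i) := Fintype.card_le_one_iff_subsingleton.mp hcard
      obtain ⟨a₀⟩ := (inferInstance : Nonempty (A i))
      haveI : Unique (A i) := uniqueOfSubsingleton a₀
      have heq : π' i = πp i := trunc_eq_self hγ0 hγ1 hP hπp i (hr i) hcard hknn
      have hpos : 0 < π' i s default := by
        rw [heq]
        have h1 : ∑ a, πp i s a = πp i s default := Fintype.sum_unique _
        have := (hπp i).2 s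
        rw [h1] at this
        rw [this]; norm_num
      haveI hne : Nonempty {a : A i // 0 < π' i s a} := ⟨⟨default, hpos⟩⟩
      have hsup : (⨆ a : A i, Qbar γ P π' (r i) i s a) ≤ Qbar γ P π' (r i) i s default :=
        ciSup_le fun b => le_of_eq (congrArg _ (Subsingleton.elim b default))
      have hinf : Qbar γ P π' (r i) i s default
          ≤ ⨅ a : {a : A i // 0 < π' i s a}, Qbar γ P π' (r i) i s a.1 :=
        le_ciInf fun b => le_of_eq (congrArg _ (Subsingleton.elim default b.1))
      linarith
    · -- main case
      push_neg at hcard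
      have hifil : i ∈ Finset.univ.filter (fun j => 1 < Fintype.card (A j)) :=
        Finset.mem_filter.mpr ⟨Finset.mem_univ i, hcard⟩
      have hp1n : 1 ≤ p := le_trans (Finset.card_pos.mpr ⟨i, hifil⟩) hp
      have hp1 : (1:ℝ) ≤ (p:ℝ) := by exact_mod_cast hp1n
      have hp0 : (0:ℝ) < (p:ℝ) := by linarith
      have hX9 : (p:ℝ) * ε / (1 - γ) < 1/9 := by
        have hsq := Real.sq_sqrt (show (0:ℝ) ≤ (p:ℝ) * ε / (1 - γ) by positivity)
        nlinarith [Real.sqrt_nonneg ((p:ℝ) * ε / (1 - γ))]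
      have huε : (1 - γ) * ε < 1/9 := by
        have h1 : (p:ℝ) * ε < (1 - γ)/9 := by
          rw [div_lt_iff₀ h1γ] at hX9
          nlinarith
        nlinarith
      have hk2 : 2 ≤ k := by
        have hq : (4:ℝ) ≤ 8 * p / ((1 - γ) * ε) := by
          rw [le_div_iff₀ (by positivity)]
          nlinarith
        have h4 : Real.sqrt 4 = 2 := by
          rw [show (4:ℝ) = 2^2 by norm_num, Real.sqrt_sq (by norm_num : (0:ℝ) ≤ 2)]
        rw [hkdef, ← h4]
        exact Real.sqrt_le_sqrt hq
      have hk0 : (0:ℝ) < k := by linarith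
      -- TV bound for the joint policies
      have hβ : ∀ t, ∑ a : ∀ j, A j, |prodPolicy π' t a - prodPolicy πp t a|
          ≤ (p:ℝ) * (2/k) := by
        intro t
        have htv := prod_tv (f := fun j => πp j t) (g := fun j => π' j t)
          (fun j a => (hπp j).1 t a) (fun j => ((hπp j).2 t).le)
          (fun j a => (hsub j).1 t a) (fun j => (hsub j).2 t)
        have hsum : ∑ j, ∑ b, |π' j t b - πp j t b| ≤ (p:ℝ) * (2/k) := by
          have hz : ∀ j ∈ Finset.univ, j ∉ Finset.univ.filter (fun j => 1 < Fintype.card (A j))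
              → (∑ b, |π' j t b - πp j t b|) = 0 := by
            intro j _ hj
            have hcardj : Fintype.card (A j) ≤ 1 := by
              by_contra hcj
              exact hj (Finset.mem_filter.mpr ⟨Finset.mem_univ j, lt_of_not_ge hcj⟩)
            have heq : π' j = πp j := trunc_eq_self hγ0 hγ1 hP hπp j (hr j) hcardj hknn
            rw [heq]
            simp
          rw [← Finset.sum_subset (Finset.filter_subset _ Finset.univ) hz]
          calc ∑ j ∈ Finset.univ.filter (fun j => 1 < Fintype.card (A j)),
                ∑ b, |π' j t b - πp j t b|
              ≤ ∑ j ∈ Finset.univ.filter (fun j => 1 < Fintype.card (A j)), 2/k :=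
                Finset.sum_le_sum (fun j _ => trunc_tv hγ0 hγ1 hP hπp j (hr j) t hk2)
            _ = ((Finset.univ.filter (fun j => 1 < Fintype.card (A j))).card : ℝ) * (2/k) := by
                rw [Finset.sum_const, nsmul_eq_mul]
            _ ≤ (p:ℝ) * (2/k) := by
                apply mul_le_mul_of_nonneg_right _ (by positivity)
                exact_mod_cast hp
        exact le_trans htv hsum
      have hQc : ∀ a : A i, |Qbar γ P π' (r i) i s a - Qbar γ P πp (r i) i s a|
          ≤ ((p:ℝ) * (2/k)) / (1 - γ) :=
        fun a => Qbar_close hγ0 hγ1 hP hπp hsub (hr i) hβ i s a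
      have hρε : stageGap γ P πp (r i) i s ≤ ε := hPNESG i s
      have hρ0 : 0 ≤ stageGap γ P πp (r i) i s :=
        stageGap_nonneg hγ0 hγ1 hP hπp (hr i) i s
      have hsup : (⨆ a : A i, Qbar γ P π' (r i) i s a)
          ≤ (⨆ a : A i, Qbar γ P πp (r i) i s a) + ((p:ℝ) * (2/k)) / (1 - γ) := by
        apply ciSup_le
        intro a
        have h1 := (abs_le.mp (hQc a)).2
        have h2 := Qbar_le_sup (γ := γ) (P := P) (πp := πp) (r := r i) i s a
        linarith
      have hlow : ∀ a : A i, 0 < π' i s a → (⨆ b : A i, Qbar γ P πp (r i) i s b)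
          - k * ε - ((p:ℝ) * (2/k)) / (1 - γ) ≤ Qbar γ P π' (r i) i s a := by
        intro a ha
        have hcond := trunc_support (k := k) ha
        have h1 := (abs_le.mp (hQc a)).1
        have h2 : k * stageGap γ P πp (r i) i s ≤ k * ε :=
          mul_le_mul_of_nonneg_left hρε hknn
        linarith
      have hne : Nonempty {a : A i // 0 < π' i s a} := by
        have hsum1 := trunc_sum_one hγ0 hγ1 hP hπp i (hr i) s hk2
        by_contra hcon
        rw [not_nonempty_iff] at hcon
        have hz : ∀ a : A i, π' i s a = 0 := by
          intro a
          rcases eq_or_lt_of_le (trunc_nonneg hπp i s a) with h | h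
          · exact h.symm
          · exact (hcon.false ⟨a, h⟩).elim
        rw [Finset.sum_eq_zero (fun a _ => hz a)] at hsum1
        norm_num at hsum1
      haveI := hne
      have hinf : (⨆ b : A i, Qbar γ P πp (r i) i s b) - k * ε - ((p:ℝ) * (2/k)) / (1 - γ)
          ≤ ⨅ a : {a : A i // 0 < π' i s a}, Qbar γ P π' (r i) i s a.1 :=
        le_ciInf fun a => hlow a.1 a.2
      have hnum : k * ε + 2 * (((p:ℝ) * (2/k)) / (1 - γ)) ≤ 6 * Real.sqrt (p * ε / (1 - γ)) := by
        have := numeric (u := 1 - γ) (e := ε) (p := (p:ℝ)) h1γ (by linarith) hε hp1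
        rw [hkdef]
        convert this using 3 <;> ring_nf
      calc (⨆ a : A i, Qbar γ P π' (r i) i s a)
            - ⨅ a : {a : A i // 0 < π' i s a}, Qbar γ P π' (r i) i s a.1
          ≤ ((⨆ a : A i, Qbar γ P πp (r i) i s a) + ((p:ℝ) * (2/k)) / (1 - γ))
            - ((⨆ b : A i, Qbar γ P πp (r i) i s b) - k * ε - ((p:ℝ) * (2/k)) / (1 - γ)) :=
            sub_le_sub hsup hinf
        _ = k * ε + 2 * (((p:ℝ) * (2/k)) / (1 - γ)) := by ring
        _ ≤ 6 * Real.sqrt (p * ε / (1 - γ)) := hnum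

end Stmt5
end

section
/- (G_← gate gadget) Let G be a γ-discounted turn-based stochastic game with binary actions at each state and a zero-reward absorbing sink. Suppose a state v satisfies: both actions at v transition deterministically to the sink, and the controller of v receives reward b for action 1 and reward 1-b for action 0, where b ∈ {0,1}. Then for any policy π : S → [0,1] under which v is ε-unimprovable with ε < (1-γ)/2, it holds that π(v) = b. -/
open scoped BigOperators

namespace Stmt7

variable {S : Type*} [Fintype S] [DecidableEq S]

/-- Transition kernel of a turn-based game with binary actions at each state. -/
def IsBKernel (P : S → Bool → S → ℝ) : Prop :=
  (∀ s a s', 0 ≤ P s a s') ∧ ∀ s a, ∑ s', P s a s' = 1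

/-- A stationary policy of a binary-action turn-based game, represented by the probability
`π s ∈ [0,1]` that the controller of state `s` plays action `1` (`true`). -/
def IsBPolicy (π : S → ℝ) : Prop :=
  ∀ s, 0 ≤ π s ∧ π s ≤ 1

noncomputable def bStep (P : S → Bool → S → ℝ) (π : S → ℝ) (d : S → ℝ) : S → ℝ :=
  fun s' => ∑ s, d s * (π s * P s true s' + (1 - π s) * P s false s')

noncomputable def bDist (P : S → Bool → S → ℝ) (π : S → ℝ) (s₀ : S) (h : ℕ) : S → ℝ :=
  (bStep P π)^[h] (fun s => if s = s₀ then (1 : ℝ) else 0)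

/-- Normalized discounted value of the player with reward function `r` under policy `π`. -/
noncomputable def bVal (γ : ℝ) (P : S → Bool → S → ℝ) (π : S → ℝ) (r : S → Bool → ℝ)
    (s₀ : S) : ℝ :=
  (1 - γ) * ∑' h : ℕ, γ ^ h *
    ∑ s, bDist P π s₀ h s * (π s * r s true + (1 - π s) * r s false)

/-- Normalized discounted action-value for the controller of `s` (with reward function `r`). -/
noncomputable def bQ (γ : ℝ) (P : S → Bool → S → ℝ) (π : S → ℝ) (r : S → Bool → ℝ)
    (s : S) (a : Bool) : ℝ :=
  (1 - γ) * r s a + γ * ∑ s', P s a s' * bVal γ P π r s'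

/-- `s` is ε-unimprovable under `π` (for the controller's reward function `r`):
`max_{a'} Q(s,a') - min_{a : π(s) ≠ 1-a} Q(s,a) ≤ ε`, where the min ranges over actions
played with positive probability. -/
def Unimp (ε γ : ℝ) (P : S → Bool → S → ℝ) (π : S → ℝ) (r : S → Bool → ℝ) (s : S) : Prop :=
  ∀ a' a : Bool, (if a then π s ≠ 0 else π s ≠ 1) →
    bQ γ P π r s a' - bQ γ P π r s a ≤ ε

/-- G_← gate gadget: if both actions at `v` lead to the zero-reward absorbing sink and the
controller of `v` gets reward `b` for action 1 and `1-b` for action 0 (with `b ∈ {0,1}`),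
then any policy under which `v` is ε-unimprovable with `ε < (1-γ)/2` satisfies `π(v) = b`. -/
theorem g_gets_gadget (γ : ℝ) (hγ0 : 0 ≤ γ) (hγ1 : γ < 1)
    (P : S → Bool → S → ℝ) (hP : IsBKernel P)
    (v z : S) (b : ℝ) (hb : b = 0 ∨ b = 1)
    (hPv : ∀ a s', P v a s' = if s' = z then 1 else 0)
    (hPz : ∀ a s', P z a s' = if s' = z then 1 else 0)
    (r : S → Bool → ℝ)
    (hrv1 : r v true = b) (hrv0 : r v false = 1 - b)
    (hrz : ∀ a, r z a = 0)
    (π : S → ℝ) (hπ : IsBPolicy π)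
    (ε : ℝ) (hε : ε < (1 - γ) / 2)
    (hunimp : Unimp ε γ P π r v) :
    π v = b := by
  -- the distribution starting at z stays at z
  have hdist : ∀ h, bDist P π z h = fun s => if s = z then (1 : ℝ) else 0 := by
    intro h
    induction h with
    | zero => rfl
    | succ n ih =>
      have : bDist P π z (n + 1) = bStep P π (bDist P π z n) := by
        simp [bDist, Function.iterate_succ_apply']
      rw [this, ih]
      funext s'
      simp only [bStep]
      rw [Finset.sum_eq_single z]
      · simp [hPz]; split <;> ring
      · intro s _ hs; simp [hs]
      · intro hz; exact absurd (Finset.mem_univ z) hz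
  -- value at z is zero
  have hvalz : bVal γ P π r z = 0 := by
    unfold bVal
    have : ∀ h : ℕ, γ ^ h *
        ∑ s, bDist P π z h s * (π s * r s true + (1 - π s) * r s false) = 0 := by
      intro h
      rw [hdist h]
      rw [Finset.sum_eq_single z]
      · simp [hrz]
      · intro s _ hs; simp [hs]
      · intro hz; exact absurd (Finset.mem_univ z) hz
    simp only [this, tsum_zero, mul_zero]
  -- Q-values at v
  have hQ : ∀ a, bQ γ P π r v a = (1 - γ) * r v a := by
    intro a
    unfold bQ
    have : ∑ s', P v a s' * bVal γ P π r s' = 0 := by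
      rw [Finset.sum_eq_single z]
      · simp [hvalz]
      · intro s _ hs; simp [hPv, hs]
      · intro hz; exact absurd (Finset.mem_univ z) hz
    rw [this]; ring
  have h1γ : 0 < 1 - γ := by linarith
  rcases hb with hb | hb
  · -- b = 0 : show π v = 0
    subst hb
    by_contra hne
    have := hunimp false true (by simpa using hne)
    rw [hQ, hQ, hrv0, hrv1] at this
    have : 1 - γ ≤ ε := by linarith
    linarith
  · -- b = 1 : show π v = 1
    subst hb
    by_contra hne
    have := hunimp true false (by simpa using hne)
    rw [hQ, hQ, hrv0, hrv1] at this
    have : 1 - γ ≤ ε := by linarith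
    linarith

end Stmt7
end

section
/- (G_< gate gadget) Suppose the comparison gate G_<(|v_1,v_2|v_3) embeds in a γ-discounted turn-based stochastic game via states (v_1,v_2,v_3,w) and constant β with |β| ≤ 1-γ, and suppose γ|β|ε - 2γ² > ε' for ε, ε' ∈ (0,1). Then for any policy π : S → [0,1] under which v_3 and w are each ε'-unimprovable: if π(v_1) ≤ π(v_2) - ε then π(v_3) = 1, and if π(v_1) ≥ π(v_2) + ε then π(v_3) = 0. -/
open scoped BigOperators

namespace Stmt8

variable {S : Type*} [Fintype S] [DecidableEq S]

/-- Transition kernel of a turn-based game with binary actions at each state. -/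
def IsBKernel (P : S → Bool → S → ℝ) : Prop :=
  (∀ s a s', 0 ≤ P s a s') ∧ ∀ s a, ∑ s', P s a s' = 1

/-- A stationary policy of a binary-action turn-based game, represented by the probability
`π s ∈ [0,1]` that the controller of state `s` plays action `1` (`true`). -/
def IsBPolicy (π : S → ℝ) : Prop :=
  ∀ s, 0 ≤ π s ∧ π s ≤ 1

noncomputable def bStep (P : S → Bool → S → ℝ) (π : S → ℝ) (d : S → ℝ) : S → ℝ :=
  fun s' => ∑ s, d s * (π s * P s true s' + (1 - π s) * P s false s')

noncomputable def bDist (P : S → Bool → S → ℝ) (π : S → ℝ) (s₀ : S) (h : ℕ) : S → ℝ :=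
  (bStep P π)^[h] (fun s => if s = s₀ then (1 : ℝ) else 0)

/-- Normalized discounted value of the player with reward function `r` under policy `π`. -/
noncomputable def bVal (γ : ℝ) (P : S → Bool → S → ℝ) (π : S → ℝ) (r : S → Bool → ℝ)
    (s₀ : S) : ℝ :=
  (1 - γ) * ∑' h : ℕ, γ ^ h *
    ∑ s, bDist P π s₀ h s * (π s * r s true + (1 - π s) * r s false)

/-- Normalized discounted action-value for the controller of `s` (with reward function `r`). -/
noncomputable def bQ (γ : ℝ) (P : S → Bool → S → ℝ) (π : S → ℝ) (r : S → Bool → ℝ)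
    (s : S) (a : Bool) : ℝ :=
  (1 - γ) * r s a + γ * ∑ s', P s a s' * bVal γ P π r s'

/-- `s` is ε-unimprovable under `π` (for the controller's reward function `r`):
`max_{a'} Q(s,a') - min_{a : π(s) ≠ 1-a} Q(s,a) ≤ ε`, where the min ranges over actions
played with positive probability. -/
def Unimp (ε γ : ℝ) (P : S → Bool → S → ℝ) (π : S → ℝ) (r : S → Bool → ℝ) (s : S) : Prop :=
  ∀ a' a : Bool, (if a then π s ≠ 0 else π s ≠ 1) →
    bQ γ P π r s a' - bQ γ P π r s a ≤ ε

section Helpers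

variable {γ : ℝ} {P : S → Bool → S → ℝ} {π : S → ℝ} {r : S → Bool → ℝ}

lemma bDist_props (hP : IsBKernel P) (hπ : IsBPolicy π) (s₀ : S) (h : ℕ) :
    (∀ s, 0 ≤ bDist P π s₀ h s) ∧ (∑ s, bDist P π s₀ h s = 1) := by
  induction h with
  | zero =>
    constructor
    · intro s
      simp only [bDist, Function.iterate_zero, id_eq]
      split <;> norm_num
    · simp [bDist]
  | succ n ih =>
    have hstep : bDist P π s₀ (n + 1) = bStep P π (bDist P π s₀ n) := by
      simp [bDist, Function.iterate_succ_apply']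
    constructor
    · intro s
      rw [hstep]
      apply Finset.sum_nonneg
      intro i _
      have h1 := (hπ i).1
      have h2 := (hπ i).2
      have h3 := hP.1 i true s
      have h4 := hP.1 i false s
      have h5 := ih.1 i
      have : 0 ≤ π i * P i true s + (1 - π i) * P i false s :=
        add_nonneg (mul_nonneg h1 h3) (mul_nonneg (by linarith) h4)
      exact mul_nonneg h5 this
    · rw [hstep]
      unfold bStep
      rw [Finset.sum_comm]
      have key : ∀ s, (∑ s', bDist P π s₀ n s *
          (π s * P s true s' + (1 - π s) * P s false s')) = bDist P π s₀ n s := by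
        intro s
        rw [← Finset.mul_sum, Finset.sum_add_distrib, ← Finset.mul_sum, ← Finset.mul_sum,
          hP.2 s true, hP.2 s false]
        ring
      simp_rw [key]
      exact ih.2

lemma bVal_approx (hγ0 : 0 ≤ γ) (hγ1 : γ < 1) (hP : IsBKernel P) (hπ : IsBPolicy π)
    (hr : ∀ s a, |r s a| ≤ 1) (s₀ : S) :
    |bVal γ P π r s₀ - (1 - γ) * (π s₀ * r s₀ true + (1 - π s₀) * r s₀ false)| ≤ γ := by
  have h1γ : (0:ℝ) < 1 - γ := by linarith
  have hfb : ∀ s : S, |π s * r s true + (1 - π s) * r s false| ≤ 1 := by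
    intro s
    have h1 := (hπ s).1
    have h2 := (hπ s).2
    calc |π s * r s true + (1 - π s) * r s false|
        ≤ |π s * r s true| + |(1 - π s) * r s false| := abs_add_le _ _
      _ = π s * |r s true| + (1 - π s) * |r s false| := by
          rw [abs_mul, abs_mul, abs_of_nonneg h1, abs_of_nonneg (by linarith : (0:ℝ) ≤ 1 - π s)]
      _ ≤ π s * 1 + (1 - π s) * 1 := by
          apply add_le_add
          · exact mul_le_mul_of_nonneg_left (hr s true) h1
          · exact mul_le_mul_of_nonneg_left (hr s false) (by linarith)
      _ = 1 := by ring
  have hTb : ∀ h : ℕ,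
      |∑ s, bDist P π s₀ h s * (π s * r s true + (1 - π s) * r s false)| ≤ 1 := by
    intro h
    obtain ⟨hd0, hd1⟩ := bDist_props hP hπ s₀ h
    calc |∑ s, bDist P π s₀ h s * (π s * r s true + (1 - π s) * r s false)|
        ≤ ∑ s, |bDist P π s₀ h s * (π s * r s true + (1 - π s) * r s false)| :=
          Finset.abs_sum_le_sum_abs _ _
      _ ≤ ∑ s, bDist P π s₀ h s := by
          apply Finset.sum_le_sum
          intro s _
          rw [abs_mul, abs_of_nonneg (hd0 s)]
          exact mul_le_of_le_one_right (hd0 s) (hfb s)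
      _ = 1 := hd1
  have hnb : ∀ h : ℕ, ‖γ ^ h *
      ∑ s, bDist P π s₀ h s * (π s * r s true + (1 - π s) * r s false)‖ ≤ γ ^ h := by
    intro h
    rw [Real.norm_eq_abs, abs_mul, abs_pow, abs_of_nonneg hγ0]
    exact mul_le_of_le_one_right (pow_nonneg hγ0 h) (hTb h)
  have hsum : Summable (fun h : ℕ => γ ^ h *
      ∑ s, bDist P π s₀ h s * (π s * r s true + (1 - π s) * r s false)) :=
    Summable.of_norm_bounded (summable_geometric_of_lt_one hγ0 hγ1) hnb
  have h0 : γ ^ 0 * ∑ s, bDist P π s₀ 0 s * (π s * r s true + (1 - π s) * r s false)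
      = π s₀ * r s₀ true + (1 - π s₀) * r s₀ false := by
    simp [bDist, ite_mul, Finset.sum_ite_eq']
  have hval : bVal γ P π r s₀ = (1 - γ) * ((π s₀ * r s₀ true + (1 - π s₀) * r s₀ false) +
      ∑' h : ℕ, γ ^ (h + 1) *
        ∑ s, bDist P π s₀ (h + 1) s * (π s * r s true + (1 - π s) * r s false)) := by
    rw [bVal, Summable.tsum_eq_zero_add hsum, h0]
  have hgeo : HasSum (fun h : ℕ => γ ^ (h + 1)) (γ * (1 - γ)⁻¹) := by
    have := (hasSum_geometric_of_lt_one hγ0 hγ1).mul_left γ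
    rw [show (fun h : ℕ => γ ^ (h + 1)) = fun i => γ * γ ^ i from funext fun h => by ring]
    exact this
  have htail : ‖∑' h : ℕ, γ ^ (h + 1) *
      ∑ s, bDist P π s₀ (h + 1) s * (π s * r s true + (1 - π s) * r s false)‖
      ≤ γ * (1 - γ)⁻¹ := by
    apply tsum_of_norm_bounded hgeo
    intro h
    exact hnb (h + 1)
  rw [hval]
  have heq : (1 - γ) * ((π s₀ * r s₀ true + (1 - π s₀) * r s₀ false) +
      ∑' h : ℕ, γ ^ (h + 1) *
        ∑ s, bDist P π s₀ (h + 1) s * (π s * r s true + (1 - π s) * r s false))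
      - (1 - γ) * (π s₀ * r s₀ true + (1 - π s₀) * r s₀ false)
      = (1 - γ) * ∑' h : ℕ, γ ^ (h + 1) *
        ∑ s, bDist P π s₀ (h + 1) s * (π s * r s true + (1 - π s) * r s false) := by
    ring
  rw [heq, abs_mul, abs_of_pos h1γ]
  calc (1 - γ) * |∑' h : ℕ, γ ^ (h + 1) *
        ∑ s, bDist P π s₀ (h + 1) s * (π s * r s true + (1 - π s) * r s false)|
      ≤ (1 - γ) * (γ * (1 - γ)⁻¹) := by
        apply mul_le_mul_of_nonneg_left _ h1γ.le
        simpa [Real.norm_eq_abs] using htail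
    _ = γ := by field_simp
 
lemma bVal_sink {z : S} (hPz : ∀ (a : Bool) s', P z a s' = if s' = z then 1 else 0)
    (hrz : ∀ a, r z a = 0) : bVal γ P π r z = 0 := by
  have hd : ∀ h, bDist P π z h = fun s => if s = z then (1 : ℝ) else 0 := by
    intro h
    induction h with
    | zero => rfl
    | succ n ih =>
      have hstep : bDist P π z (n + 1) = bStep P π (bDist P π z n) := by
        simp [bDist, Function.iterate_succ_apply']
      rw [hstep, ih]
      funext s'
      simp only [bStep, ite_mul, one_mul, zero_mul, Finset.sum_ite_eq', Finset.mem_univ,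
        if_true]
      rw [hPz true s', hPz false s']
      by_cases hs : s' = z <;> simp [hs]
  rw [bVal]
  have hT : ∀ h : ℕ, γ ^ h * ∑ s, bDist P π z h s *
      (π s * r s true + (1 - π s) * r s false) = 0 := by
    intro h
    rw [hd h]
    have : ∑ s, (if s = z then (1:ℝ) else 0) * (π s * r s true + (1 - π s) * r s false)
        = 0 := by
      simp [ite_mul, Finset.sum_ite_eq', hrz]
    rw [this, mul_zero]
  simp_rw [hT]
  simp

end Helpers

/-- G_< gate gadget: if the comparison gate embeds via `(v1, v2, v3, w)` and constant `β`
with `|β| ≤ 1-γ` and `γ|β|ε - 2γ² > ε'`, then for any policy under which `v3` and `w` are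
ε'-unimprovable: `π(v1) ≤ π(v2) - ε → π(v3) = 1` and `π(v1) ≥ π(v2) + ε → π(v3) = 0`. -/
theorem g_lt_gadget (γ ε ε' β : ℝ) (hγ0 : 0 ≤ γ) (hγ1 : γ < 1)
    (hε : ε ∈ Set.Ioo (0:ℝ) 1) (hε' : ε' ∈ Set.Ioo (0:ℝ) 1)
    (hβ : |β| ≤ 1 - γ) (hcond : γ * |β| * ε - 2 * γ ^ 2 > ε')
    (P : S → Bool → S → ℝ) (hP : IsBKernel P)
    (v1 v2 v3 w z : S)
    (hPz : ∀ a s', P z a s' = if s' = z then 1 else 0)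
    (hPw0 : ∀ s', P w false s' = if s' = v1 then 1 else 0)
    (hPw1 : ∀ s', P w true s' = if s' = v2 then 1 else 0)
    (hPv31 : ∀ s', P v3 true s' = if s' = w then 1 else 0)
    (hPv30 : ∀ s', P v3 false s' = if s' = z then 1 else 0)
    (rw rv3 : S → Bool → ℝ)
    (hrwB : ∀ s a, |rw s a| ≤ 1) (hrv3B : ∀ s a, |rv3 s a| ≤ 1)
    (hrw1 : rw v1 true = β / (1 - γ)) (hrw2 : rw v2 true = β / (1 - γ))
    (hrw10 : rw v1 false = 0) (hrw20 : rw v2 false = 0)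
    (hrww : ∀ a, rw w a = 0) (hrwz : ∀ a, rw z a = 0)
    (hrv3w1 : rv3 w true = β / (1 - γ)) (hrv3w0 : rv3 w false = -β / (1 - γ))
    (hrv3v : ∀ a, rv3 v3 a = 0) (hrv3z : ∀ a, rv3 z a = 0)
    (π : S → ℝ) (hπ : IsBPolicy π)
    (hw : Unimp ε' γ P π rw w) (hv3 : Unimp ε' γ P π rv3 v3) :
    (π v1 ≤ π v2 - ε → π v3 = 1) ∧ (π v1 ≥ π v2 + ε → π v3 = 0) := by
  have h1γ : (0:ℝ) < 1 - γ := by linarith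
  have h1γ' : (1:ℝ) - γ ≠ 0 := ne_of_gt h1γ
  have hεle : ε ≤ 1 := le_of_lt hε.2
  -- value approximations
  have hA1 : |bVal γ P π rw v1 - β * π v1| ≤ γ := by
    have h := bVal_approx hγ0 hγ1 hP hπ hrwB v1
    rw [hrw1, hrw10] at h
    have he : (1 - γ) * (π v1 * (β / (1 - γ)) + (1 - π v1) * 0) = β * π v1 := by
      field_simp
      ring
    rwa [he] at h
  have hA2 : |bVal γ P π rw v2 - β * π v2| ≤ γ := by
    have h := bVal_approx hγ0 hγ1 hP hπ hrwB v2
    rw [hrw2, hrw20] at h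
    have he : (1 - γ) * (π v2 * (β / (1 - γ)) + (1 - π v2) * 0) = β * π v2 := by
      field_simp
      ring
    rwa [he] at h
  have hA3 : |bVal γ P π rv3 w - β * (2 * π w - 1)| ≤ γ := by
    have h := bVal_approx hγ0 hγ1 hP hπ hrv3B w
    rw [hrv3w1, hrv3w0] at h
    have he : (1 - γ) * (π w * (β / (1 - γ)) + (1 - π w) * (-β / (1 - γ)))
        = β * (2 * π w - 1) := by
      field_simp
      ring
    rwa [he] at h
  have hVz : bVal γ P π rv3 z = 0 := bVal_sink hPz hrv3z
  -- Q-value computations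
  have hQwt : bQ γ P π rw w true = γ * bVal γ P π rw v2 := by
    have hs : ∑ s', P w true s' * bVal γ P π rw s' = bVal γ P π rw v2 := by
      simp [hPw1, ite_mul, Finset.sum_ite_eq']
    rw [bQ, hrww, hs]
    ring
  have hQwf : bQ γ P π rw w false = γ * bVal γ P π rw v1 := by
    have hs : ∑ s', P w false s' * bVal γ P π rw s' = bVal γ P π rw v1 := by
      simp [hPw0, ite_mul, Finset.sum_ite_eq']
    rw [bQ, hrww, hs]
    ring
  have hQ3t : bQ γ P π rv3 v3 true = γ * bVal γ P π rv3 w := by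
    have hs : ∑ s', P v3 true s' * bVal γ P π rv3 s' = bVal γ P π rv3 w := by
      simp [hPv31, ite_mul, Finset.sum_ite_eq']
    rw [bQ, hrv3v, hs]
    ring
  have hQ3f : bQ γ P π rv3 v3 false = 0 := by
    have hs : ∑ s', P v3 false s' * bVal γ P π rv3 s' = bVal γ P π rv3 z := by
      simp [hPv30, ite_mul, Finset.sum_ite_eq']
    rw [bQ, hrv3v, hs, hVz]
    ring
  -- consequences of unimprovability
  have keyw1 : γ * bVal γ P π rw v2 - γ * bVal γ P π rw v1 > ε' → π w = 1 := by
    intro h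
    by_contra hne
    have := hw true false (by simpa using hne)
    rw [hQwt, hQwf] at this
    linarith
  have keyw0 : γ * bVal γ P π rw v1 - γ * bVal γ P π rw v2 > ε' → π w = 0 := by
    intro h
    by_contra hne
    have := hw false true (by simpa using hne)
    rw [hQwt, hQwf] at this
    linarith
  have key1 : γ * bVal γ P π rv3 w > ε' → π v3 = 1 := by
    intro h
    by_contra hne
    have := hv3 true false (by simpa using hne)
    rw [hQ3t, hQ3f] at this
    linarith
  have key0 : γ * bVal γ P π rv3 w < -ε' → π v3 = 0 := by
    intro h
    by_contra hne
    have := hv3 false true (by simpa using hne)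
    rw [hQ3t, hQ3f] at this
    linarith
  obtain ⟨e1l, e1u⟩ := abs_le.mp hA1
  obtain ⟨e2l, e2u⟩ := abs_le.mp hA2
  obtain ⟨e3l, e3u⟩ := abs_le.mp hA3
  have b1u : γ * (bVal γ P π rw v1 - β * π v1) ≤ γ * γ := mul_le_mul_of_nonneg_left e1u hγ0
  have b1l : γ * (-γ) ≤ γ * (bVal γ P π rw v1 - β * π v1) := mul_le_mul_of_nonneg_left e1l hγ0
  have b2u : γ * (bVal γ P π rw v2 - β * π v2) ≤ γ * γ := mul_le_mul_of_nonneg_left e2u hγ0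
  have b2l : γ * (-γ) ≤ γ * (bVal γ P π rw v2 - β * π v2) := mul_le_mul_of_nonneg_left e2l hγ0
  have b3u : γ * (bVal γ P π rv3 w - β * (2 * π w - 1)) ≤ γ * γ :=
    mul_le_mul_of_nonneg_left e3u hγ0
  have b3l : γ * (-γ) ≤ γ * (bVal γ P π rv3 w - β * (2 * π w - 1)) :=
    mul_le_mul_of_nonneg_left e3l hγ0
  constructor
  · intro hle
    have h1 : ε ≤ π v2 - π v1 := by linarith
    rcases abs_cases β with ⟨habs, hbs⟩ | ⟨habs, hbs⟩
    · -- β ≥ 0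
      rw [habs] at hcond
      have hm : γ * β * ε ≤ γ * β * (π v2 - π v1) :=
        mul_le_mul_of_nonneg_left h1 (mul_nonneg hγ0 hbs)
      have hw1 : π w = 1 := keyw1 (by linarith)
      rw [hw1] at b3l
      have hc2 : 0 ≤ γ * β * (1 - ε) := mul_nonneg (mul_nonneg hγ0 hbs) (by linarith)
      apply key1
      linarith [mul_self_nonneg γ]
    · -- β < 0
      rw [habs] at hcond
      have hm : γ * (-β) * ε ≤ γ * (-β) * (π v2 - π v1) :=
        mul_le_mul_of_nonneg_left h1 (mul_nonneg hγ0 (by linarith))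
      have hw0 : π w = 0 := keyw0 (by linarith)
      rw [hw0] at b3l
      have hc2 : 0 ≤ γ * (-β) * (1 - ε) := mul_nonneg (mul_nonneg hγ0 (by linarith)) (by linarith)
      apply key1
      linarith [mul_self_nonneg γ]
  · intro hge
    have h1 : ε ≤ π v1 - π v2 := by linarith
    rcases abs_cases β with ⟨habs, hbs⟩ | ⟨habs, hbs⟩
    · -- β ≥ 0
      rw [habs] at hcond
      have hm : γ * β * ε ≤ γ * β * (π v1 - π v2) :=
        mul_le_mul_of_nonneg_left h1 (mul_nonneg hγ0 hbs)
      have hw0 : π w = 0 := keyw0 (by linarith)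
      rw [hw0] at b3u
      have hc2 : 0 ≤ γ * β * (1 - ε) := mul_nonneg (mul_nonneg hγ0 hbs) (by linarith)
      apply key0
      linarith [mul_self_nonneg γ]
    · -- β < 0
      rw [habs] at hcond
      have hm : γ * (-β) * ε ≤ γ * (-β) * (π v1 - π v2) :=
        mul_le_mul_of_nonneg_left h1 (mul_nonneg hγ0 (by linarith))
      have hw1 : π w = 1 := keyw1 (by linarith)
      rw [hw1] at b3u
      have hc2 : 0 ≤ γ * (-β) * (1 - ε) := mul_nonneg (mul_nonneg hγ0 (by linarith)) (by linarith)
      apply key0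
      linarith [mul_self_nonneg γ]

end Stmt8
end

section
/- (G_{×,+} gate gadget) Suppose the gate G_{×,+}(α/(2β), ψ/(2β) | v_1, v_2 | v_3) embeds in a γ-discounted turn-based stochastic game via states (v_1,v_2,v_3,w) and constants (α,ψ,β) each of absolute value at most 1-γ, and suppose γ|β|ε - 2γ² > ε' with ε, ε' ∈ (0,1). Then for any policy π : S → [0,1] under which v_3 and w are ε'-unimprovable, π(v_3) = max{min{(α/(2β))π(v_1) + (ψ/(2β))π(v_2), 1}, 0} ± ε. -/
open scoped BigOperators

namespace Stmt9

variable {S : Type*} [Fintype S] [DecidableEq S]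

/-- Transition kernel of a turn-based game with binary actions at each state. -/
def IsBKernel (P : S → Bool → S → ℝ) : Prop :=
  (∀ s a s', 0 ≤ P s a s') ∧ ∀ s a, ∑ s', P s a s' = 1

/-- A stationary policy of a binary-action turn-based game, represented by the probability
`π s ∈ [0,1]` that the controller of state `s` plays action `1` (`true`). -/
def IsBPolicy (π : S → ℝ) : Prop :=
  ∀ s, 0 ≤ π s ∧ π s ≤ 1

noncomputable def bStep (P : S → Bool → S → ℝ) (π : S → ℝ) (d : S → ℝ) : S → ℝ :=
  fun s' => ∑ s, d s * (π s * P s true s' + (1 - π s) * P s false s')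

noncomputable def bDist (P : S → Bool → S → ℝ) (π : S → ℝ) (s₀ : S) (h : ℕ) : S → ℝ :=
  (bStep P π)^[h] (fun s => if s = s₀ then (1 : ℝ) else 0)

/-- Normalized discounted value of the player with reward function `r` under policy `π`. -/
noncomputable def bVal (γ : ℝ) (P : S → Bool → S → ℝ) (π : S → ℝ) (r : S → Bool → ℝ)
    (s₀ : S) : ℝ :=
  (1 - γ) * ∑' h : ℕ, γ ^ h *
    ∑ s, bDist P π s₀ h s * (π s * r s true + (1 - π s) * r s false)

/-- Normalized discounted action-value for the controller of `s` (with reward function `r`). -/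
noncomputable def bQ (γ : ℝ) (P : S → Bool → S → ℝ) (π : S → ℝ) (r : S → Bool → ℝ)
    (s : S) (a : Bool) : ℝ :=
  (1 - γ) * r s a + γ * ∑ s', P s a s' * bVal γ P π r s'

/-- `s` is ε-unimprovable under `π` (for the controller's reward function `r`):
`max_{a'} Q(s,a') - min_{a : π(s) ≠ 1-a} Q(s,a) ≤ ε`, where the min ranges over actions
played with positive probability. -/
def Unimp (ε γ : ℝ) (P : S → Bool → S → ℝ) (π : S → ℝ) (r : S → Bool → ℝ) (s : S) : Prop :=
  ∀ a' a : Bool, (if a then π s ≠ 0 else π s ≠ 1) →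
    bQ γ P π r s a' - bQ γ P π r s a ≤ ε

lemma bDist_prop {P : S → Bool → S → ℝ} {π : S → ℝ} (hP : IsBKernel P) (hπ : IsBPolicy π)
    (s₀ : S) (h : ℕ) :
    (∀ s, 0 ≤ bDist P π s₀ h s) ∧ ∑ s, bDist P π s₀ h s = 1 := by
  induction h with
  | zero =>
    constructor
    · intro s; simp [bDist]; positivity
    · simp [bDist]
  | succ n ih =>
    have hstep : bDist P π s₀ (n+1) = bStep P π (bDist P π s₀ n) := by
      simp [bDist, Function.iterate_succ_apply']
    constructor
    · intro s'
      rw [hstep]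
      apply Finset.sum_nonneg
      intro s _
      have h1 := (hπ s).1; have h2 := (hπ s).2
      have t1 := hP.1 s true s'; have t2 := hP.1 s false s'
      have d1 := ih.1 s
      have : 0 ≤ π s * P s true s' + (1 - π s) * P s false s' := by
        apply add_nonneg (mul_nonneg h1 t1) (mul_nonneg (by linarith) t2)
      exact mul_nonneg d1 this
    · rw [hstep]
      simp only [bStep]
      rw [Finset.sum_comm]
      have : ∀ s : S, ∑ s', bDist P π s₀ n s * (π s * P s true s' + (1 - π s) * P s false s')
          = bDist P π s₀ n s := by
        intro s
        rw [← Finset.mul_sum]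
        have : ∑ s', (π s * P s true s' + (1 - π s) * P s false s') = 1 := by
          rw [Finset.sum_add_distrib, ← Finset.mul_sum, ← Finset.mul_sum, hP.2 s true, hP.2 s false]
          ring
        rw [this, mul_one]
      simp_rw [this]
      exact ih.2

lemma inner_abs_le {P : S → Bool → S → ℝ} {π : S → ℝ} (hP : IsBKernel P) (hπ : IsBPolicy π)
    {r : S → Bool → ℝ} (hr : ∀ s a, |r s a| ≤ 1) (s₀ : S) (h : ℕ) :
    |∑ s, bDist P π s₀ h s * (π s * r s true + (1 - π s) * r s false)| ≤ 1 := by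
  have hd := bDist_prop hP hπ s₀ h
  calc |∑ s, bDist P π s₀ h s * (π s * r s true + (1 - π s) * r s false)|
      ≤ ∑ s, |bDist P π s₀ h s * (π s * r s true + (1 - π s) * r s false)| :=
        Finset.abs_sum_le_sum_abs _ _
    _ ≤ ∑ s, bDist P π s₀ h s := by
        apply Finset.sum_le_sum
        intro s _
        rw [abs_mul, abs_of_nonneg (hd.1 s)]
        have h1 := (hπ s).1; have h2 := (hπ s).2
        have : |π s * r s true + (1 - π s) * r s false| ≤ 1 := by
          calc |π s * r s true + (1 - π s) * r s false|
              ≤ |π s * r s true| + |(1 - π s) * r s false| := abs_add_le _ _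
            _ ≤ π s * 1 + (1 - π s) * 1 := by
                have e1 : |π s * r s true| ≤ π s * 1 := by
                  rw [abs_mul, abs_of_nonneg h1]; gcongr; exact hr s true
                have e2 : |(1 - π s) * r s false| ≤ (1 - π s) * 1 := by
                  rw [abs_mul, abs_of_nonneg (by linarith : (0:ℝ) ≤ 1 - π s)]
                  exact mul_le_mul_of_nonneg_left (hr s false) (by linarith)
                linarith
            _ = 1 := by ring
        calc bDist P π s₀ h s * |π s * r s true + (1 - π s) * r s false|
            ≤ bDist P π s₀ h s * 1 := by gcongr; exact hd.1 s
          _ = _ := mul_one _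
    _ = 1 := hd.2

lemma bVal_summable {P : S → Bool → S → ℝ} {π : S → ℝ} (hP : IsBKernel P) (hπ : IsBPolicy π)
    {γ : ℝ} (hγ0 : 0 ≤ γ) (hγ1 : γ < 1)
    {r : S → Bool → ℝ} (hr : ∀ s a, |r s a| ≤ 1) (s₀ : S) :
    Summable (fun h : ℕ => γ ^ h *
      ∑ s, bDist P π s₀ h s * (π s * r s true + (1 - π s) * r s false)) := by
  apply Summable.of_norm_bounded
    (summable_geometric_of_lt_one hγ0 hγ1)
  intro h
  rw [Real.norm_eq_abs, abs_mul, abs_pow, abs_of_nonneg hγ0]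
  calc γ ^ h * |∑ s, bDist P π s₀ h s * (π s * r s true + (1 - π s) * r s false)|
      ≤ γ ^ h * 1 := by gcongr; exact inner_abs_le hP hπ hr s₀ h
    _ = γ ^ h := mul_one _

lemma bVal_head {P : S → Bool → S → ℝ} {π : S → ℝ} (hP : IsBKernel P) (hπ : IsBPolicy π)
    {γ : ℝ} (hγ0 : 0 ≤ γ) (hγ1 : γ < 1)
    {r : S → Bool → ℝ} (hr : ∀ s a, |r s a| ≤ 1) (s₀ : S) :
    |bVal γ P π r s₀ - (1 - γ) * (π s₀ * r s₀ true + (1 - π s₀) * r s₀ false)| ≤ γ := by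
  set f : ℕ → ℝ := fun h : ℕ => γ ^ h *
      ∑ s, bDist P π s₀ h s * (π s * r s true + (1 - π s) * r s false) with hf
  have hsum : Summable f := bVal_summable hP hπ hγ0 hγ1 hr s₀
  have hsplit : ∑' h, f h = f 0 + ∑' h, f (h + 1) := Summable.tsum_eq_zero_add hsum
  have hf0 : f 0 = π s₀ * r s₀ true + (1 - π s₀) * r s₀ false := by
    simp [hf, bDist]
  have htail : |∑' h, f (h + 1)| ≤ γ / (1 - γ) := by
    have hsum' : Summable (fun h => f (h + 1)) := by
      exact (summable_nat_add_iff 1).2 hsum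
    have hg : Summable (fun h : ℕ => γ * γ ^ h) :=
      (summable_geometric_of_lt_one hγ0 hγ1).mul_left γ
    calc |∑' h, f (h + 1)| ≤ ∑' h : ℕ, γ * γ ^ h := by
          rw [← Real.norm_eq_abs]
          apply tsum_of_norm_bounded hg.hasSum
          intro h
          rw [Real.norm_eq_abs, hf]
          simp only
          rw [abs_mul, abs_pow, abs_of_nonneg hγ0, pow_succ]
          calc γ ^ h * γ * |∑ s, bDist P π s₀ (h+1) s * (π s * r s true + (1 - π s) * r s false)|
              ≤ γ ^ h * γ * 1 := by gcongr; exact inner_abs_le hP hπ hr s₀ (h+1)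
            _ = γ * γ ^ h := by ring
      _ = γ * (1 - γ)⁻¹ := by
          rw [tsum_mul_left, tsum_geometric_of_lt_one hγ0 hγ1]
      _ = γ / (1 - γ) := by rw [div_eq_mul_inv]
  have h1γ : (0:ℝ) < 1 - γ := by linarith
  have : bVal γ P π r s₀ - (1 - γ) * (π s₀ * r s₀ true + (1 - π s₀) * r s₀ false)
      = (1 - γ) * ∑' h, f (h + 1) := by
    rw [bVal, ← hf, hsplit, hf0]; ring
  rw [this, abs_mul, abs_of_nonneg h1γ.le]
  calc (1 - γ) * |∑' h, f (h + 1)| ≤ (1 - γ) * (γ / (1 - γ)) := by gcongr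
    _ = γ := by field_simp


lemma bVal_absorbing {P : S → Bool → S → ℝ} {π : S → ℝ} {γ : ℝ} {r : S → Bool → ℝ} {z : S}
    (hz : ∀ a s', P z a s' = if s' = z then 1 else 0) (hr : ∀ a, r z a = 0) :
    bVal γ P π r z = 0 := by
  have hd : ∀ h, bDist P π z h = fun s => if s = z then (1:ℝ) else 0 := by
    intro h
    induction h with
    | zero => simp [bDist]
    | succ n ih =>
      have : bDist P π z (n+1) = bStep P π (bDist P π z n) := by
        simp [bDist, Function.iterate_succ_apply']
      rw [this, ih]
      funext s'
      simp only [bStep]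
      rw [Finset.sum_eq_single z]
      · simp only [hz, mul_ite, mul_one, mul_zero, one_mul, if_true]
        split <;> ring
      · intro b _ hb; simp [hb]
      · intro hb; exact absurd (Finset.mem_univ z) hb
  have : ∀ h : ℕ, (γ ^ h * ∑ s, bDist P π z h s * (π s * r s true + (1 - π s) * r s false)) = 0 := by
    intro h
    rw [hd h]
    rw [Finset.sum_eq_single z]
    · simp [hr]
    · intro b _ hb; simp [hb]
    · intro hb; exact absurd (Finset.mem_univ z) hb
  simp only [bVal]
  rw [tsum_congr (fun h => this h)]
  simp

lemma bQ_det {P : S → Bool → S → ℝ} {π : S → ℝ} {γ : ℝ} {r : S → Bool → ℝ} {s t : S} {a : Bool}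
    (h : ∀ s', P s a s' = if s' = t then 1 else 0) :
    bQ γ P π r s a = (1 - γ) * r s a + γ * bVal γ P π r t := by
  simp only [bQ]
  congr 1
  congr 1
  rw [Finset.sum_eq_single t]
  · simp [h]
  · intro b _ hb; simp [h, hb]
  · intro hb; exact absurd (Finset.mem_univ t) hb



set_option maxHeartbeats 1000000 in
/-- G_{×,+} gate gadget: if the gate `G_{×,+}(α/(2β), ψ/(2β) | v1, v2 | v3)` embeds via
`(v1, v2, v3, w)` and constants `(α, ψ, β)` of absolute value at most `1-γ`, and
`γ|β|ε - 2γ² > ε'`, then for any policy under which `v3, w` are ε'-unimprovable,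
`π(v3) = max{min{(α/(2β))π(v1) + (ψ/(2β))π(v2), 1}, 0} ± ε`. -/
theorem g_times_plus_gadget (γ ε ε' α ψ β : ℝ) (hγ0 : 0 ≤ γ) (hγ1 : γ < 1)
    (hε : ε ∈ Set.Ioo (0:ℝ) 1) (hε' : ε' ∈ Set.Ioo (0:ℝ) 1)
    (hα : |α| ≤ 1 - γ) (hψ : |ψ| ≤ 1 - γ) (hβ : |β| ≤ 1 - γ)
    (hcond : γ * |β| * ε - 2 * γ ^ 2 > ε')
    (P : S → Bool → S → ℝ) (hP : IsBKernel P)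
    (v1 v2 v3 w z : S) (h12 : v1 ≠ v2) (h1z : v1 ≠ z) (h2z : v2 ≠ z)
    (hPz : ∀ a s', P z a s' = if s' = z then 1 else 0)
    (hPw01 : P w false v1 = min (1/2) (|α| / (2 * |β|)))
    (hPw02 : P w false v2 = min (1/2) (|ψ| / (2 * |β|)))
    (hPw0z : P w false z = 1 - min (1/2) (|α| / (2 * |β|)) - min (1/2) (|ψ| / (2 * |β|)))
    (hPw1 : ∀ s', P w true s' = if s' = v3 then 1 else 0)
    (hPv30 : ∀ s', P v3 false s' = if s' = w then 1 else 0)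
    (hPv31 : ∀ s', P v3 true s' = if s' = z then 1 else 0)
    (rw rv3 : S → Bool → ℝ)
    (hrwB : ∀ s a, |rw s a| ≤ 1) (hrv3B : ∀ s a, |rv3 s a| ≤ 1)
    (hrw11 : rw v1 true = α * max 1 (|β| / |α|) / (1 - γ))
    (hrw21 : rw v2 true = ψ * max 1 (|β| / |ψ|) / (1 - γ))
    (hrw31 : rw v3 true = β / (1 - γ))
    (hrw10 : rw v1 false = 0) (hrw20 : rw v2 false = 0) (hrw30 : rw v3 false = 0)
    (hrww : ∀ a, rw w a = 0) (hrwz : ∀ a, rw z a = 0)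
    (hrv3w1 : rv3 w true = β / (1 - γ)) (hrv3w0 : rv3 w false = -β / (1 - γ))
    (hrv3v : ∀ a, rv3 v3 a = 0) (hrv3z : ∀ a, rv3 z a = 0)
    (π : S → ℝ) (hπ : IsBPolicy π)
    (hw : Unimp ε' γ P π rw w) (hv3 : Unimp ε' γ P π rv3 v3) :
    |π v3 - max (min (α / (2 * β) * π v1 + ψ / (2 * β) * π v2) 1) 0| ≤ ε := by
  obtain ⟨hε0, hε1⟩ := hε
  obtain ⟨hε'0, hε'1⟩ := hε'
  have h1γ : (0:ℝ) < 1 - γ := by linarith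
  have h0 : 0 < γ * |β| * ε := by linarith [sq_nonneg γ]
  have hγpos : 0 < γ := by
    rcases hγ0.lt_or_eq with h | h
    · exact h
    · rw [← h] at h0; simp at h0
  have hβabs : 0 < |β| := by
    by_contra h
    push_neg at h
    have : |β| = 0 := le_antisymm h (abs_nonneg β)
    rw [this] at h0; simp at h0
  have hβne : β ≠ 0 := abs_pos.1 hβabs
  -- the key product identity
  have key : ∀ x : ℝ, min (1/2) (|x|/(2*|β|)) * (x * max 1 (|β|/|x|)) = x / 2 := by
    intro x
    rcases eq_or_ne x 0 with h|h
    · simp [h]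
    · have hx : 0 < |x| := abs_pos.2 h
      rcases le_total |x| |β| with hc|hc
      · rw [min_eq_right, max_eq_right]
        · field_simp
        · rw [le_div_iff₀ hx]; linarith
        · rw [div_le_div_iff₀ (by positivity) (by norm_num)]
          linarith
      · rw [min_eq_left, max_eq_left]
        · ring
        · rw [div_le_one hx]; exact hc
        · rw [div_le_div_iff₀ (by norm_num) (by positivity)]
          linarith
  set c1 : ℝ := min (1/2) (|α| / (2 * |β|)) with hc1def
  set c2 : ℝ := min (1/2) (|ψ| / (2 * |β|)) with hc2def
  have hc10 : 0 ≤ c1 := le_min (by norm_num) (by positivity)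
  have hc20 : 0 ≤ c2 := le_min (by norm_num) (by positivity)
  have hc1h : c1 ≤ 1/2 := min_le_left _ _
  have hc2h : c2 ≤ 1/2 := min_le_left _ _
  -- values
  have hVz : bVal γ P π rw z = 0 := bVal_absorbing hPz hrwz
  have hWz : bVal γ P π rv3 z = 0 := bVal_absorbing hPz hrv3z
  have hV1 : |bVal γ P π rw v1 - π v1 * (α * max 1 (|β|/|α|))| ≤ γ := by
    have h := bVal_head hP hπ hγ0 hγ1 hrwB v1
    rw [hrw11, hrw10] at h
    have e : (1 - γ) * (π v1 * (α * max 1 (|β| / |α|) / (1 - γ)) + (1 - π v1) * 0)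
        = π v1 * (α * max 1 (|β| / |α|)) := by field_simp; ring
    rwa [e] at h
  have hV2 : |bVal γ P π rw v2 - π v2 * (ψ * max 1 (|β|/|ψ|))| ≤ γ := by
    have h := bVal_head hP hπ hγ0 hγ1 hrwB v2
    rw [hrw21, hrw20] at h
    have e : (1 - γ) * (π v2 * (ψ * max 1 (|β| / |ψ|) / (1 - γ)) + (1 - π v2) * 0)
        = π v2 * (ψ * max 1 (|β| / |ψ|)) := by field_simp; ring
    rwa [e] at h
  have hV3 : |bVal γ P π rw v3 - π v3 * β| ≤ γ := by
    have h := bVal_head hP hπ hγ0 hγ1 hrwB v3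
    rw [hrw31, hrw30] at h
    have e : (1 - γ) * (π v3 * (β / (1 - γ)) + (1 - π v3) * 0) = π v3 * β := by field_simp; ring
    rwa [e] at h
  have hWw : |bVal γ P π rv3 w - β * (2 * π w - 1)| ≤ γ := by
    have h := bVal_head hP hπ hγ0 hγ1 hrv3B w
    rw [hrv3w1, hrv3w0] at h
    have e : (1 - γ) * (π w * (β / (1 - γ)) + (1 - π w) * (-β / (1 - γ)))
        = β * (2 * π w - 1) := by field_simp; ring
    rwa [e] at h
  -- Q-values
  have hQwT : bQ γ P π rw w true = γ * bVal γ P π rw v3 := by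
    rw [bQ_det hPw1, hrww true]; ring
  have hQ3T : bQ γ P π rv3 v3 true = 0 := by
    rw [bQ_det hPv31, hrv3v true, hWz]; ring
  have hQ3F : bQ γ P π rv3 v3 false = γ * bVal γ P π rv3 w := by
    rw [bQ_det hPv30, hrv3v false]; ring
  have hQwF : bQ γ P π rw w false
      = γ * (c1 * bVal γ P π rw v1 + c2 * bVal γ P π rw v2) := by
    have hT : ({v1, v2, z} : Finset S).sum (fun s' => P w false s') = 1 := by
      rw [Finset.sum_insert (by simp [h12, h1z]), Finset.sum_insert (by simp [h2z]),
        Finset.sum_singleton, hPw01, hPw02, hPw0z]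
      ring
    have hzero : ∀ s', s' ∉ ({v1, v2, z} : Finset S) → P w false s' = 0 := by
      intro s' hs'
      have hsub : ({v1, v2, z} : Finset S) ⊆ Finset.univ := Finset.subset_univ _
      have hsplit := Finset.sum_subset hsub
        (f := fun s' => P w false s')
      have hrest : ∑ x ∈ Finset.univ \ ({v1, v2, z} : Finset S), P w false x = 0 := by
        have := Finset.sum_sdiff hsub (f := fun s' => P w false s')
        rw [hT, hP.2 w false] at this
        linarith
      have := (Finset.sum_eq_zero_iff_of_nonneg
        (fun x _ => hP.1 w false x)).1 hrest s' (by simp [hs'])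
      exact this
    simp only [bQ, hrww false, mul_zero, zero_add]
    congr 1
    rw [← Finset.sum_subset (Finset.subset_univ ({v1, v2, z} : Finset S))
      (fun x _ hx => by rw [hzero x hx, zero_mul])]
    rw [Finset.sum_insert (by simp [h12, h1z]), Finset.sum_insert (by simp [h2z]),
      Finset.sum_singleton, hPw01, hPw02, hVz]
    ring
  -- approximations
  have hA : |bQ γ P π rw w false - γ * ((α * π v1 + ψ * π v2) / 2)| ≤ γ ^ 2 := by
    rw [hQwF]
    have k1 := key α
    have k2 := key ψ
    have e : γ * (c1 * bVal γ P π rw v1 + c2 * bVal γ P π rw v2)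
        - γ * ((α * π v1 + ψ * π v2) / 2)
        = γ * (c1 * (bVal γ P π rw v1 - π v1 * (α * max 1 (|β|/|α|)))
          + c2 * (bVal γ P π rw v2 - π v2 * (ψ * max 1 (|β|/|ψ|)))) := by
      linear_combination (γ * π v1) * k1 + (γ * π v2) * k2
    rw [e, abs_mul, abs_of_nonneg hγ0]
    have b1 : |c1 * (bVal γ P π rw v1 - π v1 * (α * max 1 (|β|/|α|)))| ≤ c1 * γ := by
      rw [abs_mul, abs_of_nonneg hc10]
      exact mul_le_mul_of_nonneg_left hV1 hc10
    have b2 : |c2 * (bVal γ P π rw v2 - π v2 * (ψ * max 1 (|β|/|ψ|)))| ≤ c2 * γ := by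
      rw [abs_mul, abs_of_nonneg hc20]
      exact mul_le_mul_of_nonneg_left hV2 hc20
    have hsum : |c1 * (bVal γ P π rw v1 - π v1 * (α * max 1 (|β|/|α|)))
        + c2 * (bVal γ P π rw v2 - π v2 * (ψ * max 1 (|β|/|ψ|)))| ≤ c1 * γ + c2 * γ :=
      (abs_add_le _ _).trans (add_le_add b1 b2)
    calc γ * |c1 * (bVal γ P π rw v1 - π v1 * (α * max 1 (|β|/|α|)))
        + c2 * (bVal γ P π rw v2 - π v2 * (ψ * max 1 (|β|/|ψ|)))|
        ≤ γ * (c1 * γ + c2 * γ) := mul_le_mul_of_nonneg_left hsum hγ0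
      _ = γ ^ 2 * (c1 + c2) := by ring
      _ ≤ γ ^ 2 * 1 := mul_le_mul_of_nonneg_left (by linarith) (sq_nonneg γ)
      _ = γ ^ 2 := mul_one _
  have hB : |bQ γ P π rw w true - γ * (β * π v3)| ≤ γ ^ 2 := by
    rw [hQwT]
    have e : γ * bVal γ P π rw v3 - γ * (β * π v3)
        = γ * (bVal γ P π rw v3 - π v3 * β) := by ring
    rw [e, abs_mul, abs_of_nonneg hγ0, pow_two]
    exact mul_le_mul_of_nonneg_left hV3 hγ0
  have hC : |bQ γ P π rv3 v3 false - γ * (β * (2 * π w - 1))| ≤ γ ^ 2 := by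
    rw [hQ3F]
    have e : γ * bVal γ P π rv3 w - γ * (β * (2 * π w - 1))
        = γ * (bVal γ P π rv3 w - β * (2 * π w - 1)) := by ring
    rw [e, abs_mul, abs_of_nonneg hγ0, pow_two]
    exact mul_le_mul_of_nonneg_left hWw hγ0
  obtain ⟨hA1, hA2⟩ := abs_le.mp hA
  obtain ⟨hB1, hB2⟩ := abs_le.mp hB
  obtain ⟨hC1, hC2⟩ := abs_le.mp hC
  set u : ℝ := (α * π v1 + ψ * π v2) / 2 with hudef
  have hx : α / (2 * β) * π v1 + ψ / (2 * β) * π v2 = u / β := by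
    rw [hudef]; field_simp
  rw [hx]
  have hπ30 := (hπ v3).1
  have hπ31 := (hπ v3).2
  have hπw0 := (hπ w).1
  have hπw1 := (hπ w).2
  rcases eq_or_ne (π v3) 0 with h30 | h30
  · -- π v3 = 0 : show the clamp is ≤ ε
    have hTF := hv3 true false (by simp [h30])
    rw [hQ3T] at hTF
    -- γβ(2πw-1) ≥ -ε' - γ²
    have hlow : γ * (β * (2 * π w - 1)) ≥ -ε' - γ ^ 2 := by linarith
    have hxε : u / β < ε := by
      rcases hβne.lt_or_gt with hbneg | hbpos
      · have habs : |β| = -β := abs_of_neg hbneg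
        rw [habs] at hcond
        have hnn : 0 ≤ γ * -β * (1 - ε) :=
          mul_nonneg (mul_nonneg hγ0 (by linarith)) (by linarith)
        have hπwne : π w ≠ 1 := by
          intro h1
          rw [h1] at hlow
          linarith [sq_nonneg γ]
        have hwTF := hw true false (by simp [hπwne])
        rw [h30] at hB1 hB2
        have h1 : γ * (ε * β) < γ * u := by linarith
        rw [div_lt_iff_of_neg hbneg]
        exact lt_of_mul_lt_mul_left h1 hγ0
      · have habs : |β| = β := abs_of_pos hbpos
        rw [habs] at hcond
        have hnn : 0 ≤ γ * β * (1 - ε) :=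
          mul_nonneg (mul_nonneg hγ0 hbpos.le) (by linarith)
        have hπwne : π w ≠ 0 := by
          intro h1
          rw [h1] at hlow
          linarith [sq_nonneg γ]
        have hwFT := hw false true (by simp [hπwne])
        rw [h30] at hB1 hB2
        have h1 : γ * u < γ * (ε * β) := by linarith
        rw [div_lt_iff₀ hbpos]
        exact lt_of_mul_lt_mul_left h1 hγ0
    rw [h30]
    rw [abs_of_nonpos (by simp [le_max_right])]
    have : max (min (u / β) 1) 0 ≤ ε :=
      max_le ((min_le_left _ _).trans hxε.le) hε0.le
    linarith
  · rcases eq_or_ne (π v3) 1 with h31 | h31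
    · -- π v3 = 1 : show the clamp is ≥ 1 - ε
      have hFT := hv3 false true (by simp [h30])
      rw [hQ3T] at hFT
      have hhigh : γ * (β * (2 * π w - 1)) ≤ ε' + γ ^ 2 := by linarith
      have hxε : 1 - ε < u / β := by
        rcases hβne.lt_or_gt with hbneg | hbpos
        · have habs : |β| = -β := abs_of_neg hbneg
          rw [habs] at hcond
          have hnn : 0 ≤ γ * -β * (1 - ε) :=
            mul_nonneg (mul_nonneg hγ0 (by linarith)) (by linarith)
          have hπwne : π w ≠ 0 := by
            intro h1
            rw [h1] at hhigh
            linarith [sq_nonneg γ]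
          have hwFT := hw false true (by simp [hπwne])
          rw [h31] at hB1 hB2
          have h1 : γ * u < γ * ((1 - ε) * β) := by linarith
          rw [lt_div_iff_of_neg hbneg]
          exact lt_of_mul_lt_mul_left h1 hγ0
        · have habs : |β| = β := abs_of_pos hbpos
          rw [habs] at hcond
          have hnn : 0 ≤ γ * β * (1 - ε) :=
            mul_nonneg (mul_nonneg hγ0 hbpos.le) (by linarith)
          have hπwne : π w ≠ 1 := by
            intro h1
            rw [h1] at hhigh
            linarith [sq_nonneg γ]
          have hwTF := hw true false (by simp [hπwne])
          rw [h31] at hB1 hB2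
          have h1 : γ * ((1 - ε) * β) < γ * u := by linarith
          rw [lt_div_iff₀ hbpos]
          exact lt_of_mul_lt_mul_left h1 hγ0
      rw [h31]
      have ht1 : max (min (u / β) 1) 0 ≤ 1 := max_le (min_le_right _ _) (by norm_num)
      have ht2 : 1 - ε < max (min (u / β) 1) 0 :=
        lt_max_iff.2 (Or.inl (lt_min hxε (by linarith)))
      rw [abs_of_nonneg (by linarith)]
      linarith
    · -- 0 < π v3 < 1
      have hFT := hv3 false true (by simp [h30])
      have hTF := hv3 true false (by simp [h31])
      rw [hQ3T] at hFT hTF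
      have habsC : |γ * (β * (2 * π w - 1))| ≤ ε' + γ ^ 2 := by
        rw [abs_le]; constructor <;> linarith
      have hsmall : |2 * π w - 1| < 1 := by
        have e : |γ * (β * (2 * π w - 1))| = γ * |β| * |2 * π w - 1| := by
          rw [abs_mul, abs_mul, abs_of_nonneg hγ0]; ring
        rw [e] at habsC
        by_contra hcon
        push_neg at hcon
        have h1 : γ * |β| * 1 ≤ γ * |β| * |2 * π w - 1| :=
          mul_le_mul_of_nonneg_left hcon (mul_nonneg hγ0 (abs_nonneg β))
        have hnn : 0 ≤ γ * |β| * (1 - ε) :=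
          mul_nonneg (mul_nonneg hγ0 (abs_nonneg β)) (by linarith)
        linarith [sq_nonneg γ]
      obtain ⟨hs1, hs2⟩ := abs_lt.mp hsmall
      have hπwne0 : π w ≠ 0 := by intro h1; rw [h1] at hs1; linarith
      have hπwne1 : π w ≠ 1 := by intro h1; rw [h1] at hs2; linarith
      have hwFT := hw false true (by simp [hπwne0])
      have hwTF := hw true false (by simp [hπwne1])
      -- |γu - γβπ3| ≤ ε' + 2γ²
      have hmid : |γ * u - γ * (β * π v3)| ≤ ε' + 2 * γ ^ 2 := by
        rw [abs_le]; constructor <;> linarith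
      have hclose : |u / β - π v3| < ε := by
        have e : γ * u - γ * (β * π v3) = γ * β * (u / β - π v3) := by
          field_simp
        rw [e, abs_mul, abs_mul, abs_of_nonneg hγ0] at hmid
        have h1 : γ * |β| * |u / β - π v3| < γ * |β| * ε := by linarith
        exact lt_of_mul_lt_mul_left h1 (mul_nonneg hγ0 (abs_nonneg β))
      have hproj : |π v3 - max (min (u / β) 1) 0| ≤ |π v3 - u / β| := by
        rcases le_total (u / β) 0 with h|h
        · have e : max (min (u / β) 1) 0 = 0 :=
            max_eq_right ((min_le_left _ _).trans h)
          rw [e, sub_zero, abs_of_nonneg hπ30, abs_of_nonneg (by linarith)]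
          linarith
        · rcases le_total 1 (u / β) with h'|h'
          · have e : max (min (u / β) 1) 0 = 1 := by
              rw [min_eq_right h']; exact max_eq_left (by norm_num)
            rw [e, abs_of_nonpos (by linarith), abs_of_nonpos (by linarith)]
            linarith
          · have e : max (min (u / β) 1) 0 = u / β := by
              rw [min_eq_left h']; exact max_eq_left h
            rw [e]
      calc |π v3 - max (min (u / β) 1) 0| ≤ |π v3 - u / β| := hproj
        _ = |u / β - π v3| := abs_sub_comm _ _
        _ ≤ ε := hclose.le


end Stmt9
end

section
/- (Averaging cut construction) Fix ε ∈ (0,1) and let ε' ∈ [√ε, 2√ε] be such that 4/ε' is a power of 2. Let π be an assignment of values in [0,1] to nodes including a, a', σ, σ_k, b_k (k ∈ [4/ε']), d_{j,k}. Suppose: π(σ)=1; π(σ_k) = kε'/4 ± ε for each k; π(b_k) = 1 ± ε whenever π(σ_k) ≤ π(a) - ε and π(b_k) = 0 ± ε whenever π(σ_k) ≥ π(a) + ε; π(d_{1,k}) = (π(b_{2k-1})+π(b_{2k}))/2 ± ε, π(d_{j,k}) = (π(d_{j-1,2k-1})+π(d_{j-1,2k}))/2 ± ε, and π(a') = π(d_{log_2(4/ε'),1})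 ± ε. Then |π(a) - π(a')| ≤ 66√ε. -/
open scoped BigOperators

namespace Stmt10

set_option maxHeartbeats 1000000 in
/-- Averaging cut construction (quantitative core of Claim real-unary).
Here `d 0` plays the role of the family `b`, `d j` for `1 ≤ j ≤ L` are the levels of the
binary averaging tree, and `4/ε' = 2^L`. From grid comparisons of `a` against the thresholds
`σk k ≈ k·ε'/4` and the averaging-tree relations, we conclude `|a - a'| ≤ 66√ε`. -/
theorem averaging_cut (ε ε' : ℝ) (L : ℕ)
    (hε : 0 < ε) (hε1 : ε < 1)
    (hε'pow : (2 : ℝ) ^ L * ε' = 4)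
    (hε'lo : Real.sqrt ε ≤ ε') (hε'hi : ε' ≤ 2 * Real.sqrt ε)
    (a a' : ℝ) (ha : a ∈ Set.Icc (0:ℝ) 1) (ha' : a' ∈ Set.Icc (0:ℝ) 1)
    (σk : ℕ → ℝ) (d : ℕ → ℕ → ℝ)
    (hσrange : ∀ k ∈ Finset.Icc 1 (2 ^ L), σk k ∈ Set.Icc (0:ℝ) 1)
    (hdrange : ∀ j ∈ Finset.Icc 0 L, ∀ k ∈ Finset.Icc 1 (2 ^ (L - j)),
        d j k ∈ Set.Icc (0:ℝ) 1)
    -- `π(σ_k) = k·ε'/4 ± ε`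
    (hσ : ∀ k ∈ Finset.Icc 1 (2 ^ L), |σk k - k * ε' / 4| ≤ ε)
    -- comparison gates: `b_k = 1 ± ε` when `σ_k ≤ a - ε` and `b_k = 0 ± ε` when `σ_k ≥ a + ε`
    (hb1 : ∀ k ∈ Finset.Icc 1 (2 ^ L), σk k ≤ a - ε → |d 0 k - 1| ≤ ε)
    (hb0 : ∀ k ∈ Finset.Icc 1 (2 ^ L), σk k ≥ a + ε → |d 0 k| ≤ ε)
    -- binary averaging tree
    (htree : ∀ j ∈ Finset.Icc 1 L, ∀ k ∈ Finset.Icc 1 (2 ^ (L - j)),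
        |d j k - (d (j - 1) (2 * k - 1) + d (j - 1) (2 * k)) / 2| ≤ ε)
    -- output gate
    (hout : |a' - d L 1| ≤ ε) :
    |a - a'| ≤ 66 * Real.sqrt ε := by
  obtain ⟨ha0, ha1⟩ := ha
  have hsq : 0 < Real.sqrt ε := Real.sqrt_pos.mpr hε
  have hε'pos : 0 < ε' := lt_of_lt_of_le hsq hε'lo
  have hR : (0:ℝ) < (2:ℝ) ^ L := by positivity
  have hNcast : ((2 ^ L : ℕ) : ℝ) = (2:ℝ) ^ L := by push_cast; ring
  have hg : ∀ k : ℕ, (k:ℝ) * ε' / 4 = (k:ℝ) / (2:ℝ) ^ L := by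
    intro k
    have hε'eq : ε' = 4 / (2:ℝ) ^ L := by
      field_simp
      linarith [hε'pow, mul_comm ε' ((2:ℝ) ^ L)]
    rw [hε'eq]; field_simp
  -- the tree averaging induction
  have key : ∀ j, j ≤ L → ∀ k, 1 ≤ k → k ≤ 2 ^ (L - j) →
      |d j k - (∑ i ∈ Finset.Ioc (2 ^ j * (k - 1)) (2 ^ j * k), d 0 i) / (2:ℝ) ^ j|
        ≤ (j : ℝ) * ε := by
    intro j
    induction j with
    | zero =>
      intro _ k hk1 _
      have hI : Finset.Ioc (k - 1) k = {k} := by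
        ext x; simp only [Finset.mem_Ioc, Finset.mem_singleton]; omega
      simp [hI]
    | succ j ih =>
      intro hjL k hk1 hk2
      obtain ⟨k', rfl⟩ : ∃ k', k = k' + 1 := ⟨k - 1, by omega⟩
      have hjL' : j ≤ L := by omega
      have hchild : 2 * (k' + 1) ≤ 2 ^ (L - j) := by
        have h1 : 2 ^ (L - j) = 2 ^ (L - (j + 1)) * 2 := by
          rw [← pow_succ]; congr 1; omega
        omega
      have hA := ih hjL' (2 * (k' + 1) - 1) (by omega) (by omega)
      have hB := ih hjL' (2 * (k' + 1)) (by omega) (by omega)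
      have ht := htree (j + 1) (by simp only [Finset.mem_Icc]; omega) (k' + 1)
        (by simp only [Finset.mem_Icc]; omega)
      simp only [Nat.add_sub_cancel] at ht
      have e1 : 2 * (k' + 1) - 1 - 1 = 2 * k' := by omega
      have e2 : 2 * (k' + 1) - 1 = 2 * k' + 1 := by omega
      have e3 : 2 * (k' + 1) = 2 * k' + 2 := by omega
      rw [e1] at hA
      rw [e2] at hA hB ht
      rw [e3] at hB ht
      have hsum : (∑ i ∈ Finset.Ioc (2 ^ j * (2 * k')) (2 ^ j * (2 * k' + 1)), d 0 i)
          + (∑ i ∈ Finset.Ioc (2 ^ j * (2 * k' + 1)) (2 ^ j * (2 * k' + 2)), d 0 i)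
          = ∑ i ∈ Finset.Ioc (2 ^ (j + 1) * (k' + 1 - 1)) (2 ^ (j + 1) * (k' + 1)), d 0 i := by
        have g1 : 2 ^ (j + 1) * (k' + 1 - 1) = 2 ^ j * (2 * k') := by
          rw [Nat.add_sub_cancel]; ring
        have g2 : 2 ^ (j + 1) * (k' + 1) = 2 ^ j * (2 * k' + 2) := by ring
        rw [g1, g2]
        exact Finset.sum_Ioc_consecutive _ (Nat.mul_le_mul le_rfl (by omega))
          (Nat.mul_le_mul le_rfl (by omega))
      rw [← hsum]
      set S1 := ∑ i ∈ Finset.Ioc (2 ^ j * (2 * k')) (2 ^ j * (2 * k' + 1)), d 0 i with hS1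
      set S2 := ∑ i ∈ Finset.Ioc (2 ^ j * (2 * k' + 1)) (2 ^ j * (2 * k' + 2)), d 0 i with hS2
      have hp : (0:ℝ) < (2:ℝ) ^ j := by positivity
      have hdiv : (S1 + S2) / (2:ℝ) ^ (j + 1) = (S1 / (2:ℝ) ^ j + S2 / (2:ℝ) ^ j) / 2 := by
        rw [pow_succ]; field_simp
      rw [hdiv]
      rw [abs_le] at hA hB ht ⊢
      push_cast
      constructor <;> [linarith [hA.1, hB.1, ht.1]; linarith [hA.2, hB.2, ht.2]]
  set S := ∑ i ∈ Finset.Ioc 0 (2 ^ L), d 0 i with hSdef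
  have hkey := key L le_rfl 1 le_rfl (by simp)
  have hkey' : |d L 1 - S / (2:ℝ) ^ L| ≤ (L:ℝ) * ε := by
    simpa using hkey
  have hd01 : ∀ k ∈ Finset.Ioc 0 (2 ^ L), 0 ≤ d 0 k ∧ d 0 k ≤ 1 := by
    intro k hk
    simp only [Finset.mem_Ioc] at hk
    have := hdrange 0 (by simp) k (by simp only [Finset.mem_Icc, Nat.sub_zero]; omega)
    exact ⟨this.1, this.2⟩
  -- lower bound on S
  have hlow : (2:ℝ) ^ L * a - 3 * (2:ℝ) ^ L * ε - 1 ≤ S := by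
    by_cases hcase : a ≤ 2 * ε
    · have hS0 : 0 ≤ S := Finset.sum_nonneg fun i hi => (hd01 i hi).1
      nlinarith [mul_le_mul_of_nonneg_left hcase hR.le, mul_pos hR hε]
    · push_neg at hcase
      set m := ⌊(2:ℝ) ^ L * (a - 2 * ε)⌋₊ with hmdef
      have hmle : (m:ℝ) ≤ (2:ℝ) ^ L * (a - 2 * ε) := Nat.floor_le (by nlinarith)
      have hmN : m ≤ 2 ^ L := by
        have h1 : (2:ℝ) ^ L * (a - 2 * ε) ≤ ((2 ^ L : ℕ) : ℝ) := by
          rw [hNcast]; nlinarith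
        have h2 := Nat.floor_mono h1
        rwa [Nat.floor_natCast] at h2
      have hmgt : (2:ℝ) ^ L * (a - 2 * ε) - 1 < (m:ℝ) := Nat.sub_one_lt_floor _
      have hpt : ∀ k ∈ Finset.Ioc 0 (2 ^ L), (if k ≤ m then (1:ℝ) else 0) - ε ≤ d 0 k := by
        intro k hk
        have hk' := hk
        simp only [Finset.mem_Ioc] at hk'
        split_ifs with h
        · have hkm : (k:ℝ) ≤ (2:ℝ) ^ L * (a - 2 * ε) :=
            le_trans (by exact_mod_cast h) hmle
          have hσk := hσ k (by simp only [Finset.mem_Icc]; omega)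
          have hgrid : (k:ℝ) * ε' / 4 ≤ a - 2 * ε := by
            rw [hg, div_le_iff₀ hR]
            linarith [mul_comm ((2:ℝ) ^ L) (a - 2 * ε)]
          have hσle : σk k ≤ a - ε := by
            have := abs_le.mp hσk
            linarith [this.2]
          have := abs_le.mp (hb1 k (by simp only [Finset.mem_Icc]; omega) hσle)
          linarith [this.1]
        · linarith [(hd01 k hk).1]
      have h1 := Finset.sum_le_sum hpt
      have hf : Finset.filter (fun k => k ≤ m) (Finset.Ioc 0 (2 ^ L)) = Finset.Ioc 0 m := by
        ext x; simp only [Finset.mem_filter, Finset.mem_Ioc]; omega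
      have h2 : ∑ k ∈ Finset.Ioc 0 (2 ^ L), ((if k ≤ m then (1:ℝ) else 0) - ε)
          = (m:ℝ) - (2:ℝ) ^ L * ε := by
        rw [Finset.sum_sub_distrib, Finset.sum_boole, hf, Finset.sum_const]
        simp only [Nat.card_Ioc, Nat.sub_zero, nsmul_eq_mul]
        rw [← hNcast]
      linarith
  -- upper bound on S
  have hhigh : S ≤ (2:ℝ) ^ L * a + 3 * (2:ℝ) ^ L * ε := by
    set M := ⌊(2:ℝ) ^ L * (a + 2 * ε)⌋₊ with hMdef
    have hMle : (M:ℝ) ≤ (2:ℝ) ^ L * (a + 2 * ε) := Nat.floor_le (by positivity)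
    have hpt : ∀ k ∈ Finset.Ioc 0 (2 ^ L), d 0 k ≤ (if k ≤ M then (1:ℝ) else 0) + ε := by
      intro k hk
      have hk' := hk
      simp only [Finset.mem_Ioc] at hk'
      split_ifs with h
      · linarith [(hd01 k hk).2]
      · push_neg at h
        have hkM : (M:ℝ) + 1 ≤ (k:ℝ) := by exact_mod_cast h
        have hkgt : (2:ℝ) ^ L * (a + 2 * ε) < (k:ℝ) := by
          linarith [Nat.lt_floor_add_one ((2:ℝ) ^ L * (a + 2 * ε))]
        have hgrid : a + 2 * ε < (k:ℝ) * ε' / 4 := by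
          rw [hg, lt_div_iff₀ hR]
          linarith [mul_comm ((2:ℝ) ^ L) (a + 2 * ε)]
        have hσk := hσ k (by simp only [Finset.mem_Icc]; omega)
        have hσge : σk k ≥ a + ε := by
          have := abs_le.mp hσk
          linarith [this.1]
        have := abs_le.mp (hb0 k (by simp only [Finset.mem_Icc]; omega) hσge)
        linarith [this.2]
    have h1 := Finset.sum_le_sum hpt
    have hsub : Finset.filter (fun k => k ≤ M) (Finset.Ioc 0 (2 ^ L)) ⊆ Finset.Ioc 0 M := by
      intro x hx
      simp only [Finset.mem_filter, Finset.mem_Ioc] at hx ⊢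
      omega
    have hcard : ((Finset.filter (fun k => k ≤ M) (Finset.Ioc 0 (2 ^ L))).card : ℝ) ≤ (M:ℝ) := by
      have := Finset.card_le_card hsub
      simp only [Nat.card_Ioc, Nat.sub_zero] at this
      exact_mod_cast this
    have h2 : ∑ k ∈ Finset.Ioc 0 (2 ^ L), ((if k ≤ M then (1:ℝ) else 0) + ε)
        ≤ (M:ℝ) + (2:ℝ) ^ L * ε := by
      rw [Finset.sum_add_distrib, Finset.sum_boole, Finset.sum_const]
      simp only [Nat.card_Ioc, Nat.sub_zero, nsmul_eq_mul]
      rw [← hNcast]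
      linarith
    linarith
  -- middle bound
  have hmid : |a - S / (2:ℝ) ^ L| ≤ 3 * ε + 1 / (2:ℝ) ^ L := by
    have e2 : 1 / (2:ℝ) ^ L * (2:ℝ) ^ L = 1 := by field_simp
    have hinv0 : 0 < 1 / (2:ℝ) ^ L := by positivity
    have hup : S / (2:ℝ) ^ L ≤ a + 3 * ε := by
      rw [div_le_iff₀ hR]; linarith [hhigh]
    have hdn : a - 3 * ε - 1 / (2:ℝ) ^ L ≤ S / (2:ℝ) ^ L := by
      rw [le_div_iff₀ hR]; nlinarith [hlow, e2]
    rw [abs_le]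
    constructor <;> linarith
  -- triangle inequality
  have htri : |a - a'| ≤ |a - S / (2:ℝ) ^ L| + |d L 1 - S / (2:ℝ) ^ L| + |a' - d L 1| := by
    have t1 := abs_sub_le a (S / (2:ℝ) ^ L) a'
    have t2 := abs_sub_le (S / (2:ℝ) ^ L) (d L 1) a'
    have t3 : |S / (2:ℝ) ^ L - d L 1| = |d L 1 - S / (2:ℝ) ^ L| := abs_sub_comm _ _
    have t4 : |d L 1 - a'| = |a' - d L 1| := abs_sub_comm _ _
    linarith
  -- numeric finish
  have hss : Real.sqrt ε * Real.sqrt ε = ε := Real.mul_self_sqrt hε.le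
  have hs1 : Real.sqrt ε ≤ 1 := by
    rw [show (1:ℝ) = Real.sqrt 1 by simp]
    exact Real.sqrt_le_sqrt hε1.le
  have hεs : ε ≤ Real.sqrt ε := by nlinarith
  have hLle : (L:ℝ) ≤ (2:ℝ) ^ L := by
    calc (L:ℝ) ≤ ((2 ^ L : ℕ) : ℝ) := by exact_mod_cast (Nat.lt_two_pow_self (n := L)).le
    _ = (2:ℝ) ^ L := hNcast
  have hLε : (L:ℝ) * ε ≤ 4 * Real.sqrt ε := by
    have h1 : (2:ℝ) ^ L * Real.sqrt ε ≤ 4 := by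
      calc (2:ℝ) ^ L * Real.sqrt ε ≤ (2:ℝ) ^ L * ε' :=
            mul_le_mul_of_nonneg_left hε'lo hR.le
      _ = 4 := hε'pow
    have h2 : (L:ℝ) * ε ≤ (2:ℝ) ^ L * ε := mul_le_mul_of_nonneg_right hLle hε.le
    have h3 : ((2:ℝ) ^ L * Real.sqrt ε) * Real.sqrt ε ≤ 4 * Real.sqrt ε :=
      mul_le_mul_of_nonneg_right h1 hsq.le
    have h4 : (2:ℝ) ^ L * ε = (2:ℝ) ^ L * (Real.sqrt ε * Real.sqrt ε) := by rw [hss]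
    linarith
  have hinv : 1 / (2:ℝ) ^ L ≤ Real.sqrt ε / 2 := by
    have h1 : 1 / (2:ℝ) ^ L = ε' / 4 := by
      rw [div_eq_div_iff hR.ne' (by norm_num : (4:ℝ) ≠ 0)]
      linarith [hε'pow, mul_comm ε' ((2:ℝ) ^ L)]
    rw [h1]; linarith
  linarith [hmid, hkey', hout, htri, hLε, hinv, hεs]

end Stmt10
end

section
/- In a turn-based stochastic game, for every stationary joint policy π there exists a stationary product policy π' with V_i^{π'}(s) = V_i^π(s) for all players i and states s. Hence for any ε > 0, any ε-perfect stationary CCE can be converted in polynomial time to an ε-perfect stationary NE, and computing ε-stationary NE and ε-stationary CCE are equivalent in turn-based games. -/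
open scoped BigOperators

namespace Stmt12

variable {S : Type*} [Fintype S] [DecidableEq S]
variable {m : ℕ} {A : Fin m → Type*} [∀ i, Fintype (A i)] [∀ i, Nonempty (A i)]

def IsKernel {α : Type*} [Fintype α] (P : S → α → S → ℝ) : Prop :=
  (∀ s a s', 0 ≤ P s a s') ∧ ∀ s a, ∑ s', P s a s' = 1

def IsPolicy {α : Type*} [Fintype α] (π : S → α → ℝ) : Prop :=
  (∀ s a, 0 ≤ π s a) ∧ ∀ s, ∑ a, π s a = 1

noncomputable def step {α : Type*} [Fintype α] (P : S → α → S → ℝ) (π : S → α → ℝ)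
    (d : S → ℝ) : S → ℝ :=
  fun s' => ∑ s, ∑ a, d s * π s a * P s a s'

noncomputable def dist {α : Type*} [Fintype α] (P : S → α → S → ℝ) (π : S → α → ℝ)
    (s₀ : S) (h : ℕ) : S → ℝ :=
  (step P π)^[h] (fun s => if s = s₀ then (1 : ℝ) else 0)

/-- Normalized discounted value `V^π(s₀) = (1-γ)·E[Σ_{h≥1} γ^{h-1} r(s_h,a_h)]`. -/
noncomputable def val (γ : ℝ) {α : Type*} [Fintype α] (P : S → α → S → ℝ) (π : S → α → ℝ)
    (r : S → α → ℝ) (s₀ : S) : ℝ :=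
  (1 - γ) * ∑' h : ℕ, γ ^ h * ∑ s, dist P π s₀ h s * ∑ a, π s a * r s a

/-- Normalized discounted action-value `Q^π(s,a)`. -/
noncomputable def qval (γ : ℝ) {α : Type*} [Fintype α] (P : S → α → S → ℝ) (π : S → α → ℝ)
    (r : S → α → ℝ) (s : S) (a : α) : ℝ :=
  (1 - γ) * r s a + γ * ∑ s', P s a s' * val γ P π r s'

/-- The joint (product) policy induced by a tuple of per-player policies. -/
noncomputable def prodPolicy (πp : ∀ i : Fin m, S → A i → ℝ) : S → (∀ i, A i) → ℝ :=
  fun s a => ∏ i, πp i s (a i)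

/-- `Qbar γ P πp r i s aᵢ = E_{a₋ᵢ ~ π₋ᵢ(s)}[Q_i^π(s, (aᵢ, a₋ᵢ))]` for the product policy `πp`
(using that `πp i s` sums to one, averaging the `i`-th coordinate out is harmless). -/
noncomputable def Qbar (γ : ℝ) (P : S → (∀ i, A i) → S → ℝ) (πp : ∀ i : Fin m, S → A i → ℝ)
    (r : S → (∀ i, A i) → ℝ) (i : Fin m) (s : S) (aᵢ : A i) : ℝ :=
  ∑ a : ∀ j, A j, prodPolicy πp s a * qval γ P (prodPolicy πp) r s (Function.update a i aᵢ)

/-- Best-response value `V_i^{†,π₋ᵢ}(s)` of player `i` against the product policy `πp`: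
the supremum over stationary policies of player `i` of the resulting value. -/
noncomputable def brVal (γ : ℝ) (P : S → (∀ i, A i) → S → ℝ) (πp : ∀ i : Fin m, S → A i → ℝ)
    (r : S → (∀ i, A i) → ℝ) (i : Fin m) (s : S) : ℝ :=
  ⨆ ρ : {ρ : S → A i → ℝ // IsPolicy ρ},
    val γ P (prodPolicy (Function.update πp i ρ.1)) r s

/-- The game is turn-based with controller map `ag`: at each state only the controller's
action affects the transition and all players' rewards. -/
def TurnBased (ag : S → Fin m) (P : S → (∀ i, A i) → S → ℝ)
    (r : Fin m → S → (∀ i, A i) → ℝ) : Prop :=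
  ∀ (s : S) (a a' : ∀ i, A i), a (ag s) = a' (ag s) →
    (∀ s', P s a s' = P s a' s') ∧ ∀ j, r j s a = r j s a'

/-- The joint policy in which player `i` plays `ρ` independently while the others follow
their marginals of the joint policy `π`. -/
noncomputable def margDev (π : S → (∀ i, A i) → ℝ) (i : Fin m) (ρ : S → A i → ℝ) :
    S → (∀ i, A i) → ℝ :=
  fun s a => ρ s (a i) * ∑ aᵢ' : A i, π s (Function.update a i aᵢ')

/-- The per-state CCE gap of player `i` under joint policy `π`:
`V_i^{†,π₋ᵢ}(s) - V_i^π(s)`. -/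
noncomputable def cceGap (γ : ℝ) (P : S → (∀ i, A i) → S → ℝ) (π : S → (∀ i, A i) → ℝ)
    (r : S → (∀ i, A i) → ℝ) (i : Fin m) (s : S) : ℝ :=
  (⨆ ρ : {ρ : S → A i → ℝ // IsPolicy ρ}, val γ P (margDev π i ρ.1) r s) - val γ P π r s


section Aux
set_option linter.unusedSectionVars false

/-- marginal of a weight function on coordinate `i`. -/
noncomputable def margOf (q : (∀ j, A j) → ℝ) (i : Fin m) (b : A i) : ℝ :=
  ∑ x : ∀ j : { j : Fin m // j ≠ i }, A j, q ((Equiv.piSplitAt i A).symm (b, x))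

lemma symm_apply_same (i : Fin m) (b : A i) (x : ∀ j : { j : Fin m // j ≠ i }, A j) :
    ((Equiv.piSplitAt i A).symm (b, x)) i = b := by
  simp [Equiv.piSplitAt_symm_apply]

lemma symm_apply_ne (i : Fin m) (b : A i) (x : ∀ j : { j : Fin m // j ≠ i }, A j)
    {j : Fin m} (h : j ≠ i) :
    ((Equiv.piSplitAt i A).symm (b, x)) j = x ⟨j, h⟩ := by
  simp [Equiv.piSplitAt_symm_apply, h]

lemma update_symm (i : Fin m) (b c : A i) (x : ∀ j : { j : Fin m // j ≠ i }, A j) :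
    Function.update ((Equiv.piSplitAt i A).symm (b, x)) i c
      = (Equiv.piSplitAt i A).symm (c, x) := by
  funext j
  by_cases h : j = i
  · subst h; simp [symm_apply_same]
  · simp [Function.update, h, symm_apply_ne i b x h, symm_apply_ne i c x h]

lemma sum_split (i : Fin m) (F : (∀ j, A j) → ℝ) :
    ∑ a, F a = ∑ b : A i, ∑ x : ∀ j : { j : Fin m // j ≠ i }, A j,
      F ((Equiv.piSplitAt i A).symm (b, x)) := by
  rw [← Equiv.sum_comp (Equiv.piSplitAt i A).symm F, Fintype.sum_prod_type]

lemma sum_mul_comp (q : (∀ j, A j) → ℝ) (i : Fin m) (g : A i → ℝ) :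
    ∑ a, q a * g (a i) = ∑ b, margOf q i b * g b := by
  rw [sum_split i (fun a => q a * g (a i))]
  refine Finset.sum_congr rfl fun b _ => ?_
  simp only [symm_apply_same, margOf, Finset.sum_mul]

lemma sum_margOf (q : (∀ j, A j) → ℝ) (i : Fin m) :
    ∑ b, margOf q i b = ∑ a, q a := by
  have := sum_mul_comp q i (fun _ => (1 : ℝ))
  simpa using this.symm

lemma margOf_nonneg {q : (∀ j, A j) → ℝ} (hq : ∀ a, 0 ≤ q a) (i : Fin m) (b : A i) :
    0 ≤ margOf q i b :=
  Finset.sum_nonneg fun _ _ => hq _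

lemma margOf_prod (F : ∀ j, A j → ℝ) (i : Fin m) (b : A i) :
    margOf (fun a => ∏ j, F j (a j)) i b
      = F i b * ∏ j : { j : Fin m // j ≠ i }, ∑ y, F j.1 y := by
  unfold margOf
  have key : ∀ x : ∀ j : { j : Fin m // j ≠ i }, A j,
      (∏ j, F j (((Equiv.piSplitAt i A).symm (b, x)) j))
        = F i b * ∏ j : { j : Fin m // j ≠ i }, F j.1 (x j) := by
    intro x
    rw [← Finset.mul_prod_erase Finset.univ _ (Finset.mem_univ i), symm_apply_same]
    congr 1
    rw [Finset.prod_subtype (Finset.univ.erase i) (p := fun j => j ≠ i)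
      (by intro j; simp) (fun j => F j (((Equiv.piSplitAt i A).symm (b, x)) j))]
    exact Finset.prod_congr rfl fun j _ => by rw [symm_apply_ne i b x j.2]
  simp only [key]
  rw [← Finset.mul_sum]
  congr 1
  rw [Finset.prod_univ_sum]
  rw [← Fintype.piFinset_univ]

lemma sum_prod_eq_prod_sum (F : ∀ j, A j → ℝ) :
    ∑ a : ∀ j, A j, ∏ j, F j (a j) = ∏ j, ∑ y, F j y := by
  rw [Finset.prod_univ_sum, ← Fintype.piFinset_univ]

lemma hM_margDev (q : S → (∀ j, A j) → ℝ) (i : Fin m) (ρ : S → A i → ℝ) (s : S)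
    (b : A i) (x : ∀ j : { j : Fin m // j ≠ i }, A j) :
    margDev q i ρ s ((Equiv.piSplitAt i A).symm (b, x))
      = ρ s b * ∑ c, q s ((Equiv.piSplitAt i A).symm (c, x)) := by
  simp only [margDev, symm_apply_same]
  congr 1
  exact Finset.sum_congr rfl fun c _ => by rw [update_symm]

lemma sum_q_split (q : (∀ j, A j) → ℝ) (i : Fin m) :
    ∑ a, q a = ∑ x : ∀ j : { j : Fin m // j ≠ i }, A j, ∑ c,
      q ((Equiv.piSplitAt i A).symm (c, x)) := by
  rw [sum_split i q, Finset.sum_comm]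

lemma sum_margDev_same (q : S → (∀ j, A j) → ℝ) (i : Fin m) (ρ : S → A i → ℝ) (s : S)
    (g : A i → ℝ) :
    ∑ a, margDev q i ρ s a * g (a i) = (∑ a, q s a) * ∑ d, ρ s d * g d := by
  rw [sum_split i (fun a => margDev q i ρ s a * g (a i))]
  calc (∑ b : A i, ∑ x, margDev q i ρ s ((Equiv.piSplitAt i A).symm (b, x)) *
          g (((Equiv.piSplitAt i A).symm (b, x)) i))
      = ∑ b : A i, ∑ x, (ρ s b * g b) * ∑ c, q s ((Equiv.piSplitAt i A).symm (c, x)) := by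
        refine Finset.sum_congr rfl fun b _ => Finset.sum_congr rfl fun x _ => ?_
        rw [hM_margDev, symm_apply_same]; ring
    _ = ∑ b : A i, (ρ s b * g b) * ∑ x, ∑ c, q s ((Equiv.piSplitAt i A).symm (c, x)) :=
        Finset.sum_congr rfl fun b _ => (Finset.mul_sum _ _ _).symm
    _ = (∑ a, q s a) * ∑ d, ρ s d * g d := by
        rw [← sum_q_split (q s) i, ← Finset.sum_mul, mul_comm]

lemma sum_margDev_ne (q : S → (∀ j, A j) → ℝ) (i : Fin m) (ρ : S → A i → ℝ) (s : S)
    {i₀ : Fin m} (h : i₀ ≠ i) (g : A i₀ → ℝ) :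
    ∑ a, margDev q i ρ s a * g (a i₀) = (∑ d, ρ s d) * ∑ a, q s a * g (a i₀) := by
  have hr : ∑ a, q s a * g (a i₀)
      = ∑ x : ∀ j : { j : Fin m // j ≠ i }, A j, ∑ c,
          q s ((Equiv.piSplitAt i A).symm (c, x)) * g (x ⟨i₀, h⟩) := by
    rw [sum_split i (fun a => q s a * g (a i₀)), Finset.sum_comm]
    exact Finset.sum_congr rfl fun x _ => Finset.sum_congr rfl fun c _ => by
      rw [symm_apply_ne i c x h]
  rw [sum_split i (fun a => margDev q i ρ s a * g (a i₀))]
  calc (∑ b : A i, ∑ x, margDev q i ρ s ((Equiv.piSplitAt i A).symm (b, x)) *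
          g (((Equiv.piSplitAt i A).symm (b, x)) i₀))
      = ∑ b : A i, ∑ x, ρ s b * ∑ c,
          q s ((Equiv.piSplitAt i A).symm (c, x)) * g (x ⟨i₀, h⟩) := by
        refine Finset.sum_congr rfl fun b _ => Finset.sum_congr rfl fun x _ => ?_
        rw [hM_margDev, symm_apply_ne i b x h, mul_assoc, Finset.sum_mul]
    _ = ∑ b : A i, ρ s b * ∑ x, ∑ c,
          q s ((Equiv.piSplitAt i A).symm (c, x)) * g (x ⟨i₀, h⟩) :=
        Finset.sum_congr rfl fun b _ => (Finset.mul_sum _ _ _).symm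
    _ = (∑ d, ρ s d) * ∑ a, q s a * g (a i₀) := by
        rw [← Finset.sum_mul, ← hr]

lemma prodPolicy_marg (πp : ∀ i : Fin m, S → A i → ℝ) (hsum : ∀ i s, ∑ b, πp i s b = 1)
    (s : S) (i : Fin m) (b : A i) :
    margOf (prodPolicy πp s) i b = πp i s b := by
  have hpp : prodPolicy πp s = fun a => ∏ j, πp j s (a j) := rfl
  rw [hpp, margOf_prod (fun j => πp j s) i b]
  simp [hsum]

lemma sum_prodPolicy (πp : ∀ i : Fin m, S → A i → ℝ) (hsum : ∀ i s, ∑ b, πp i s b = 1)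
    (s : S) : ∑ a, prodPolicy πp s a = 1 := by
  simp only [prodPolicy]
  rw [sum_prod_eq_prod_sum (fun j => πp j s)]
  simp [hsum]

lemma hsum_reduce (i₀ : Fin m) (q₁ q₂ : (∀ j, A j) → ℝ)
    (h : ∀ g : A i₀ → ℝ, ∑ a, q₁ a * g (a i₀) = ∑ a, q₂ a * g (a i₀))
    (f : (∀ j, A j) → ℝ) (hf : ∀ a a', a i₀ = a' i₀ → f a = f a') :
    ∑ a, q₁ a * f a = ∑ a, q₂ a * f a := by
  have c : ∀ j, A j := fun j => Classical.arbitrary _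
  have hfa : ∀ a : ∀ j, A j, f a = f (Function.update c i₀ (a i₀)) :=
    fun a => hf _ _ (by simp)
  have key := h (fun b => f (Function.update c i₀ b))
  calc ∑ a, q₁ a * f a = ∑ a, q₁ a * f (Function.update c i₀ (a i₀)) :=
        Finset.sum_congr rfl fun a _ => by rw [hfa a]
    _ = ∑ a, q₂ a * f (Function.update c i₀ (a i₀)) := key
    _ = ∑ a, q₂ a * f a := Finset.sum_congr rfl fun a _ => by rw [← hfa a]

lemma val_eq (γ : ℝ) (ag : S → Fin m) (P : S → (∀ i, A i) → S → ℝ)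
    (hPi : ∀ (s : S) (a a' : ∀ i, A i), a (ag s) = a' (ag s) → ∀ s', P s a s' = P s a' s')
    (r : S → (∀ i, A i) → ℝ)
    (hri : ∀ (s : S) (a a' : ∀ i, A i), a (ag s) = a' (ag s) → r s a = r s a')
    (π₁ π₂ : S → (∀ i, A i) → ℝ)
    (H : ∀ (s : S) (f : (∀ i, A i) → ℝ), (∀ a a', a (ag s) = a' (ag s) → f a = f a') →
      ∑ a, π₁ s a * f a = ∑ a, π₂ s a * f a)
    (s₀ : S) : val γ P π₁ r s₀ = val γ P π₂ r s₀ := by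
  have hstep : ∀ d : S → ℝ, step P π₁ d = step P π₂ d := by
    intro d; funext s'
    simp only [step]
    refine Finset.sum_congr rfl fun s _ => ?_
    calc ∑ a, d s * π₁ s a * P s a s' = ∑ a, π₁ s a * (d s * P s a s') :=
          Finset.sum_congr rfl fun a _ => by ring
      _ = ∑ a, π₂ s a * (d s * P s a s') :=
          H s _ (fun a a' h => by rw [hPi s a a' h s'])
      _ = ∑ a, d s * π₂ s a * P s a s' := Finset.sum_congr rfl fun a _ => by ring
  have hdist : ∀ h, dist P π₁ s₀ h = dist P π₂ s₀ h := by
    intro h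
    induction h with
    | zero => rfl
    | succ n ih =>
        simp only [dist, Function.iterate_succ_apply'] at ih ⊢
        rw [ih, hstep]
  simp only [val]
  congr 1
  refine tsum_congr fun h => ?_
  congr 1
  refine Finset.sum_congr rfl fun s _ => ?_
  rw [hdist h, H s (r s) (fun a a' hh => hri s a a' hh)]

end Aux

/-- In a turn-based stochastic game, every stationary joint policy admits a stationary
product policy with identical value functions; consequently any ε-perfect CCE can be
converted into an ε-perfect NE (a product policy with the same per-state gaps bounded by ε). -/
theorem turn_based_cce_to_ne (γ : ℝ) (hγ0 : 0 ≤ γ) (hγ1 : γ < 1)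
    (ag : S → Fin m)
    (P : S → (∀ i, A i) → S → ℝ) (hP : IsKernel P)
    (r : Fin m → S → (∀ i, A i) → ℝ)
    (hTB : TurnBased ag P r)
    (π : S → (∀ i, A i) → ℝ) (hπ : IsPolicy π) :
    ∃ πp : ∀ i : Fin m, S → A i → ℝ,
      (∀ i, IsPolicy (πp i)) ∧
      (∀ (j : Fin m) (s : S), val γ P (prodPolicy πp) (r j) s = val γ P π (r j) s) ∧
      (∀ ε : ℝ, 0 ≤ ε →
        (∀ i s, cceGap γ P π (r i) i s ≤ ε) →
        ∀ i s, cceGap γ P (prodPolicy πp) (r i) i s ≤ ε) := by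
  classical
  obtain ⟨hπ0, hπ1⟩ := hπ
  set πp : ∀ i : Fin m, S → A i → ℝ := fun i s b => margOf (π s) i b with hπp
  have hπpPol : ∀ i, IsPolicy (πp i) := by
    intro i
    refine ⟨fun s b => margOf_nonneg (fun a => hπ0 s a) i b, fun s => ?_⟩
    simp only [hπp]
    rw [sum_margOf]
    exact hπ1 s
  have hppSum : ∀ i s, ∑ b, πp i s b = 1 := fun i s => (hπpPol i).2 s
  have hprodSum : ∀ s, ∑ a, prodPolicy πp s a = 1 := sum_prodPolicy πp hppSum
  have hMargEq : ∀ (s : S) (g : A (ag s) → ℝ),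
      ∑ a, prodPolicy πp s a * g (a (ag s)) = ∑ a, π s a * g (a (ag s)) := by
    intro s g
    rw [sum_mul_comp, sum_mul_comp]
    refine Finset.sum_congr rfl fun b _ => ?_
    rw [prodPolicy_marg πp hppSum s (ag s) b]
  have Hmain : ∀ (s : S) (f : (∀ i, A i) → ℝ),
      (∀ a a', a (ag s) = a' (ag s) → f a = f a') →
      ∑ a, prodPolicy πp s a * f a = ∑ a, π s a * f a :=
    fun s f hf => hsum_reduce (ag s) _ _ (hMargEq s) f hf
  have hval : ∀ (j : Fin m) (s : S), val γ P (prodPolicy πp) (r j) s = val γ P π (r j) s :=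
    fun j s => val_eq γ ag P (fun s a a' h s' => (hTB s a a' h).1 s') (r j)
      (fun s a a' h => (hTB s a a' h).2 j) _ _ Hmain s
  refine ⟨πp, hπpPol, hval, ?_⟩
  intro ε hε hcce i s
  have hdev : ∀ ρ : {ρ : S → A i → ℝ // IsPolicy ρ},
      val γ P (margDev (prodPolicy πp) i ρ.1) (r i) s
        = val γ P (margDev π i ρ.1) (r i) s := by
    intro ρ
    refine val_eq γ ag P (fun s a a' h s' => (hTB s a a' h).1 s') (r i)
      (fun s a a' h => (hTB s a a' h).2 i) _ _ ?_ s
    intro s' f hf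
    refine hsum_reduce (ag s') _ _ ?_ f hf
    intro g
    rcases eq_or_ne (ag s') i with hI | hI
    · cases hI
      rw [sum_margDev_same, sum_margDev_same, hprodSum s', hπ1 s']
    · rw [sum_margDev_ne (prodPolicy πp) i ρ.1 s' hI g,
        sum_margDev_ne π i ρ.1 s' hI g, ρ.2.2 s', one_mul, one_mul]
      exact hMargEq s' g
  have hgap : cceGap γ P (prodPolicy πp) (r i) i s = cceGap γ P π (r i) i s := by
    simp only [cceGap]
    rw [hval i s]
    congr 1
    exact iSup_congr fun ρ => hdev ρ
  rw [hgap]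
  exact hcce i s


end Stmt12
end

section
/- (Closeness of the intermediate game) In the setting of the intermediate game G_V: for any joint policy π, any player i, |V_{i,1}^{G,π}(μ) - V_{i,1}^{G_V,π}(μ)| ≤ 2H · Σ_{h=1}^H Pr_{trajectory ~ (G,π)}[(h, s_h) ∉ V]. In particular, if Pr[(h,s_h) ∉ V] ≤ δ_0 for every h ∈ [H], then |V_{i,1}^{G,π}(μ) - V_{i,1}^{G_V,π}(μ)| ≤ 2H²δ_0. -/
open scoped BigOperators

namespace Stmt15

def IsKernel {σ α : Type*} [Fintype σ] (P : σ → α → σ → ℝ) : Prop :=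
  (∀ s a s', 0 ≤ P s a s') ∧ ∀ s a, ∑ s', P s a s' = 1

def IsPolicy {σ α : Type*} [Fintype α] (π : σ → α → ℝ) : Prop :=
  (∀ s a, 0 ≤ π s a) ∧ ∀ s, ∑ a, π s a = 1

/-- Distribution of the state at step `h` (0-indexed) of a finite-horizon stochastic game
with step-dependent transitions `P`, nonstationary Markov policy `π` and initial
distribution `μ`. -/
noncomputable def fhDist {σ α : Type*} [Fintype σ] [Fintype α]
    (P : ℕ → σ → α → σ → ℝ) (π : ℕ → σ → α → ℝ) (μ : σ → ℝ) : ℕ → σ → ℝ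
  | 0 => μ
  | h + 1 => fun s' => ∑ s, ∑ a, fhDist P π μ h s * π h s a * P h s a s'

/-- Value `V_1^π(μ) = E[Σ_{h=1}^H r_h(s_h, a_h)]` of the finite-horizon game. -/
noncomputable def fhVal {σ α : Type*} [Fintype σ] [Fintype α] (H : ℕ)
    (P : ℕ → σ → α → σ → ℝ) (π : ℕ → σ → α → ℝ) (r : ℕ → σ → α → ℝ) (μ : σ → ℝ) : ℝ :=
  ∑ h ∈ Finset.range H, ∑ s, fhDist P π μ h s * ∑ a, π h s a * r h s a

variable {S A : Type*} [Fintype S] [Fintype A] [DecidableEq S]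

/-- Transitions of the intermediate game `G_V`: identical to `G` on pairs `(h,s) ∈ 𝒱`, and
transitioning to the absorbing state `none` from pairs outside `𝒱`. -/
noncomputable def PV (𝒱 : Finset (ℕ × S)) (P : ℕ → S → A → S → ℝ) :
    ℕ → Option S → A → Option S → ℝ :=
  fun h os a os' =>
    match os, os' with
    | some s, some s' => if (h, s) ∈ 𝒱 then P h s a s' else 0
    | some s, none => if (h, s) ∈ 𝒱 then 0 else 1
    | none, some _ => 0
    | none, none => 1

/-- Rewards of `G_V`: identical to `G` on pairs in `𝒱`, and the maximal reward `1`
at pairs outside `𝒱` and at the absorbing state. -/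
noncomputable def rV (𝒱 : Finset (ℕ × S)) (r : ℕ → S → A → ℝ) : ℕ → Option S → A → ℝ :=
  fun h os a =>
    match os with
    | some s => if (h, s) ∈ 𝒱 then r h s a else 1
    | none => 1

/-- Initial distribution of `G_V`. -/
noncomputable def muV (μ : S → ℝ) : Option S → ℝ :=
  fun os => match os with | some s => μ s | none => 0

lemma fhDist_nonneg {σ α : Type*} [Fintype σ] [Fintype α]
    (P : ℕ → σ → α → σ → ℝ) (hP : ∀ h s a s', 0 ≤ P h s a s')
    (π : ℕ → σ → α → ℝ) (hπ : ∀ h s a, 0 ≤ π h s a)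
    (μ : σ → ℝ) (hμ0 : ∀ s, 0 ≤ μ s) : ∀ h s, 0 ≤ fhDist P π μ h s := by
  intro h
  induction h with
  | zero => exact hμ0
  | succ h ih =>
    intro s'
    refine Finset.sum_nonneg fun s _ => Finset.sum_nonneg fun a _ => ?_
    exact mul_nonneg (mul_nonneg (ih s) (hπ _ _ _)) (hP _ _ _ _)

lemma fhDist_sum_one {σ α : Type*} [Fintype σ] [Fintype α]
    (P : ℕ → σ → α → σ → ℝ) (hP : ∀ h s a, ∑ s', P h s a s' = 1)
    (π : ℕ → σ → α → ℝ) (hπ : ∀ h s, ∑ a, π h s a = 1)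
    (μ : σ → ℝ) (hμ1 : ∑ s, μ s = 1) : ∀ h, ∑ s, fhDist P π μ h s = 1 := by
  intro h
  induction h with
  | zero => exact hμ1
  | succ h ih =>
    show ∑ s', ∑ s, ∑ a, fhDist P π μ h s * π h s a * P h s a s' = 1
    rw [Finset.sum_comm]
    have key : ∀ s, (∑ s' : σ, ∑ a, fhDist P π μ h s * π h s a * P h s a s')
        = fhDist P π μ h s := by
      intro s
      rw [Finset.sum_comm]
      have h1 : ∀ a, (∑ s', fhDist P π μ h s * π h s a * P h s a s')
          = fhDist P π μ h s * π h s a := by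
        intro a; rw [← Finset.mul_sum, hP, mul_one]
      simp_rw [h1]
      rw [← Finset.mul_sum, hπ, mul_one]
    simp_rw [key]
    exact ih

/-- Closeness of the intermediate game: the values of `G` and `G_V` differ by at most
`2H · Σ_{h<H} Pr[(h, s_h) ∉ 𝒱]`; in particular if each escape probability is at most `δ₀`,
they differ by at most `2H²δ₀`. -/
theorem intermediate_game_closeness {I : Type*} (H : ℕ)
    (P : ℕ → S → A → S → ℝ) (hP : ∀ h, IsKernel (P h))
    (r : I → ℕ → S → A → ℝ) (hr : ∀ i h s a, |r i h s a| ≤ 1)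
    (μ : S → ℝ) (hμ0 : ∀ s, 0 ≤ μ s) (hμ1 : ∑ s, μ s = 1)
    (𝒱 : Finset (ℕ × S))
    (π : ℕ → S → A → ℝ) (hπ : ∀ h, IsPolicy (π h))
    (πv : ℕ → Option S → A → ℝ) (hπv : ∀ h, IsPolicy (πv h))
    (hext : ∀ h s a, πv h (some s) a = π h s a) :
    (∀ i : I,
      |fhVal H P π (r i) μ - fhVal H (PV 𝒱 P) πv (rV 𝒱 (r i)) (muV μ)| ≤
        2 * H * ∑ h ∈ Finset.range H,
          ∑ s ∈ Finset.univ.filter (fun s : S => (h, s) ∉ 𝒱), fhDist P π μ h s) ∧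
    ∀ δ₀ : ℝ,
      (∀ h ∈ Finset.range H,
        ∑ s ∈ Finset.univ.filter (fun s : S => (h, s) ∉ 𝒱), fhDist P π μ h s ≤ δ₀) →
      ∀ i : I,
        |fhVal H P π (r i) μ - fhVal H (PV 𝒱 P) πv (rV 𝒱 (r i)) (muV μ)| ≤
          2 * H ^ 2 * δ₀ := by
  have hPk : ∀ h s a s', 0 ≤ P h s a s' := fun h => (hP h).1
  have hPs : ∀ h s a, ∑ s', P h s a s' = 1 := fun h => (hP h).2
  have hπ0 : ∀ h s a, 0 ≤ π h s a := fun h => (hπ h).1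
  have hπ1 : ∀ h s, ∑ a, π h s a = 1 := fun h => (hπ h).2
  set f := fhDist P π μ with hfdef
  set g := fhDist (PV 𝒱 P) πv (muV μ) with hgdef
  set E : ℕ → ℝ := fun h => ∑ s ∈ Finset.univ.filter (fun s : S => (h, s) ∉ 𝒱), f h s
    with hEdef
  have hf0 : ∀ h s, 0 ≤ f h s := fhDist_nonneg P hPk π hπ0 μ hμ0
  have hf1 : ∀ h, ∑ s, f h s = 1 := fhDist_sum_one P hPs π hπ1 μ hμ1
  -- PV is a kernel
  have hPV0 : ∀ h os a (os' : Option S), 0 ≤ PV 𝒱 P h os a os' := by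
    intro h os a os'
    rcases os with _ | s
    · rcases os' with _ | s'
      · exact zero_le_one
      · exact le_refl 0
    · rcases os' with _ | s'
      · show (0:ℝ) ≤ if (h, s) ∈ 𝒱 then 0 else 1
        split_ifs <;> norm_num
      · show (0:ℝ) ≤ if (h, s) ∈ 𝒱 then P h s a s' else 0
        split_ifs with hm
        · exact hPk h s a s'
        · exact le_refl 0
  have hPV1 : ∀ h os a, ∑ os' : Option S, PV 𝒱 P h os a os' = 1 := by
    intro h os a
    rcases os with _ | s
    · simp [PV, Fintype.sum_option]
    · by_cases hm : (h, s) ∈ 𝒱 <;> simp [PV, Fintype.sum_option, hm, hPs h s a]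
  have hmuV0 : ∀ os : Option S, 0 ≤ muV μ os := by
    intro os; rcases os with _ | s
    · exact le_refl 0
    · exact hμ0 s
  have hmuV1 : ∑ os : Option S, muV μ os = 1 := by
    simp [muV, Fintype.sum_option, hμ1]
  have hπv0 : ∀ h os a, 0 ≤ πv h os a := fun h => (hπv h).1
  have hπv1 : ∀ h os, ∑ a, πv h os a = 1 := fun h => (hπv h).2
  have hg0 : ∀ h os, 0 ≤ g h os := fhDist_nonneg _ hPV0 _ hπv0 _ hmuV0
  have hg1 : ∀ h, ∑ os : Option S, g h os = 1 := fhDist_sum_one _ hPV1 _ hπv1 _ hmuV1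
  have hfrec : ∀ h s', f (h+1) s' = ∑ s, ∑ a, f h s * π h s a * P h s a s' :=
    fun h s' => rfl
  have hgrec : ∀ h s', g (h+1) (some s')
      = ∑ s, ∑ a, g h (some s) * π h s a * (if (h, s) ∈ 𝒱 then P h s a s' else 0) := by
    intro h s'
    show (∑ os : Option S, ∑ a, g h os * πv h os a * PV 𝒱 P h os a (some s')) = _
    rw [Fintype.sum_option]
    have h0 : (∑ a, g h none * πv h none a * PV 𝒱 P h none a (some s')) = 0 := by
      simp [PV]
    rw [h0, zero_add]
    refine Finset.sum_congr rfl fun s _ => Finset.sum_congr rfl fun a _ => ?_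
    rw [hext]
    rfl
  have hE0 : ∀ h, 0 ≤ E h :=
    fun h => Finset.sum_nonneg fun s _ => hf0 h s
  -- domination
  have hgle : ∀ h s, g h (some s) ≤ f h s := by
    intro h
    induction h with
    | zero => intro s; exact le_of_eq rfl
    | succ h ih =>
      intro s'
      rw [hgrec h s', hfrec h s']
      refine Finset.sum_le_sum fun s _ => Finset.sum_le_sum fun a _ => ?_
      split_ifs with hm
      · exact mul_le_mul_of_nonneg_right
          (mul_le_mul_of_nonneg_right (ih s) (hπ0 h s a)) (hPk h s a s')
      · rw [mul_zero]
        exact mul_nonneg (mul_nonneg (hf0 h s) (hπ0 h s a)) (hPk h s a s')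
  -- total surviving mass recursion
  have hsumg : ∀ h, (∑ s', g (h+1) (some s'))
      = ∑ s, (if (h, s) ∈ 𝒱 then g h (some s) else 0) := by
    intro h
    simp_rw [hgrec]
    rw [Finset.sum_comm]
    refine Finset.sum_congr rfl fun s _ => ?_
    rw [Finset.sum_comm]
    by_cases hm : (h, s) ∈ 𝒱
    · simp only [if_pos hm]
      have h1 : ∀ a, (∑ s', g h (some s) * π h s a * P h s a s')
          = g h (some s) * π h s a := by
        intro a; rw [← Finset.mul_sum, hPs, mul_one]
      simp_rw [h1]
      rw [← Finset.mul_sum, hπ1, mul_one]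
    · simp [if_neg hm]
  -- escaped mass bound
  have hd : ∀ h, (∑ s, (f h s - g h (some s))) ≤ ∑ h' ∈ Finset.range h, E h' := by
    intro h
    induction h with
    | zero =>
      have : ∀ s : S, f 0 s - g 0 (some s) = 0 := fun s => sub_self _
      simp [this]
    | succ h ih =>
      have e1 : (∑ s, (f (h+1) s - g (h+1) (some s)))
          = ∑ s, (f h s - if (h, s) ∈ 𝒱 then g h (some s) else 0) := by
        rw [Finset.sum_sub_distrib, Finset.sum_sub_distrib, hf1, hf1, hsumg]
      have e3 : (∑ s, (if (h, s) ∈ 𝒱 then (0:ℝ) else f h s)) = E h := by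
        rw [hEdef]
        simp only
        rw [Finset.sum_filter]
        refine Finset.sum_congr rfl fun s _ => ?_
        by_cases hm : (h, s) ∈ 𝒱 <;> simp [hm]
      calc (∑ s, (f (h+1) s - g (h+1) (some s)))
          = ∑ s, (f h s - if (h, s) ∈ 𝒱 then g h (some s) else 0) := e1
        _ ≤ ∑ s, ((f h s - g h (some s)) + if (h, s) ∈ 𝒱 then 0 else f h s) := by
            refine Finset.sum_le_sum fun s _ => ?_
            by_cases hm : (h, s) ∈ 𝒱
            · simp [hm]
            · simp only [if_neg hm]
              linarith [hg0 h (some s), hgle h s]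
        _ = (∑ s, (f h s - g h (some s))) + E h := by
            rw [Finset.sum_add_distrib, e3]
        _ ≤ (∑ h' ∈ Finset.range h, E h') + E h := add_le_add ih le_rfl
        _ = ∑ h' ∈ Finset.range (h+1), E h' := (Finset.sum_range_succ _ _).symm
  -- reward bounds
  have hρ : ∀ (i : I) h s, |∑ a, π h s a * r i h s a| ≤ 1 := by
    intro i h s
    calc |∑ a, π h s a * r i h s a| ≤ ∑ a, |π h s a * r i h s a| :=
          Finset.abs_sum_le_sum_abs _ _
      _ ≤ ∑ a, π h s a := by
          refine Finset.sum_le_sum fun a _ => ?_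
          rw [abs_mul, abs_of_nonneg (hπ0 h s a)]
          calc π h s a * |r i h s a| ≤ π h s a * 1 :=
                mul_le_mul_of_nonneg_left (hr i h s a) (hπ0 h s a)
            _ = π h s a := mul_one _
      _ = 1 := hπ1 h s
  -- step value of G_V
  have hstepV : ∀ (i : I) h,
      (∑ os : Option S, g h os * ∑ a, πv h os a * rV 𝒱 (r i) h os a)
      = g h none + ∑ s, g h (some s) *
          (if (h, s) ∈ 𝒱 then (∑ a, π h s a * r i h s a) else 1) := by
    intro i h
    rw [Fintype.sum_option]
    congr 1
    · have : (∑ a, πv h none a * rV 𝒱 (r i) h none a) = 1 := by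
        simp [rV, hπv1 h none]
      rw [this, mul_one]
    · refine Finset.sum_congr rfl fun s _ => ?_
      congr 1
      by_cases hm : (h, s) ∈ 𝒱
      · simp only [if_pos hm]
        refine Finset.sum_congr rfl fun a _ => ?_
        rw [hext]
        congr 1
        show (if (h, s) ∈ 𝒱 then r i h s a else 1) = r i h s a
        rw [if_pos hm]
      · simp only [if_neg hm]
        have h2 : ∀ a, πv h (some s) a * rV 𝒱 (r i) h (some s) a = π h s a := by
          intro a
          rw [hext]
          show π h s a * (if (h, s) ∈ 𝒱 then r i h s a else 1) = π h s a
          rw [if_neg hm, mul_one]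
        simp_rw [h2]
        exact hπ1 h s
  -- per-step bound
  have hstep : ∀ (i : I) h, h < H →
      |(∑ s, f h s * ∑ a, π h s a * r i h s a)
        - (∑ os : Option S, g h os * ∑ a, πv h os a * rV 𝒱 (r i) h os a)|
      ≤ 2 * ∑ h' ∈ Finset.range H, E h' := by
    intro i h hhH
    rw [hstepV]
    have hsg : g h none = ∑ s, (f h s - g h (some s)) := by
      have h1 := hg1 h
      rw [Fintype.sum_option] at h1
      rw [Finset.sum_sub_distrib, hf1 h]
      linarith
    rw [hsg]
    have e2 : (∑ s, f h s * ∑ a, π h s a * r i h s a)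
        - ((∑ s, (f h s - g h (some s)))
           + ∑ s, g h (some s) * (if (h, s) ∈ 𝒱 then (∑ a, π h s a * r i h s a) else 1))
        = ∑ s, (f h s * (∑ a, π h s a * r i h s a) - (f h s - g h (some s))
            - g h (some s) * (if (h, s) ∈ 𝒱 then (∑ a, π h s a * r i h s a) else 1)) := by
      simp only [Finset.sum_sub_distrib]
      ring
    rw [e2]
    have e3 : (∑ s, (if (h, s) ∈ 𝒱 then (0:ℝ) else 2 * f h s)) = 2 * E h := by
      rw [hEdef]
      simp only
      rw [Finset.mul_sum, Finset.sum_filter]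
      refine Finset.sum_congr rfl fun s _ => ?_
      by_cases hm : (h, s) ∈ 𝒱 <;> simp [hm]
    calc |∑ s, (f h s * (∑ a, π h s a * r i h s a) - (f h s - g h (some s))
            - g h (some s) * (if (h, s) ∈ 𝒱 then (∑ a, π h s a * r i h s a) else 1))|
        ≤ ∑ s, |f h s * (∑ a, π h s a * r i h s a) - (f h s - g h (some s))
            - g h (some s) * (if (h, s) ∈ 𝒱 then (∑ a, π h s a * r i h s a) else 1)| :=
          Finset.abs_sum_le_sum_abs _ _
      _ ≤ ∑ s, (2 * (f h s - g h (some s)) + if (h, s) ∈ 𝒱 then 0 else 2 * f h s) := by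
          refine Finset.sum_le_sum fun s _ => ?_
          have hb : |(∑ a, π h s a * r i h s a) - 1| ≤ 2 := by
            have h1 := abs_le.1 (hρ i h s)
            rw [abs_le]
            constructor <;> linarith [h1.1, h1.2]
          have hfg : 0 ≤ f h s - g h (some s) := sub_nonneg.2 (hgle h s)
          by_cases hm : (h, s) ∈ 𝒱
          · simp only [if_pos hm, add_zero]
            have habs : f h s * (∑ a, π h s a * r i h s a) - (f h s - g h (some s))
                - g h (some s) * (∑ a, π h s a * r i h s a)
                = (f h s - g h (some s)) * ((∑ a, π h s a * r i h s a) - 1) := by ring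
            rw [habs, abs_mul, abs_of_nonneg hfg]
            calc (f h s - g h (some s)) * |(∑ a, π h s a * r i h s a) - 1|
                ≤ (f h s - g h (some s)) * 2 := mul_le_mul_of_nonneg_left hb hfg
              _ = 2 * (f h s - g h (some s)) := mul_comm _ _
          · simp only [if_neg hm]
            have habs : f h s * (∑ a, π h s a * r i h s a) - (f h s - g h (some s))
                - g h (some s) * 1
                = f h s * ((∑ a, π h s a * r i h s a) - 1) := by ring
            rw [habs, abs_mul, abs_of_nonneg (hf0 h s)]
            have : f h s * |(∑ a, π h s a * r i h s a) - 1| ≤ f h s * 2 :=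
              mul_le_mul_of_nonneg_left hb (hf0 h s)
            linarith [hg0 h (some s)]
      _ = 2 * (∑ s, (f h s - g h (some s))) + 2 * E h := by
          rw [Finset.sum_add_distrib, e3, Finset.mul_sum, Finset.mul_sum]
      _ ≤ 2 * (∑ h' ∈ Finset.range h, E h') + 2 * E h := by
          linarith [hd h]
      _ = 2 * ∑ h' ∈ Finset.range (h+1), E h' := by
          rw [Finset.sum_range_succ]; ring
      _ ≤ 2 * ∑ h' ∈ Finset.range H, E h' := by
          have hmono : (∑ h' ∈ Finset.range (h+1), E h') ≤ ∑ h' ∈ Finset.range H, E h' :=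
            Finset.sum_le_sum_of_subset_of_nonneg (Finset.range_subset_range.2 hhH)
              (fun h' _ _ => hE0 h')
          linarith
  -- main bound
  have main : ∀ i : I,
      |fhVal H P π (r i) μ - fhVal H (PV 𝒱 P) πv (rV 𝒱 (r i)) (muV μ)|
      ≤ 2 * H * ∑ h ∈ Finset.range H, E h := by
    intro i
    show |(∑ h ∈ Finset.range H, ∑ s, f h s * ∑ a, π h s a * r i h s a)
        - ∑ h ∈ Finset.range H, ∑ os : Option S, g h os * ∑ a, πv h os a * rV 𝒱 (r i) h os a|
      ≤ 2 * H * ∑ h ∈ Finset.range H, E h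
    rw [← Finset.sum_sub_distrib]
    calc |∑ h ∈ Finset.range H, ((∑ s, f h s * ∑ a, π h s a * r i h s a)
            - ∑ os : Option S, g h os * ∑ a, πv h os a * rV 𝒱 (r i) h os a)|
        ≤ ∑ h ∈ Finset.range H, |(∑ s, f h s * ∑ a, π h s a * r i h s a)
            - ∑ os : Option S, g h os * ∑ a, πv h os a * rV 𝒱 (r i) h os a| :=
          Finset.abs_sum_le_sum_abs _ _
      _ ≤ ∑ h ∈ Finset.range H, (2 * ∑ h' ∈ Finset.range H, E h') :=
          Finset.sum_le_sum fun h hh => hstep i h (Finset.mem_range.1 hh)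
      _ = H * (2 * ∑ h' ∈ Finset.range H, E h') := by
          rw [Finset.sum_const, Finset.card_range, nsmul_eq_mul]
      _ = 2 * H * ∑ h' ∈ Finset.range H, E h' := by ring
  refine ⟨main, fun δ₀ hδ i => ?_⟩
  have h1 : (∑ h ∈ Finset.range H, E h) ≤ H * δ₀ := by
    calc (∑ h ∈ Finset.range H, E h) ≤ ∑ _h ∈ Finset.range H, δ₀ :=
          Finset.sum_le_sum hδ
      _ = H * δ₀ := by rw [Finset.sum_const, Finset.card_range, nsmul_eq_mul]
  have hH0 : (0:ℝ) ≤ (H : ℝ) := Nat.cast_nonneg H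
  calc |fhVal H P π (r i) μ - fhVal H (PV 𝒱 P) πv (rV 𝒱 (r i)) (muV μ)|
      ≤ 2 * H * ∑ h ∈ Finset.range H, E h := main i
    _ ≤ 2 * H ^ 2 * δ₀ := by nlinarith [main i, abs_nonneg (fhVal H P π (r i) μ - fhVal H (PV 𝒱 P) πv (rV 𝒱 (r i)) (muV μ))]
end Stmt15
end
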